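/- arXiv:0805.2036 — 6 statements merged into one kernel-verified Lean document; each statement's English description precedes it below -/
import Mathlib

section
/- Let K ⊆ H be a nonempty compact set which is norm separable. Then for every ε > 0 there exists an open set U ⊆ H such that K ∩ U is nonempty and the norm diameter of K ∩ U is at most ε. -/
noncomputable section

/-- `H = [-1,1]^ℕ`, the product of countably many copies of `[-1,1]`, with the
product topology (and its Borel σ-algebra). -/
abbrev H : Type := ℕ → Set.Icc (-1 : ℝ) 1

/-- The supremum distance `‖f − g‖_∞ = sup_n |f(n) − g(n)|` on `H`. -/
noncomputable def normDist (f g : H) : ℝ := ⨆ n, |(f n : ℝ) - (g n : ℝ)|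

/-- The norm diameter of `S ⊆ H`: `sup {‖f − g‖_∞ : f, g ∈ S}`. -/
noncomputable def normDiam (S : Set H) : ℝ :=
  sSup {d : ℝ | ∃ f ∈ S, ∃ g ∈ S, d = normDist f g}

/-- `S ⊆ H` is norm separable: separable w.r.t. the metric `(f,g) ↦ ‖f − g‖_∞`. -/
def NormSeparable (S : Set H) : Prop :=
  ∃ D : Set H, D.Countable ∧ D ⊆ S ∧ ∀ f ∈ S, ∀ δ : ℝ, 0 < δ → ∃ g ∈ D, normDist f g < δ

/-- **Lemma 3.** If `K ⊆ H` is nonempty, compact and norm separable, then for every `ε > 0`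
there is an open `U ⊆ H` with `K ∩ U` nonempty of norm diameter at most `ε`. -/
theorem exists_open_small_normDiam (K : Set H) (hK : K.Nonempty) (hc : IsCompact K)
    (hsep : NormSeparable K) (ε : ℝ) (hε : 0 < ε) :
    ∃ U : Set H, IsOpen U ∧ (K ∩ U).Nonempty ∧ normDiam (K ∩ U) ≤ ε := by
  obtain ⟨D, hDc, hDK, hDd⟩ := hsep
  obtain ⟨f0, hf0⟩ := hK
  obtain ⟨g0, hg0D, -⟩ := hDd f0 hf0 1 one_pos
  obtain ⟨g, hgD⟩ := Set.Countable.exists_eq_range hDc ⟨g0, hg0D⟩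
  haveI : CompactSpace K := isCompact_iff_compactSpace.mp hc
  haveI : Nonempty K := ⟨⟨f0, hf0⟩⟩
  have habs : ∀ x : H, ∀ n, |(x n : ℝ)| ≤ 1 := fun x n =>
    abs_le.2 ⟨(x n).2.1, (x n).2.2⟩
  have hbdd : ∀ x y : H, BddAbove (Set.range fun n => |(x n : ℝ) - (y n : ℝ)|) := by
    intro x y
    refine ⟨2, ?_⟩
    rintro d ⟨n, rfl⟩
    calc |(x n : ℝ) - (y n : ℝ)| ≤ |(x n : ℝ)| + |(y n : ℝ)| := abs_sub _ _
      _ ≤ 1 + 1 := add_le_add (habs x n) (habs y n)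
      _ = 2 := by norm_num
  set C : ℕ → Set H := fun i => ⋂ n, {x : H | |(x n : ℝ) - (g i n : ℝ)| ≤ ε / 4} with hC
  have hCclosed : ∀ i, IsClosed (C i) := by
    intro i
    refine isClosed_iInter fun n => ?_
    have hcont : Continuous fun x : H => |(x n : ℝ) - (g i n : ℝ)| :=
      ((continuous_subtype_val.comp (continuous_apply n)).sub continuous_const).abs
    exact isClosed_le hcont continuous_const
  have hcover : ∀ x ∈ K, ∃ i, x ∈ C i := by
    intro x hx
    obtain ⟨h, hhD, hdist⟩ := hDd x hx (ε / 4) (by linarith)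
    rw [hgD] at hhD
    obtain ⟨i, rfl⟩ := hhD
    refine ⟨i, Set.mem_iInter.2 fun n => ?_⟩
    have : |(x n : ℝ) - (g i n : ℝ)| ≤ normDist x (g i) :=
      le_ciSup (hbdd x (g i)) n
    exact le_of_lt (lt_of_le_of_lt this hdist)
  set F : ℕ → Set K := fun i => Subtype.val ⁻¹' C i with hF
  have hFclosed : ∀ i, IsClosed (F i) := fun i =>
    (hCclosed i).preimage continuous_subtype_val
  have hFcover : ⋃ i, F i = Set.univ := by
    rw [Set.eq_univ_iff_forall]
    intro x
    obtain ⟨i, hi⟩ := hcover x.1 x.2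
    exact Set.mem_iUnion.2 ⟨i, hi⟩
  obtain ⟨i, hi⟩ := nonempty_interior_of_iUnion_of_closed hFclosed hFcover
  obtain ⟨U, hUopen, hUeq⟩ := isOpen_induced_iff.mp (isOpen_interior (s := F i))
  obtain ⟨x, hx⟩ := hi
  refine ⟨U, hUopen, ⟨x.1, x.2, ?_⟩, ?_⟩
  · have : x ∈ Subtype.val ⁻¹' U := by rw [hUeq]; exact hx
    exact this
  · have hsub : K ∩ U ⊆ C i := by
      rintro y ⟨hyK, hyU⟩
      have : (⟨y, hyK⟩ : K) ∈ Subtype.val ⁻¹' U := hyU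
      rw [hUeq] at this
      exact interior_subset (s := F i) this
    refine Real.sSup_le ?_ hε.le
    rintro d ⟨f, hf, h, hh, rfl⟩
    have hfC := hsub hf
    have hhC := hsub hh
    refine ciSup_le fun n => ?_
    have h1 : |(f n : ℝ) - (g i n : ℝ)| ≤ ε / 4 := Set.mem_iInter.1 hfC n
    have h2 : |(h n : ℝ) - (g i n : ℝ)| ≤ ε / 4 := Set.mem_iInter.1 hhC n
    calc |(f n : ℝ) - (h n : ℝ)|
        ≤ |(f n : ℝ) - (g i n : ℝ)| + |(g i n : ℝ) - (h n : ℝ)| := abs_sub_le _ _ _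
      _ ≤ ε / 4 + ε / 4 := add_le_add h1 (by rwa [abs_sub_comm])
      _ ≤ ε := by linarith
end
end

section
/- Let K ⊆ H be a nonempty compact set and ε > 0, and suppose that every open set U ⊆ H with K ∩ U nonempty satisfies that the norm diameter of K ∩ U is greater than ε. Then there exists a nonempty perfect subset P of K (i.e., P is compact and has no isolated points in the product topology) such that ‖f−g‖_∞ > ε for all f, g ∈ P with f ≠ g; in particular K is not norm separable. -/
noncomputable section

noncomputable def mH : MetricSpace H := TopologicalSpace.metrizableSpaceMetric H
attribute [local instance] mH

lemma normDist_bdd (f g : H) : BddAbove (Set.range fun n => |(f n : ℝ) - (g n : ℝ)|) := by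
  refine ⟨2, ?_⟩
  rintro _ ⟨n, rfl⟩
  have h1 : |(f n : ℝ)| ≤ 1 := abs_le.2 ⟨(f n).2.1, (f n).2.2⟩
  have h2 : |(g n : ℝ)| ≤ 1 := abs_le.2 ⟨(g n).2.1, (g n).2.2⟩
  calc |(f n : ℝ) - (g n : ℝ)| ≤ |(f n : ℝ)| + |(g n : ℝ)| := abs_sub _ _
    _ ≤ 2 := by linarith

lemma le_normDist (f g : H) (n : ℕ) : |(f n : ℝ) - (g n : ℝ)| ≤ normDist f g :=
  le_ciSup (normDist_bdd f g) n

lemma normDist_le {f g : H} {c : ℝ} (hc : ∀ n, |(f n : ℝ) - (g n : ℝ)| ≤ c) :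
    normDist f g ≤ c := ciSup_le hc

lemma normDist_comm (f g : H) : normDist f g = normDist g f := by
  unfold normDist
  congr 1; funext n; exact abs_sub_comm _ _

lemma normDist_self (f : H) : normDist f f = 0 := by
  simp [normDist]

lemma normDist_triangle (f g k : H) : normDist f k ≤ normDist f g + normDist g k := by
  refine normDist_le fun n => ?_
  calc |(f n : ℝ) - (k n : ℝ)| ≤ |(f n : ℝ) - (g n : ℝ)| + |(g n : ℝ) - (k n : ℝ)| :=
        abs_sub_le _ _ _
    _ ≤ _ := add_le_add (le_normDist f g n) (le_normDist g k n)

lemma uncountable_cantor : ¬ Countable (ℕ → Bool) := by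
  intro hc
  have : Countable (Set ℕ) :=
    Countable.of_equiv (ℕ → Bool) ((Equiv.refl ℕ).arrowCongr Equiv.propEquivBool).symm
  obtain ⟨f, hf⟩ := Countable.exists_injective_nat (Set ℕ)
  exact Function.cantor_injective f hf

section Scheme

variable (K : Set H) (ε : ℝ)

/-- The property of a good pair of children of `V`. -/
def GoodPair (V : Set H) (r : ℝ) (p : Set H × Set H) : Prop :=
  IsOpen p.1 ∧ IsOpen p.2 ∧ (K ∩ p.1).Nonempty ∧ (K ∩ p.2).Nonempty ∧
  closure p.1 ⊆ V ∧ closure p.2 ⊆ V ∧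
  Metric.diam (closure p.1) ≤ r ∧ Metric.diam (closure p.2) ≤ r ∧
  ∀ x ∈ closure p.1, ∀ y ∈ closure p.2, ε < normDist x y

lemma step_exists (hε : 0 < ε)
    (h : ∀ U : Set H, IsOpen U → (K ∩ U).Nonempty → ε < normDiam (K ∩ U)) (V : Set H) (hVo : IsOpen V) (hne : (K ∩ V).Nonempty)
    (r : ℝ) (hr : 0 < r) : ∃ p : Set H × Set H, GoodPair K ε V r p := by
  have hd := h V hVo hne
  -- extract two ε-separated points
  have hfg : ∃ f ∈ K ∩ V, ∃ g ∈ K ∩ V, ε < normDist f g := by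
    by_contra hcon
    push_neg at hcon
    have : normDiam (K ∩ V) ≤ ε := by
      apply Real.sSup_le _ hε.le
      rintro d ⟨f, hf, g, hg, rfl⟩
      exact hcon f hf g hg
    linarith
  obtain ⟨f, hf, g, hg, hfg⟩ := hfg
  have hn : ∃ n, ε < |(f n : ℝ) - (g n : ℝ)| := by
    by_contra hcon
    push_neg at hcon
    have := normDist_le hcon
    linarith
  obtain ⟨n, hn⟩ := hn
  set δ : ℝ := (|(f n : ℝ) - (g n : ℝ)| - ε) / 2 with hδdef
  have hδ : 0 < δ := by simp only [hδdef]; linarith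
  have hcont : Continuous fun x : H => |(x n : ℝ) - (f n : ℝ)| :=
    ((continuous_subtype_val.comp (continuous_apply n)).sub continuous_const).abs
  have hcont' : Continuous fun x : H => |(x n : ℝ) - (g n : ℝ)| :=
    ((continuous_subtype_val.comp (continuous_apply n)).sub continuous_const).abs
  set W0 : Set H := {x | |(x n : ℝ) - (f n : ℝ)| < δ} ∩ V with hW0def
  set W1 : Set H := {x | |(x n : ℝ) - (g n : ℝ)| < δ} ∩ V with hW1def
  have hW0o : IsOpen W0 := (isOpen_lt hcont continuous_const).inter hVo
  have hW1o : IsOpen W1 := (isOpen_lt hcont' continuous_const).inter hVo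
  have hfW0 : f ∈ W0 := ⟨by simp [hδ], hf.2⟩
  have hgW1 : g ∈ W1 := ⟨by simp [hδ], hg.2⟩
  obtain ⟨r0, hr0, hball0⟩ := Metric.nhds_basis_closedBall.mem_iff.1 (hW0o.mem_nhds hfW0)
  obtain ⟨r1, hr1, hball1⟩ := Metric.nhds_basis_closedBall.mem_iff.1 (hW1o.mem_nhds hgW1)
  set s0 : ℝ := min r0 (r / 2) with hs0def
  set s1 : ℝ := min r1 (r / 2) with hs1def
  have hs0 : 0 < s0 := lt_min hr0 (by linarith)
  have hs1 : 0 < s1 := lt_min hr1 (by linarith)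
  refine ⟨(Metric.ball f s0, Metric.ball g s1), Metric.isOpen_ball, Metric.isOpen_ball,
    ⟨f, hf.1, Metric.mem_ball_self hs0⟩, ⟨g, hg.1, Metric.mem_ball_self hs1⟩, ?_, ?_, ?_, ?_, ?_⟩
  · exact (Metric.closure_ball_subset_closedBall.trans
      ((Metric.closedBall_subset_closedBall (min_le_left _ _)).trans hball0)).trans
      Set.inter_subset_right
  · exact (Metric.closure_ball_subset_closedBall.trans
      ((Metric.closedBall_subset_closedBall (min_le_left _ _)).trans hball1)).trans
      Set.inter_subset_right
  · calc Metric.diam (closure (Metric.ball f s0)) ≤ Metric.diam (Metric.closedBall f s0) :=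
          Metric.diam_mono Metric.closure_ball_subset_closedBall Metric.isBounded_closedBall
      _ ≤ 2 * s0 := Metric.diam_closedBall hs0.le
      _ ≤ r := by have := min_le_right r0 (r / 2); simp only [hs0def]; linarith [min_le_right r0 (r/2)]
  · calc Metric.diam (closure (Metric.ball g s1)) ≤ Metric.diam (Metric.closedBall g s1) :=
          Metric.diam_mono Metric.closure_ball_subset_closedBall Metric.isBounded_closedBall
      _ ≤ 2 * s1 := Metric.diam_closedBall hs1.le
      _ ≤ r := by simp only [hs1def]; linarith [min_le_right r1 (r/2)]
  · intro x hx y hy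
    have hx0 : x ∈ W0 := (Metric.closure_ball_subset_closedBall.trans
      ((Metric.closedBall_subset_closedBall (min_le_left _ _)).trans hball0)) hx
    have hy1 : y ∈ W1 := (Metric.closure_ball_subset_closedBall.trans
      ((Metric.closedBall_subset_closedBall (min_le_left _ _)).trans hball1)) hy
    have h1 : |(x n : ℝ) - (f n : ℝ)| < δ := hx0.1
    have h2 : |(y n : ℝ) - (g n : ℝ)| < δ := hy1.1
    have key : ε < |(x n : ℝ) - (y n : ℝ)| := by
      have := abs_sub_abs_le_abs_sub ((f n : ℝ) - (g n : ℝ)) ((f n : ℝ) - (x n : ℝ))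
      have t1 : |(f n : ℝ) - (g n : ℝ)| ≤ |(x n : ℝ) - (y n : ℝ)| + |(x n : ℝ) - (f n : ℝ)| + |(y n : ℝ) - (g n : ℝ)| := by
        have := abs_sub_le ((f n : ℝ)) ((x n : ℝ)) ((g n : ℝ))
        have := abs_sub_le ((x n : ℝ)) ((y n : ℝ)) ((g n : ℝ))
        have e1 : |(f n : ℝ) - (x n : ℝ)| = |(x n : ℝ) - (f n : ℝ)| := abs_sub_comm _ _
        have e2 : |(y n : ℝ) - (g n : ℝ)| = |(g n : ℝ) - (y n : ℝ)| := abs_sub_comm _ _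
        calc |(f n : ℝ) - (g n : ℝ)| ≤ |(f n : ℝ) - (x n : ℝ)| + |(x n : ℝ) - (g n : ℝ)| := abs_sub_le _ _ _
          _ ≤ |(f n : ℝ) - (x n : ℝ)| + (|(x n : ℝ) - (y n : ℝ)| + |(y n : ℝ) - (g n : ℝ)|) := by
              linarith [abs_sub_le ((x n : ℝ)) ((y n : ℝ)) ((g n : ℝ))]
          _ = _ := by rw [e1]; ring
      have : ε + 2 * δ = |(f n : ℝ) - (g n : ℝ)| := by simp only [hδdef]; ring
      linarith
    exact key.trans_le (le_normDist x y n)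

/-- The Cantor scheme of open sets, indexed by lists of booleans (most recent
choice at the head). -/
noncomputable def nodes (hε : 0 < ε)
    (h : ∀ U : Set H, IsOpen U → (K ∩ U).Nonempty → ε < normDiam (K ∩ U)) (hK : K.Nonempty) :
    List Bool → {V : Set H // IsOpen V ∧ (K ∩ V).Nonempty}
  | [] => ⟨Set.univ, isOpen_univ, by simpa using hK⟩
  | (b :: s) =>
    have hs := (nodes hε h hK s).2
    have hx := step_exists K ε hε h (nodes hε h hK s).1 hs.1 hs.2
      (1 / 2 ^ (s.length + 1)) (by positivity)
    if b then ⟨hx.choose.1, hx.choose_spec.1, hx.choose_spec.2.2.1⟩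
    else ⟨hx.choose.2, hx.choose_spec.2.1, hx.choose_spec.2.2.2.1⟩

variable (hε : 0 < ε)
  (h : ∀ U : Set H, IsOpen U → (K ∩ U).Nonempty → ε < normDiam (K ∩ U)) (hK : K.Nonempty)

lemma nodes_cons (b : Bool) (s : List Bool) :
    closure (nodes K ε hε h hK (b :: s)).1 ⊆ (nodes K ε hε h hK s).1 ∧
    Metric.diam (closure (nodes K ε hε h hK (b :: s)).1) ≤ 1 / 2 ^ (s.length + 1) := by
  have hs := (nodes K ε hε h hK s).2
  have hx := step_exists K ε hε h (nodes K ε hε h hK s).1 hs.1 hs.2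
    (1 / 2 ^ (s.length + 1)) (by positivity)
  obtain ⟨h1, h2, h3, h4, h5, h6, h7, h8, h9⟩ := hx.choose_spec
  cases b <;> simp only [nodes] <;> exact ⟨by assumption, by assumption⟩

lemma nodes_sep (s : List Bool) :
    ∀ x ∈ closure (nodes K ε hε h hK (true :: s)).1,
    ∀ y ∈ closure (nodes K ε hε h hK (false :: s)).1, ε < normDist x y := by
  have hs := (nodes K ε hε h hK s).2
  have hx := step_exists K ε hε h (nodes K ε hε h hK s).1 hs.1 hs.2
    (1 / 2 ^ (s.length + 1)) (by positivity)
  obtain ⟨h1, h2, h3, h4, h5, h6, h7, h8, h9⟩ := hx.choose_spec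
  simp only [nodes]
  exact h9

end Scheme
section Branch

/-- The reversed list of the first `k` values of a branch. -/
def br (σ : ℕ → Bool) : ℕ → List Bool
  | 0 => []
  | (k + 1) => σ k :: br σ k

lemma br_length (σ : ℕ → Bool) (k : ℕ) : (br σ k).length = k := by
  induction k with
  | zero => rfl
  | succ k ih => simp [br, ih]

lemma br_agree {σ σ' : ℕ → Bool} (k : ℕ) (hag : ∀ i < k, σ i = σ' i) :
    br σ k = br σ' k := by
  induction k with
  | zero => rfl
  | succ k ih =>
    simp only [br]
    rw [hag k (Nat.lt_succ_self k), ih fun i hi => hag i (hi.trans (Nat.lt_succ_self k))]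

variable (K : Set H) (ε : ℝ) (hε : 0 < ε)
  (h : ∀ U : Set H, IsOpen U → (K ∩ U).Nonempty → ε < normDiam (K ∩ U))
  (hK : K.Nonempty) (hc : IsCompact K)

include hε h hK hc

lemma branch_inter_nonempty (σ : ℕ → Bool) :
    (⋂ k, closure (nodes K ε hε h hK (br σ k)).1 ∩ K).Nonempty := by
  apply IsCompact.nonempty_iInter_of_sequence_nonempty_isCompact_isClosed
  · intro k
    refine Set.inter_subset_inter_left K ?_
    have h1 : closure (nodes K ε hε h hK (br σ (k + 1))).1 ⊆ (nodes K ε hε h hK (br σ k)).1 := by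
      have := (nodes_cons K ε hε h hK (σ k) (br σ k)).1
      simpa [br] using this
    exact h1.trans subset_closure
  · intro k
    obtain ⟨x, hxK, hxV⟩ := (nodes K ε hε h hK (br σ k)).2.2
    exact ⟨x, subset_closure hxV, hxK⟩
  · exact (isClosed_closure.inter hc.isClosed).isCompact
  · exact fun k => isClosed_closure.inter hc.isClosed

/-- The point of `K` determined by a branch. -/
noncomputable def Phi (σ : ℕ → Bool) : H :=
  (branch_inter_nonempty K ε hε h hK hc σ).choose

lemma Phi_mem (σ : ℕ → Bool) (k : ℕ) :
    Phi K ε hε h hK hc σ ∈ closure (nodes K ε hε h hK (br σ k)).1 :=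
  (Set.mem_iInter.1 (branch_inter_nonempty K ε hε h hK hc σ).choose_spec k).1

lemma Phi_mem_K (σ : ℕ → Bool) : Phi K ε hε h hK hc σ ∈ K :=
  (Set.mem_iInter.1 (branch_inter_nonempty K ε hε h hK hc σ).choose_spec 0).2

lemma Phi_dist (σ σ' : ℕ → Bool) (k : ℕ) (hag : ∀ i < k + 1, σ i = σ' i) :
    dist (Phi K ε hε h hK hc σ) (Phi K ε hε h hK hc σ') ≤ 1 / 2 ^ (k + 1) := by
  have hbr : br σ (k + 1) = br σ' (k + 1) := br_agree (k + 1) hag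
  have h1 := Phi_mem K ε hε h hK hc σ (k + 1)
  have h2 := Phi_mem K ε hε h hK hc σ' (k + 1)
  rw [← hbr] at h2
  have hdiam : Metric.diam (closure (nodes K ε hε h hK (br σ (k + 1))).1) ≤ 1 / 2 ^ (k + 1) := by
    have := (nodes_cons K ε hε h hK (σ k) (br σ k)).2
    simpa [br, br_length] using this
  calc dist (Phi K ε hε h hK hc σ) (Phi K ε hε h hK hc σ')
      ≤ Metric.diam (closure (nodes K ε hε h hK (br σ (k + 1))).1) :=
        Metric.dist_le_diam_of_mem (@Metric.isBounded_of_compactSpace H _ _ (by exact (inferInstance : @CompactSpace H Pi.topologicalSpace))) h1 h2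
    _ ≤ 1 / 2 ^ (k + 1) := hdiam

lemma Phi_sep (σ σ' : ℕ → Bool) (hne : σ ≠ σ') :
    ε < normDist (Phi K ε hε h hK hc σ) (Phi K ε hε h hK hc σ') := by
  have hex : ∃ k, σ k ≠ σ' k := by
    by_contra hcon
    push_neg at hcon
    exact hne (funext hcon)
  set k := Nat.find hex with hkdef
  have hks : σ k ≠ σ' k := Nat.find_spec hex
  have hag : ∀ i < k, σ i = σ' i := fun i hi => by
    have := Nat.find_min hex hi
    simpa using this
  have hbr : br σ k = br σ' k := br_agree k hag
  have h1 : Phi K ε hε h hK hc σ ∈ closure (nodes K ε hε h hK (σ k :: br σ k)).1 := by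
    have := Phi_mem K ε hε h hK hc σ (k + 1); simpa [br] using this
  have h2 : Phi K ε hε h hK hc σ' ∈ closure (nodes K ε hε h hK (σ' k :: br σ k)).1 := by
    have h2' := Phi_mem K ε hε h hK hc σ' (k + 1)
    simp only [br] at h2'
    rwa [← hbr] at h2'
  rcases hb : σ k with _ | _ <;> rcases hb' : σ' k with _ | _
  · rw [hb, hb'] at hks; exact absurd rfl hks
  · rw [hb] at h1; rw [hb'] at h2
    rw [normDist_comm]
    exact nodes_sep K ε hε h hK (br σ k) _ h2 _ h1
  · rw [hb] at h1; rw [hb'] at h2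
    exact nodes_sep K ε hε h hK (br σ k) _ h1 _ h2
  · rw [hb, hb'] at hks; exact absurd rfl hks

lemma Phi_inj : Function.Injective (Phi K ε hε h hK hc) := by
  intro σ σ' heq
  by_contra hne
  have := Phi_sep K ε hε h hK hc σ σ' hne
  rw [heq, normDist_self] at this
  linarith

lemma Phi_cont : Continuous (Phi K ε hε h hK hc) := by
  rw [continuous_iff_continuousAt]
  intro σ
  rw [ContinuousAt]; refine Metric.tendsto_nhds.2 ?_
  intro δ hδ
  obtain ⟨k, hk⟩ := exists_pow_lt_of_lt_one hδ (by norm_num : (1 : ℝ) / 2 < 1)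
  set C : Set (ℕ → Bool) := {σ' | ∀ i ∈ Finset.range (k + 1), σ' i = σ i} with hCdef
  have hCo : IsOpen C := by
    have : C = ⋂ i ∈ Finset.range (k + 1), (fun σ' : ℕ → Bool => σ' i) ⁻¹' {σ i} := by
      ext σ'; simp [hCdef]
    rw [this]
    exact isOpen_biInter_finset fun i _ => (continuous_apply i).isOpen_preimage _ (isOpen_discrete _)
  have hσC : σ ∈ C := fun i _ => rfl
  filter_upwards [hCo.mem_nhds hσC] with σ' hσ'
  have hag : ∀ i < k + 1, σ' i = σ i := fun i hi => hσ' i (Finset.mem_range.2 hi)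
  have hd := Phi_dist K ε hε h hK hc σ' σ k hag
  have hle : (1 : ℝ) / 2 ^ (k + 1) ≤ (1 / 2) ^ k := by
    rw [one_div_pow]
    apply one_div_le_one_div_of_le (by positivity)
    exact pow_le_pow_right₀ (by norm_num) (Nat.le_succ k)
  calc dist (Phi K ε hε h hK hc σ') (Phi K ε hε h hK hc σ) ≤ 1 / 2 ^ (k + 1) := hd
    _ ≤ (1 / 2) ^ k := hle
    _ < δ := hk

end Branch

/-- If `K ⊆ H` is nonempty compact and every open `U` meeting `K` gives `K ∩ U` of norm
diameter `> ε`, then `K` contains a nonempty perfect set which is `ε`-separated in norm;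
in particular `K` is not norm separable. -/
theorem exists_perfect_separated (K : Set H) (hK : K.Nonempty) (hc : IsCompact K)
    (ε : ℝ) (hε : 0 < ε)
    (h : ∀ U : Set H, IsOpen U → (K ∩ U).Nonempty → ε < normDiam (K ∩ U)) :
    (∃ P : Set H, P ⊆ K ∧ P.Nonempty ∧ IsCompact P ∧ Perfect P ∧
      ∀ f ∈ P, ∀ g ∈ P, f ≠ g → ε < normDist f g) ∧
    ¬ NormSeparable K := by
  have hsep : ∀ σ σ' : ℕ → Bool, σ ≠ σ' →
      ε < normDist (Phi K ε hε h hK hc σ) (Phi K ε hε h hK hc σ') :=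
    Phi_sep K ε hε h hK hc
  constructor
  · refine ⟨Set.range (Phi K ε hε h hK hc), ?_, ?_, ?_, ?_, ?_⟩
    · rintro _ ⟨σ, rfl⟩
      exact Phi_mem_K K ε hε h hK hc σ
    · exact ⟨_, Set.mem_range_self fun _ => false⟩
    · exact isCompact_range (Phi_cont K ε hε h hK hc)
    · constructor
      · exact (isCompact_range (Phi_cont K ε hε h hK hc)).isClosed
      · rintro _ ⟨σ, rfl⟩
        rw [accPt_iff_nhds]
        intro U hU
        obtain ⟨δ, hδ, hball⟩ := Metric.mem_nhds_iff.1 hU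
        obtain ⟨k, hk⟩ := exists_pow_lt_of_lt_one hδ (by norm_num : (1 : ℝ) / 2 < 1)
        set σ' : ℕ → Bool := fun i => if i = k + 1 then !σ (k + 1) else σ i with hσ'def
        have hag : ∀ i < k + 1, σ' i = σ i := fun i hi => by
          simp [hσ'def, Nat.ne_of_lt hi]
        have hd := Phi_dist K ε hε h hK hc σ' σ k hag
        have hne : σ' ≠ σ := by
          intro he
          have := congrFun he (k + 1)
          simp [hσ'def] at this
        refine ⟨Phi K ε hε h hK hc σ', ⟨hball ?_, Set.mem_range_self σ'⟩, ?_⟩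
        · rw [Metric.mem_ball]
          have hle : (1 : ℝ) / 2 ^ (k + 1) ≤ (1 / 2) ^ k := by
            rw [one_div_pow]
            apply one_div_le_one_div_of_le (by positivity)
            exact pow_le_pow_right₀ (by norm_num) (Nat.le_succ k)
          calc dist (Phi K ε hε h hK hc σ') (Phi K ε hε h hK hc σ) ≤ 1 / 2 ^ (k + 1) := hd
            _ ≤ (1 / 2) ^ k := hle
            _ < δ := hk
        · intro he
          exact hne (Phi_inj K ε hε h hK hc he)
    · rintro _ ⟨σ, rfl⟩ _ ⟨σ', rfl⟩ hfg
      exact hsep σ σ' (by rintro rfl; exact hfg rfl)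
  · rintro ⟨D, hDc, hDK, hDap⟩
    have hchoice : ∀ σ : ℕ → Bool, ∃ gD ∈ D, normDist (Phi K ε hε h hK hc σ) gD < ε / 2 :=
      fun σ => hDap _ (Phi_mem_K K ε hε h hK hc σ) (ε / 2) (half_pos hε)
    choose gD hgD1 hgD2 using hchoice
    haveI := hDc.to_subtype
    have hinj : Function.Injective fun σ => (⟨gD σ, hgD1 σ⟩ : D) := by
      intro σ σ' he
      simp only [Subtype.mk.injEq] at he
      by_contra hne
      have h1 := hsep σ σ' hne
      have h2 := hgD2 σ
      have h3 := hgD2 σ'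
      have ht := normDist_triangle (Phi K ε hε h hK hc σ) (gD σ) (Phi K ε hε h hK hc σ')
      have h4 : normDist (gD σ) (Phi K ε hε h hK hc σ') = normDist (Phi K ε hε h hK hc σ') (gD σ') := by
        rw [normDist_comm, he]
      linarith
    exact uncountable_cantor hinj.countable
end
end

section
/- Fix ε > 0. Then the set { (K, f) ∈ K(H) × H : f ∈ 𝔻_ε(K) } is a Borel subset of K(H) × H. -/
noncomputable section

/-- `K(H)`: the space of nonempty compact subsets of `H`. -/
def KH : Type := {K : Set H // IsCompact K ∧ K.Nonempty}

/-- The Vietoris topology on `K(H)`, generated by the sets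
`{K : K ∩ U ≠ ∅}` and `{K : K ⊆ U}` for `U ⊆ H` open. -/
instance : TopologicalSpace KH :=
  TopologicalSpace.generateFrom
    ({S : Set KH | ∃ U : Set H, IsOpen U ∧ S = {K : KH | (K.val ∩ U).Nonempty}} ∪
     {S : Set KH | ∃ U : Set H, IsOpen U ∧ S = {K : KH | K.val ⊆ U}})

/-- The Borel σ-algebra of the Vietoris topology on `K(H)`. -/
instance : MeasurableSpace KH := borel KH

/-- The Szlenk-type derivative `𝔻_ε(K)`: points of `K` all of whose open neighbourhoods `U`
have `K ∩ U` of norm diameter greater than `ε`. -/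
def Dstar (ε : ℝ) (K : Set H) : Set H :=
  {f | f ∈ K ∧ ∀ U : Set H, IsOpen U → f ∈ U → ε < normDiam (K ∩ U)}

/- ### Auxiliary lemmas -/

lemma abs_term_le_two (f g : H) (n : ℕ) : |(f n : ℝ) - (g n : ℝ)| ≤ 2 := by
  have h1 := (f n).2
  have h2 := (g n).2
  simp only [Set.mem_Icc] at h1 h2
  rw [abs_le]
  constructor <;> linarith [h1.1, h1.2, h2.1, h2.2]

lemma bddAbove_range_abs (f g : H) :
    BddAbove (Set.range fun n : ℕ => |(f n : ℝ) - (g n : ℝ)|) := by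
  refine ⟨2, ?_⟩
  rintro x ⟨n, rfl⟩
  exact abs_term_le_two f g n

lemma normDist_le_two (f g : H) : normDist f g ≤ 2 :=
  ciSup_le fun n => abs_term_le_two f g n

lemma bddAbove_dists (S : Set H) :
    BddAbove {d : ℝ | ∃ f ∈ S, ∃ g ∈ S, d = normDist f g} := by
  refine ⟨2, ?_⟩
  rintro d ⟨f, -, g, -, rfl⟩
  exact normDist_le_two f g

lemma lt_normDist_iff (ε : ℝ) (f g : H) :
    ε < normDist f g ↔ ∃ n, ε < |(f n : ℝ) - (g n : ℝ)| := by
  rw [normDist, lt_ciSup_iff (bddAbove_range_abs f g)]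

lemma normDiam_mono {S T : Set H} (h : S ⊆ T)
    (hne : {d : ℝ | ∃ f ∈ S, ∃ g ∈ S, d = normDist f g}.Nonempty) :
    normDiam S ≤ normDiam T := by
  refine csSup_le_csSup (bddAbove_dists T) hne ?_
  rintro d ⟨f, hf, g, hg, rfl⟩
  exact ⟨f, h hf, g, h hg, rfl⟩

lemma dists_nonempty_of_lt {ε : ℝ} (hε : 0 < ε) {S : Set H} (h : ε < normDiam S) :
    {d : ℝ | ∃ f ∈ S, ∃ g ∈ S, d = normDist f g}.Nonempty := by
  by_contra hne
  rw [Set.not_nonempty_iff_eq_empty] at hne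
  rw [normDiam, hne, Real.sSup_empty] at h
  linarith

/-- Key combinatorial characterization of `ε < normDiam S`. -/
lemma lt_normDiam_iff_key (ε : ℝ) (hε : 0 < ε) (S : Set H) :
    ε < normDiam S ↔ ∃ n : ℕ, ∃ q : ℚ,
      (S ∩ {h : H | (q : ℝ) + ε < (h n : ℝ)}).Nonempty ∧
      (S ∩ {h : H | (h n : ℝ) < (q : ℝ)}).Nonempty := by
  constructor
  · intro h
    obtain ⟨d, hd, hdε⟩ := exists_lt_of_lt_csSup (dists_nonempty_of_lt hε h) h
    obtain ⟨f, hf, g, hg, rfl⟩ := hd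
    obtain ⟨n, hn⟩ := (lt_normDist_iff ε f g).mp hdε
    rcases abs_cases ((f n : ℝ) - (g n : ℝ)) with ⟨heq, -⟩ | ⟨heq, -⟩
    · have h1 : (g n : ℝ) < (f n : ℝ) - ε := by rw [heq] at hn; linarith
      obtain ⟨q, hq1, hq2⟩ := exists_rat_btwn h1
      exact ⟨n, q, ⟨f, hf, by simp only [Set.mem_setOf_eq]; linarith⟩,
        ⟨g, hg, by simpa using hq1⟩⟩
    · have h1 : (f n : ℝ) < (g n : ℝ) - ε := by rw [heq] at hn; linarith
      obtain ⟨q, hq1, hq2⟩ := exists_rat_btwn h1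
      exact ⟨n, q, ⟨g, hg, by simp only [Set.mem_setOf_eq]; linarith⟩,
        ⟨f, hf, by simpa using hq1⟩⟩
  · rintro ⟨n, q, ⟨f, hf, hf2⟩, ⟨g, hg, hg2⟩⟩
    simp only [Set.mem_setOf_eq] at hf2 hg2
    have h1 : ε < |(f n : ℝ) - (g n : ℝ)| := by
      calc ε < (f n : ℝ) - (g n : ℝ) := by linarith
        _ ≤ |(f n : ℝ) - (g n : ℝ)| := le_abs_self _
    have h2 : ε < normDist f g :=
      lt_of_lt_of_le h1 (le_ciSup (bddAbove_range_abs f g) n)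
    exact lt_of_lt_of_le h2 (le_csSup (bddAbove_dists S) ⟨f, hf, g, hg, rfl⟩)

lemma continuous_eval (n : ℕ) : Continuous fun h : H => (h n : ℝ) :=
  continuous_subtype_val.comp (continuous_apply n)

lemma isOpen_gtSet (n : ℕ) (c : ℝ) : IsOpen {h : H | c < (h n : ℝ)} :=
  isOpen_lt continuous_const (continuous_eval n)

lemma isOpen_ltSet (n : ℕ) (c : ℝ) : IsOpen {h : H | (h n : ℝ) < c} :=
  isOpen_lt (continuous_eval n) continuous_const

lemma meas_hit {U : Set H} (hU : IsOpen U) :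
    MeasurableSet {K : KH | (K.val ∩ U).Nonempty} := by
  have hop : IsOpen {K : KH | (K.val ∩ U).Nonempty} :=
    TopologicalSpace.isOpen_generateFrom_of_mem (Or.inl ⟨U, hU, rfl⟩)
  exact MeasurableSpace.measurableSet_generateFrom hop

/-- **Lemma 4(ii).** For `ε > 0`, the set `{(K, f) ∈ K(H) × H : f ∈ 𝔻_ε(K)}` is Borel. -/
theorem borel_Dstar (ε : ℝ) (hε : 0 < ε) :
    MeasurableSet {p : KH × H | p.2 ∈ Dstar ε p.1.val} := by
  obtain ⟨Bas, hBc, -, hBb⟩ := TopologicalSpace.exists_countable_basis H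
  have := hBc.to_subtype
  -- membership set is measurable
  have hmem : MeasurableSet {p : KH × H | p.2 ∈ p.1.val} := by
    have heq : {p : KH × H | p.2 ∈ p.1.val} =
        (⋃ B ∈ Bas, ({K : KH | (K.val ∩ B).Nonempty}ᶜ ×ˢ B))ᶜ := by
      ext ⟨K, f⟩
      simp only [Set.mem_setOf_eq, Set.mem_compl_iff, Set.mem_iUnion, Set.mem_prod,
        not_exists]
      constructor
      · intro hf B hB hmem
        exact hmem.1 ⟨f, hf, hmem.2⟩
      · intro h
        by_contra hf
        have hcl : IsClosed K.val := K.2.1.isClosed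
        obtain ⟨B, hB, hfB, hBsub⟩ :=
          hBb.exists_subset_of_mem_open (show f ∈ K.valᶜ from hf) hcl.isOpen_compl
        exact h B hB ⟨fun ⟨g, hgK, hgB⟩ => hBsub hgB hgK, hfB⟩
    rw [heq]
    exact (MeasurableSet.biUnion hBc fun B hB =>
      ((meas_hit (hBb.isOpen hB)).compl.prod (hBb.isOpen hB).measurableSet)).compl
  -- for each open B, the diameter condition is measurable
  have hdiam : ∀ B : Set H, IsOpen B →
      MeasurableSet {p : KH × H | ε < normDiam (p.1.val ∩ B)} := by
    intro B hB
    have heq : {p : KH × H | ε < normDiam (p.1.val ∩ B)} =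
        Prod.fst ⁻¹' (⋃ n : ℕ, ⋃ q : ℚ,
          ({K : KH | (K.val ∩ (B ∩ {h : H | (q : ℝ) + ε < (h n : ℝ)})).Nonempty} ∩
           {K : KH | (K.val ∩ (B ∩ {h : H | (h n : ℝ) < (q : ℝ)})).Nonempty})) := by
      ext ⟨K, f⟩
      simp only [Set.mem_setOf_eq, Set.mem_preimage, Set.mem_iUnion, Set.mem_inter_iff]
      rw [lt_normDiam_iff_key ε hε]
      simp only [Set.inter_assoc]
    rw [heq]
    refine measurable_fst ?_
    refine MeasurableSet.iUnion fun n => MeasurableSet.iUnion fun q => ?_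
    exact (meas_hit (hB.inter (isOpen_gtSet n _))).inter
      (meas_hit (hB.inter (isOpen_ltSet n _)))
  -- the main set equality
  have main : {p : KH × H | p.2 ∈ Dstar ε p.1.val} =
      {p : KH × H | p.2 ∈ p.1.val} ∩
      ⋂ B ∈ Bas, ((Set.univ ×ˢ Bᶜ) ∪ {p : KH × H | ε < normDiam (p.1.val ∩ B)}) := by
    ext ⟨K, f⟩
    simp only [Dstar, Set.mem_setOf_eq, Set.mem_inter_iff, Set.mem_iInter, Set.mem_union,
      Set.mem_prod, Set.mem_univ, true_and, Set.mem_compl_iff]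
    constructor
    · rintro ⟨hf, hU⟩
      refine ⟨hf, fun B hB => ?_⟩
      by_cases hfB : f ∈ B
      · exact Or.inr (hU B (hBb.isOpen hB) hfB)
      · exact Or.inl hfB
    · rintro ⟨hf, h⟩
      refine ⟨hf, fun U hUo hfU => ?_⟩
      obtain ⟨B, hB, hfB, hBU⟩ := hBb.exists_subset_of_mem_open hfU hUo
      have hlt : ε < normDiam (K.val ∩ B) := (h B hB).resolve_left (not_not.mpr hfB)
      refine lt_of_lt_of_le hlt (normDiam_mono ?_ (dists_nonempty_of_lt hε hlt))
      exact Set.inter_subset_inter_right _ hBU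
  rw [main]
  refine hmem.inter (MeasurableSet.biInter hBc fun B hB => ?_)
  exact (MeasurableSet.univ.prod (hBb.isOpen hB).measurableSet.compl).union
    (hdiam B (hBb.isOpen hB))
end
end

section
/- Let Z be a standard Borel space and let A ⊆ Z × H be a Borel set such that for every z ∈ Z the section A_z is nonempty, compact, and norm separable. Let ε > 0, and let Ã ⊆ Z × H be a Borel set with Ã ⊆ A such that for every z ∈ Z the section Ã_z is a (possibly empty) compact set. Then there exists a sequence (f_n) of Borel measurable maps f_n : Z → H with (z, f_n(z)) ∈ A for all z and n, such that for every z ∈ Z with Ã_z nonempty, the set { f_n(z) : n ∈ ℕ and f_n(z) ∈ Ã_z \ 𝔻_ε(Ã_z) } is nonempty and norm ε-dense in Ã_z \ 𝔻_ε(Ã_z). -/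
noncomputable section


open Set Function MeasureTheory
local notation "cylinder" => PiNat.cylinder

variable {α : Type*} [TopologicalSpace α]

/-- A countable family of sets is measurably separated to empty intersection. -/
def CSep [MeasurableSpace α] (S : ℕ → Set α) : Prop :=
  ∃ B : ℕ → Set α, (∀ n, S n ⊆ B n) ∧ (∀ n, MeasurableSet (B n)) ∧ ⋂ n, B n = ∅

theorem cSep_of_pieces [MeasurableSpace α] {S : ℕ → Set α} {m : ℕ} {T : ℕ → Set α}
    (hd : S m = ⋃ i, T i) (h : ∀ i, CSep (update S m (T i))) : CSep S := by
  choose B hB1 hB2 hB3 using h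
  refine ⟨update (fun n => ⋂ i, B i n) m (⋃ i, B i m), fun n => ?_, fun n => ?_, ?_⟩
  · by_cases hn : n = m
    · subst hn
      rw [update_self, hd]
      refine iUnion_subset fun i => ?_
      have := hB1 i n
      simp only [update_self] at this
      exact this.trans (subset_iUnion (fun i => B i n) i)
    · rw [update_of_ne hn]
      refine subset_iInter fun i => ?_
      have := hB1 i n
      rwa [update_of_ne hn] at this
  · by_cases hn : n = m
    · subst hn; rw [update_self]; exact MeasurableSet.iUnion fun i => hB2 i n
    · rw [update_of_ne hn]; exact MeasurableSet.iInter fun i => hB2 i n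
  · ext x
    simp only [mem_iInter, mem_empty_iff_false, iff_false]
    intro hx
    have hxm := hx m
    rw [update_self, mem_iUnion] at hxm
    obtain ⟨i, hi⟩ := hxm
    have : x ∈ ⋂ n, B i n := by
      refine mem_iInter.2 fun n => ?_
      by_cases hn : n = m
      · subst hn; exact hi
      · have := hx n
        rw [update_of_ne hn, mem_iInter] at this
        exact this i
    rw [hB3 i] at this
    exact this

/-- **Novikov's countable separation theorem**, range form. -/
theorem cSep_ranges [T2Space α] [MeasurableSpace α] [OpensMeasurableSpace α]
    {f : ℕ → (ℕ → ℕ) → α} (hf : ∀ n, Continuous (f n)) (h : ⋂ n, range (f n) = ∅) :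
    CSep (fun n => range (f n)) := by
  by_contra hsep
  -- one-step refinement
  have I : ∀ (c : ℕ → ℕ → ℕ) (d : ℕ → ℕ) (m : ℕ),
      ¬CSep (fun n => f n '' cylinder (c n) (d n)) →
      ∃ z : ℕ → ℕ, z ∈ cylinder (c m) (d m) ∧
        ¬CSep (fun n => f n '' cylinder (update c m z n) (update d m (d m + 1) n)) := by
    intro c d m
    contrapose!
    intro H
    apply cSep_of_pieces (m := m)
      (T := fun i => f m '' cylinder (update (c m) (d m) i) (d m + 1))
    · rw [← PiNat.iUnion_cylinder_update (c m) (d m), image_iUnion]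
    · intro i
      have hz := H (update (c m) (d m) i) (PiNat.update_mem_cylinder _ _ _)
      convert hz using 1
      ext n
      by_cases hn : n = m
      · subst hn; simp
      · simp [hn]
  -- the states
  let A := { q : (ℕ → ℕ → ℕ) × (ℕ → ℕ) //
      ¬CSep (fun n => f n '' cylinder (q.1 n) (q.2 n)) }
  have step : ∀ (p : A) (m : ℕ), ∃ q : A,
      (∀ n, n ≠ m → q.1.1 n = p.1.1 n) ∧ q.1.1 m ∈ cylinder (p.1.1 m) (p.1.2 m) ∧
      q.1.2 = update p.1.2 m (p.1.2 m + 1) := by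
    rintro ⟨⟨c, d⟩, hp⟩ m
    obtain ⟨z, hz1, hz2⟩ := I c d m hp
    exact ⟨⟨⟨update c m z, update d m (d m + 1)⟩, hz2⟩,
      fun n hn => update_of_ne hn _ _, by simpa using hz1, rfl⟩
  choose F hF1 hF2 hF3 using step
  have hp0 : ¬CSep (fun n => f n '' cylinder ((fun _ _ => 0) n) ((fun _ => 0) n)) := by
    simpa [PiNat.cylinder_zero] using hsep
  let p : ℕ → A := fun k => Nat.rec ⟨⟨fun _ _ => 0, fun _ => 0⟩, hp0⟩
      (fun k q => F q (Nat.unpair k).1) k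
  have prec : ∀ k, p (k + 1) = F (p k) (Nat.unpair k).1 := fun k => rfl
  -- depths
  have dmono : ∀ k n, (p k).1.2 n ≤ (p (k+1)).1.2 n := by
    intro k n
    rw [prec, hF3]
    by_cases hn : n = (Nat.unpair k).1
    · subst hn; simp
    · rw [update_of_ne hn]
  have dmono' : ∀ {k k'} (_ : k ≤ k') (n : ℕ), (p k).1.2 n ≤ (p k').1.2 n := by
    intro k k' hk n
    induction k' with
    | zero =>
      have : k = 0 := Nat.le_zero.1 hk
      subst this; exact le_rfl
    | succ k'' ih =>
      rcases Nat.lt_or_ge k (k''+1) with h | h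
      · exact (ih (by omega)).trans (dmono k'' n)
      · have : k = k'' + 1 := le_antisymm hk h
        subst this; rfl
  have dgrow : ∀ n t, ∃ k, t ≤ (p k).1.2 n := by
    intro n t
    induction t with
    | zero => exact ⟨0, Nat.zero_le _⟩
    | succ t ih =>
      obtain ⟨k, hk⟩ := ih
      refine ⟨Nat.pair n k + 1, ?_⟩
      have e : (Nat.unpair (Nat.pair n k)).1 = n := by simp
      rw [prec, hF3, e, update_self]
      have : (p k).1.2 n ≤ (p (Nat.pair n k)).1.2 n := dmono' (Nat.right_le_pair n k) n
      omega
  -- freezing of the base points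
  have freeze : ∀ k n i, i < (p k).1.2 n → (p (k+1)).1.1 n i = (p k).1.1 n i := by
    intro k n i hi
    rw [prec]
    by_cases hn : n = (Nat.unpair k).1
    · subst hn
      exact hF2 (p k) _ i hi
    · rw [hF1 (p k) _ n hn]
  have freeze' : ∀ {k k'} (_ : k ≤ k') (n i : ℕ), i < (p k).1.2 n →
      (p k').1.1 n i = (p k).1.1 n i := by
    intro k k' hk n i hi
    induction k' with
    | zero =>
      have : k = 0 := Nat.le_zero.1 hk
      subst this; rfl
    | succ k'' ih =>
      rcases Nat.lt_or_ge k (k''+1) with h | h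
      · have h1 : k ≤ k'' := by omega
        rw [freeze k'' n i (lt_of_lt_of_le hi (dmono' h1 n)), ih h1]
      · have : k = k'' + 1 := le_antisymm hk h
        subst this; rfl
  -- the limit points
  have hx : ∀ n, ∃ x : ℕ → ℕ, ∀ i, ∃ k0, (∀ k ≥ k0, (p k).1.1 n i = x i) ∧ i < (p k0).1.2 n := by
    intro n
    refine ⟨fun i => (p (Classical.choose (dgrow n (i+1)))).1.1 n i, fun i => ?_⟩
    set k0 := Classical.choose (dgrow n (i+1))
    have hk0 : i + 1 ≤ (p k0).1.2 n := Classical.choose_spec (dgrow n (i+1))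
    exact ⟨k0, fun k hk => freeze' hk n i (by omega), by omega⟩
  choose x hx using hx
  -- uniform stabilization
  have hx2 : ∀ n N, ∃ k0, ∀ k, k0 ≤ k → (N ≤ (p k).1.2 n ∧ ∀ i, i < N → (p k).1.1 n i = x n i) := by
    intro n N
    induction N with
    | zero => exact ⟨0, fun k _ => ⟨Nat.zero_le _, fun i hi => absurd hi (Nat.not_lt_zero i)⟩⟩
    | succ N ih =>
      obtain ⟨k0, hk0⟩ := ih
      obtain ⟨k1, hk1, _⟩ := hx n N
      obtain ⟨k2, hk2⟩ := dgrow n (N + 1)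
      refine ⟨max (max k0 k1) k2, fun k hk => ⟨?_, ?_⟩⟩
      · exact le_trans hk2 (dmono' (le_trans (le_max_right _ _) hk) n)
      · intro i hi
        rcases Nat.lt_or_ge i N with hiN | hiN
        · exact (hk0 k (le_trans (le_trans (le_max_left _ _) (le_max_left _ _)) hk)).2 i hiN
        · have : i = N := by omega
          subst this
          exact hk1 k (le_trans (le_trans (le_max_right _ _) (le_max_left _ _)) hk)
  by_cases heq : ∀ n m : ℕ, f n (x n) = f m (x m)
  · have : f 0 (x 0) ∈ ⋂ n, range (f n) := mem_iInter.2 fun n => ⟨x n, heq n 0⟩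
    rw [h] at this
    exact this
  · push_neg at heq
    obtain ⟨n, m, hnm⟩ := heq
    have hnem : n ≠ m := fun hh => hnm (by rw [hh])
    obtain ⟨u, v, u_open, v_open, xu, yv, huv⟩ := t2_separation hnm
    letI : MetricSpace (ℕ → ℕ) := PiNat.metricSpaceNatNat
    obtain ⟨εx, εxpos, hεx⟩ : ∃ εx : ℝ, εx > 0 ∧ Metric.ball (x n) εx ⊆ (f n) ⁻¹' u := by
      apply Metric.mem_nhds_iff.1
      exact (hf n).continuousAt.preimage_mem_nhds (u_open.mem_nhds xu)
    obtain ⟨εy, εypos, hεy⟩ : ∃ εy : ℝ, εy > 0 ∧ Metric.ball (x m) εy ⊆ (f m) ⁻¹' v := by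
      apply Metric.mem_nhds_iff.1
      exact (hf m).continuousAt.preimage_mem_nhds (v_open.mem_nhds yv)
    obtain ⟨N, hN⟩ : ∃ N : ℕ, (1 / 2 : ℝ) ^ N < min εx εy :=
      exists_pow_lt_of_lt_one (lt_min εxpos εypos) (by norm_num)
    have Cn : ∀ y : ℕ → ℕ, y ∈ cylinder (x n) N → f n y ∈ u := by
      intro y hy
      apply hεx
      rw [PiNat.mem_cylinder_iff_dist_le] at hy
      exact lt_of_le_of_lt hy (lt_of_lt_of_le hN (min_le_left _ _))
    have Cm : ∀ y : ℕ → ℕ, y ∈ cylinder (x m) N → f m y ∈ v := by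
      intro y hy
      apply hεy
      rw [PiNat.mem_cylinder_iff_dist_le] at hy
      exact lt_of_le_of_lt hy (lt_of_lt_of_le hN (min_le_right _ _))
    obtain ⟨k0, hk0⟩ := hx2 n N
    obtain ⟨k1, hk1⟩ := hx2 m N
    set k := max k0 k1
    have hkn := hk0 k (le_max_left _ _)
    have hkm := hk1 k (le_max_right _ _)
    apply (p k).2
    refine ⟨fun j => if j = n then u else if j = m then v else univ, fun j => ?_, fun j => ?_, ?_⟩
    · dsimp only
      rcases eq_or_ne j n with hj | hj
      · subst hj
        rw [if_pos rfl]
        rintro - ⟨y, hy, rfl⟩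
        apply Cn
        rw [PiNat.mem_cylinder_iff] at hy ⊢
        intro i hi
        rw [hy i (lt_of_lt_of_le hi hkn.1), hkn.2 i hi]
      · rw [if_neg hj]
        rcases eq_or_ne j m with hj' | hj'
        · subst hj'
          rw [if_pos rfl]
          rintro - ⟨y, hy, rfl⟩
          apply Cm
          rw [PiNat.mem_cylinder_iff] at hy ⊢
          intro i hi
          rw [hy i (lt_of_lt_of_le hi hkm.1), hkm.2 i hi]
        · rw [if_neg hj']
          exact subset_univ _
    · dsimp only
      rcases eq_or_ne j n with hj | hj
      · rw [if_pos hj]; exact u_open.measurableSet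
      · rw [if_neg hj]
        rcases eq_or_ne j m with hj' | hj'
        · rw [if_pos hj']; exact v_open.measurableSet
        · rw [if_neg hj']; exact MeasurableSet.univ
    · ext y
      simp only [mem_iInter, mem_empty_iff_false, iff_false]
      intro hy
      have h1 := hy n
      rw [if_pos rfl] at h1
      have h2 := hy m
      rw [if_neg (Ne.symm hnem), if_pos rfl] at h2
      exact (disjoint_iff_forall_ne.1 huv) h1 h2 rfl

/-- **Novikov's countable separation theorem**. -/
theorem cSep_of_analytic [T2Space α] [MeasurableSpace α] [OpensMeasurableSpace α]
    {A : ℕ → Set α} (hA : ∀ n, AnalyticSet (A n)) (h : ⋂ n, A n = ∅) : CSep A := by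
  by_cases hem : ∀ n, (A n).Nonempty
  · have : ∀ n, ∃ f : (ℕ → ℕ) → α, Continuous f ∧ range f = A n := by
      intro n
      have h1 := hA n
      rw [MeasureTheory.AnalyticSet] at h1
      rcases h1 with h1 | h1
      · exact absurd (hem n) (by rw [h1]; simp)
      · exact h1
    choose f hf hfr using this
    have : CSep fun n => range (f n) := by
      apply cSep_ranges hf
      rw [← h]
      exact iInter_congr hfr
    obtain ⟨B, hB1, hB2, hB3⟩ := this
    exact ⟨B, fun n => by rw [← hfr n]; exact hB1 n, hB2, hB3⟩
  · push_neg at hem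
    obtain ⟨n, hn⟩ := hem
    have hn : A n = ∅ := by simpa [not_nonempty_iff_eq_empty] using hn
    refine ⟨update (fun _ => univ) n ∅, fun j => ?_, fun j => ?_, ?_⟩
    · rcases eq_or_ne j n with hj | hj
      · subst hj; rw [update_self, hn]
      · rw [update_of_ne hj]; exact subset_univ _
    · rcases eq_or_ne j n with hj | hj
      · subst hj; rw [update_self]; exact MeasurableSet.empty
      · rw [update_of_ne hj]; exact MeasurableSet.univ
    · apply eq_empty_of_subset_empty
      intro y hy
      have := mem_iInter.1 hy n
      rwa [update_self] at this

open MeasureTheory TopologicalSpace in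
/-- A Borel set with open sections is a countable union of measurable rectangles
with open sides (Novikov). -/
theorem exists_rect {X Y : Type*} [MeasurableSpace X] [StandardBorelSpace X]
    [TopologicalSpace Y] [PolishSpace Y] [MeasurableSpace Y] [BorelSpace Y]
    {B : Set (X × Y)} (hB : MeasurableSet B) (hsec : ∀ x, IsOpen {y | (x, y) ∈ B}) :
    ∃ (E : ℕ → Set X) (V : ℕ → Set Y), (∀ n, MeasurableSet (E n)) ∧ (∀ n, IsOpen (V n)) ∧
      B = ⋃ n, (E n) ×ˢ (V n) := by
  letI := upgradeStandardBorel X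
  obtain ⟨V, hV⟩ : ∃ V : ℕ → Set Y, insert ∅ (countableBasis Y) = range V :=
    ((countable_countableBasis Y).insert ∅).exists_eq_range (insert_nonempty _ _)
  have hVopen : ∀ n, IsOpen (V n) := by
    intro n
    have : V n ∈ insert ∅ (countableBasis Y) := by rw [hV]; exact mem_range_self n
    rw [mem_insert_iff] at this
    rcases this with h | h
    · rw [h]; exact isOpen_empty
    · exact (isBasis_countableBasis Y).isOpen h
  set Z : ℕ → Set X := fun n => {x | ∀ y ∈ V n, (x, y) ∈ B} with hZ
  set Zc : ℕ → Set X := fun n => Prod.fst '' (Bᶜ ∩ {p | p.2 ∈ V n}) with hZc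
  have hZcompl : ∀ n, Zc n = (Z n)ᶜ := by
    intro n
    ext x
    simp only [hZ, hZc, mem_image, mem_inter_iff, mem_compl_iff, mem_setOf_eq, Prod.exists]
    constructor
    · rintro ⟨a, b, ⟨hab, hb⟩, rfl⟩ hx
      exact hab (hx b hb)
    · intro hx
      push_neg at hx
      obtain ⟨y, hy, hyB⟩ := hx
      exact ⟨x, y, ⟨hyB, hy⟩, rfl⟩
  have hsndV : ∀ n, MeasurableSet {p : X × Y | p.2 ∈ V n} :=
    fun n => measurable_snd (hVopen n).measurableSet
  have hZcA : ∀ n, AnalyticSet (Zc n) := by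
    intro n
    exact ((hB.compl.inter (hsndV n)).analyticSet).image_of_continuous continuous_fst
  -- the auxiliary map
  set φ : (X × Y) × Y → X × Y := fun q => (q.1.1, q.2) with hφ
  have hφc : Continuous φ := by
    apply Continuous.prodMk
    · exact continuous_fst.comp continuous_fst
    · exact continuous_snd
  set M : ℕ → Set (X × Y) := fun n =>
    (B ∩ {p | p.2 ∈ (V n)ᶜ}) ∪
      (φ '' (((Bᶜ ∩ {p | p.2 ∈ V n}) ×ˢ (univ : Set Y)) ∩ φ ⁻¹' (B ∩ {p | p.2 ∈ V n})))
    with hM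
  have hMA : ∀ n, MeasureTheory.AnalyticSet (M n) := by
    intro n
    have h1 : MeasureTheory.AnalyticSet (B ∩ {p : X × Y | p.2 ∈ (V n)ᶜ}) :=
      (hB.inter (hsndV n).compl).analyticSet
    have h2 : MeasureTheory.AnalyticSet
        (φ '' (((Bᶜ ∩ {p | p.2 ∈ V n}) ×ˢ (univ : Set Y)) ∩ φ ⁻¹' (B ∩ {p | p.2 ∈ V n}))) := by
      apply MeasureTheory.AnalyticSet.image_of_continuous _ hφc
      apply MeasurableSet.analyticSet
      exact (((hB.compl.inter (hsndV n)).prod MeasurableSet.univ)).inter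
        (hφc.measurable (hB.inter (hsndV n)))
    have := MeasureTheory.AnalyticSet.iUnion (s := fun b : Bool => if b then
        B ∩ {p : X × Y | p.2 ∈ (V n)ᶜ} else
        (φ '' (((Bᶜ ∩ {p | p.2 ∈ V n}) ×ˢ (univ : Set Y)) ∩ φ ⁻¹' (B ∩ {p | p.2 ∈ V n}))))
      (by
        intro b
        cases b
        · exact h2
        · exact h1)
    have he : (⋃ b : Bool, if b then B ∩ {p : X × Y | p.2 ∈ (V n)ᶜ} else
        (φ '' (((Bᶜ ∩ {p | p.2 ∈ V n}) ×ˢ (univ : Set Y)) ∩ φ ⁻¹' (B ∩ {p | p.2 ∈ V n})))) = M n := by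
      rw [hM]
      ext q
      simp only [mem_iUnion, Bool.exists_bool, if_true, if_false, mem_union]
      tauto
    rwa [he] at this
  have hMB : ∀ n, M n ⊆ B := by
    intro n p hp
    rcases hp with hp | hp
    · exact hp.1
    · obtain ⟨q, ⟨-, hq2⟩, rfl⟩ := hp
      exact hq2.1
  have hMsection : ∀ n x y, (x, y) ∈ M n → y ∈ V n → x ∈ Zc n := by
    intro n x y hp hy
    rcases hp with hp | hp
    · exact absurd hy hp.2
    · obtain ⟨q, ⟨hq1, -⟩, hq⟩ := hp
      refine ⟨q.1, hq1.1, ?_⟩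
      exact congrArg Prod.fst hq
  have hMempty : ⋂ n, M n = ∅ := by
    by_contra hne
    obtain ⟨⟨x, y⟩, hp⟩ := nonempty_iff_ne_empty.2 hne
    have hpB : (x, y) ∈ B := hMB 0 (mem_iInter.1 hp 0)
    obtain ⟨W, hWb, hyW, hWsub⟩ :=
      (isBasis_countableBasis Y).exists_subset_of_mem_open (show y ∈ {y' | (x, y') ∈ B} from hpB)
        (hsec x)
    obtain ⟨n, hn⟩ : ∃ n, V n = W := by
      have : W ∈ range V := by rw [← hV]; exact mem_insert_of_mem _ hWb
      obtain ⟨n, hn⟩ := this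
      exact ⟨n, hn⟩
    have hxZc : x ∈ Zc n := hMsection n x y (mem_iInter.1 hp n) (by rw [hn]; exact hyW)
    rw [hZcompl n] at hxZc
    apply hxZc
    intro y' hy'
    apply hWsub
    rwa [hn] at hy'
  -- Novikov separation
  obtain ⟨N, hN1, hN2, hN3⟩ := cSep_of_analytic hMA hMempty
  set R : ℕ → Set (X × Y) := fun n => B \ N n with hR
  have hRsub : ∀ n, R n ⊆ (Z n) ×ˢ (V n) := by
    intro n p hp
    have hpM : p ∉ M n := fun hc => hp.2 (hN1 n hc)
    have hpV : p.2 ∈ V n := by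
      by_contra hc
      exact hpM (Or.inl ⟨hp.1, hc⟩)
    refine ⟨?_, hpV⟩
    by_contra hc
    rw [← compl_compl (Z n), ← hZcompl n] at hc
    have hxZc : p.1 ∈ Zc n := not_not.1 hc
    obtain ⟨q, hq1, hq2⟩ := hxZc
    apply hpM
    refine Or.inr ⟨(q, p.2), ⟨⟨?_, trivial⟩, ?_⟩, ?_⟩
    · exact hq1
    · simp only [hφ, mem_preimage, hq2]
      exact ⟨hp.1, hpV⟩
    · simp only [hφ, hq2]
  have hRcover : B = ⋃ n, R n := by
    ext p
    simp only [mem_iUnion, hR, mem_diff]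
    constructor
    · intro hp
      by_contra hc
      push_neg at hc
      have : p ∈ ⋂ n, N n := mem_iInter.2 fun n => hc n hp
      rw [hN3] at this
      exact this
    · rintro ⟨n, hn, -⟩
      exact hn
  -- separate the projections
  have hsep : ∀ n, ∃ u : Set X, Prod.fst '' R n ⊆ u ∧ Disjoint (Zc n) u ∧ MeasurableSet u := by
    intro n
    have h1 : MeasureTheory.AnalyticSet (Prod.fst '' R n) :=
      ((hB.diff (hN2 n)).analyticSet).image_of_continuous continuous_fst
    have h2 : Disjoint (Prod.fst '' R n) (Zc n) := by
      rw [disjoint_left]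
      rintro x ⟨p, hp, rfl⟩ hx
      rw [hZcompl n] at hx
      exact hx (hRsub n hp).1
    obtain ⟨u, hu1, hu2, hu3⟩ := h1.measurablySeparable (hZcA n) h2
    exact ⟨u, hu1, hu2, hu3⟩
  choose E hE1 hE2 hE3 using hsep
  refine ⟨E, V, hE3, hVopen, ?_⟩
  apply Subset.antisymm
  · intro p hp
    rw [hRcover] at hp
    obtain ⟨n, hn⟩ := mem_iUnion.1 hp
    refine mem_iUnion.2 ⟨n, ?_, (hRsub n hn).2⟩
    exact hE1 n ⟨p, hn, rfl⟩
  · intro p hp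
    obtain ⟨n, hn⟩ := mem_iUnion.1 hp
    have hpZ : p.1 ∈ Z n := by
      have := (hE2 n).symm
      rw [disjoint_left] at this
      have hnot := this hn.1
      rw [hZcompl n] at hnot
      exact not_not.1 hnot
    have := hpZ p.2 hn.2
    exact this

/-- **Projection theorem** (Novikov): the projection of a Borel set with compact
sections is Borel. -/
theorem measurableSet_proj {X Y : Type*} [MeasurableSpace X] [StandardBorelSpace X]
    [TopologicalSpace Y] [PolishSpace Y] [CompactSpace Y] [MeasurableSpace Y] [BorelSpace Y]
    {C : Set (X × Y)} (hC : MeasurableSet C) (hsec : ∀ x, IsCompact {y | (x, y) ∈ C}) :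
    MeasurableSet {x | ∃ y, (x, y) ∈ C} := by
  classical
  obtain ⟨E, V, hE, hV, hBE⟩ := exists_rect (B := Cᶜ) hC.compl (by
    intro x
    have : {y | (x, y) ∈ Cᶜ} = {y | (x, y) ∈ C}ᶜ := rfl
    rw [this]
    exact (hsec x).isClosed.isOpen_compl)
  set s : X → ℕ → Set Y := fun x n => if x ∈ E n then (V n)ᶜ else univ with hs
  have hsx : ∀ x, {y | (x, y) ∈ C} = ⋂ n, s x n := by
    intro x
    ext y
    simp only [mem_setOf_eq, mem_iInter, hs]
    constructor
    · intro hy n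
      by_cases hx : x ∈ E n
      · rw [if_pos hx]
        intro hyV
        have : (x, y) ∈ Cᶜ := by rw [hBE]; exact mem_iUnion.2 ⟨n, hx, hyV⟩
        exact this hy
      · rw [if_neg hx]; trivial
    · intro hy
      by_contra hc
      have : (x, y) ∈ Cᶜ := hc
      rw [hBE] at this
      obtain ⟨n, hn⟩ := mem_iUnion.1 this
      have := hy n
      rw [if_pos hn.1] at this
      exact this hn.2
  have hsclosed : ∀ x n, IsClosed (s x n) := by
    intro x n
    rw [hs]
    dsimp only
    by_cases hx : x ∈ E n
    · rw [if_pos hx]; exact (hV n).isClosed_compl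
    · rw [if_neg hx]; exact isClosed_univ
  set K : X → ℕ → Set Y := fun x m => ⋂ i : Fin m, s x i with hK
  have hKanti : ∀ x, Antitone (K x) := by
    intro x m m' hmm'
    refine subset_iInter fun i => ?_
    have : ((⟨(i : ℕ), lt_of_lt_of_le i.2 hmm'⟩ : Fin m') : ℕ) = (i : ℕ) := rfl
    exact (iInter_subset _ (⟨(i : ℕ), lt_of_lt_of_le i.2 hmm'⟩ : Fin m')).trans (by rw [this])
  have hmain : {x | ∃ y, (x, y) ∈ C} = ⋂ m, {x | (K x m).Nonempty} := by
    ext x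
    simp only [mem_setOf_eq, mem_iInter]
    constructor
    · rintro ⟨y, hy⟩ m
      refine ⟨y, ?_⟩
      have : y ∈ ⋂ n, s x n := by rw [← hsx]; exact hy
      exact mem_iInter.2 fun i => mem_iInter.1 this i
    · intro hm
      have hne : (⋂ m, K x m).Nonempty := by
        apply IsCompact.nonempty_iInter_of_directed_nonempty_isCompact_isClosed
        · intro i j
          exact ⟨max i j, hKanti x (le_max_left _ _), hKanti x (le_max_right _ _)⟩
        · exact hm
        · intro m
          exact IsClosed.isCompact (isClosed_iInter fun i => hsclosed x i)
        · intro m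
          exact isClosed_iInter fun i => hsclosed x i
      obtain ⟨y, hy⟩ := hne
      refine ⟨y, ?_⟩
      have : y ∈ ⋂ n, s x n := by
        refine mem_iInter.2 fun n => ?_
        have := mem_iInter.1 hy (n + 1)
        exact mem_iInter.1 this ⟨n, Nat.lt_succ_self n⟩
      have h2 : y ∈ {y' | (x, y') ∈ C} := by rw [hsx x]; exact this
      exact h2
  rw [hmain]
  refine MeasurableSet.iInter fun m => ?_
  -- only depends on finitely many measurable conditions
  set g : X → (Fin m → Bool) := fun x i => decide (x ∈ E i) with hg
  have hgm : Measurable g := by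
    refine measurable_pi_lambda _ fun i => ?_
    apply measurable_to_countable'
    intro b
    cases b
    · have : (fun x => decide (x ∈ E i)) ⁻¹' {false} = (E i)ᶜ := by
        ext x; simp
      rw [this]
      exact (hE i).compl
    · have : (fun x => decide (x ∈ E i)) ⁻¹' {true} = E i := by
        ext x; simp
      rw [this]
      exact hE i
  have : {x | (K x m).Nonempty} =
      g ⁻¹' {p : Fin m → Bool | (⋂ i : Fin m, if p i then (V i)ᶜ else univ).Nonempty} := by
    ext x
    simp only [mem_setOf_eq, mem_preimage, hg]
    have he : K x m = ⋂ i : Fin m, if decide (x ∈ E i) then (V (i : ℕ))ᶜ else univ := by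
      refine iInter_congr fun i => ?_
      by_cases hx : x ∈ E i <;> simp [hx, hs]
    rw [he]
  rw [this]
  exact hgm ((Set.to_countable _).measurableSet)

/-- Hitting a closed set version. -/
theorem measurableSet_hit {X Y : Type*} [MeasurableSpace X] [StandardBorelSpace X]
    [TopologicalSpace Y] [PolishSpace Y] [CompactSpace Y] [MeasurableSpace Y] [BorelSpace Y]
    {C : Set (X × Y)} (hC : MeasurableSet C) (hsec : ∀ x, IsCompact {y | (x, y) ∈ C})
    {F : Set Y} (hF : IsClosed F) :
    MeasurableSet {x | ∃ y ∈ F, (x, y) ∈ C} := by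
  have h1 : MeasurableSet (C ∩ {p : X × Y | p.2 ∈ F}) :=
    hC.inter (measurable_snd hF.measurableSet)
  have h2 : ∀ x, IsCompact {y | (x, y) ∈ C ∩ {p : X × Y | p.2 ∈ F}} := by
    intro x
    have : {y | (x, y) ∈ C ∩ {p : X × Y | p.2 ∈ F}} = {y | (x, y) ∈ C} ∩ F := rfl
    rw [this]
    exact (hsec x).inter_right hF
  have := measurableSet_proj h1 h2
  convert this using 1
  ext x
  simp only [mem_setOf_eq, mem_inter_iff]
  tauto


namespace SelectorWork

variable {X : Type*} [MeasurableSpace X] [StandardBorelSpace X]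

theorem measurable_mval {C : Set (X × H)} (hC : MeasurableSet C)
    (hsec : ∀ x, IsCompact {f : H | (x, f) ∈ C}) (k : ℕ) :
    Measurable (fun x => sInf ((fun f : H => (f k : ℝ)) '' {f : H | (x, f) ∈ C})) := by
  set m : X → ℝ := fun x => sInf ((fun f : H => (f k : ℝ)) '' {f : H | (x, f) ∈ C}) with hm
  have hevalc : Continuous (fun f : H => (f k : ℝ)) :=
    continuous_subtype_val.comp (continuous_apply k)
  have hD : MeasurableSet {x | ∃ f : H, (x, f) ∈ C} := measurableSet_proj hC hsec
  apply measurable_of_Iic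
  intro a
  have key : m ⁻¹' Set.Iic a = {x | ∃ f ∈ {f : H | (f k : ℝ) ≤ a}, (x, f) ∈ C} ∪
      ({x | ∃ f : H, (x, f) ∈ C}ᶜ ∩ {x : X | (0:ℝ) ≤ a}) := by
    ext x
    simp only [Set.mem_preimage, Set.mem_Iic, Set.mem_union, Set.mem_inter_iff,
      Set.mem_compl_iff, Set.mem_setOf_eq]
    by_cases hx : ∃ f : H, (x, f) ∈ C
    · obtain ⟨f0, hf0⟩ := hx
      have hne : ({f : H | (x, f) ∈ C}).Nonempty := ⟨f0, hf0⟩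
      have himc : IsCompact ((fun f : H => (f k : ℝ)) '' {f : H | (x, f) ∈ C}) :=
        (hsec x).image hevalc
      have himne : ((fun f : H => (f k : ℝ)) '' {f : H | (x, f) ∈ C}).Nonempty :=
        hne.image _
      have hbdd : BddBelow ((fun f : H => (f k : ℝ)) '' {f : H | (x, f) ∈ C}) := by
        refine ⟨-1, ?_⟩
        rintro v ⟨f, -, rfl⟩
        exact (f k).2.1
      constructor
      · intro hma
        obtain ⟨f, hf, hfk⟩ := himc.sInf_mem himne
        refine Or.inl ⟨f, ?_, hf⟩
        show (f k : ℝ) ≤ a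
        have heq : (f k : ℝ) = sInf ((fun f : H => (f k : ℝ)) '' {f : H | (x, f) ∈ C}) := hfk
        rw [heq]
        exact hma
      · rintro (⟨f, hfk, hf⟩ | ⟨hcon, -⟩)
        · exact le_trans (csInf_le hbdd ⟨f, hf, rfl⟩) hfk
        · exact absurd ⟨f0, hf0⟩ hcon
    · have hemp : {f : H | (x, f) ∈ C} = ∅ := by
        rw [Set.eq_empty_iff_forall_notMem]
        intro f hf
        exact hx ⟨f, hf⟩
      have : m x = 0 := by rw [hm]; simp [hemp]
      rw [this]
      constructor
      · intro h0
        exact Or.inr ⟨hx, h0⟩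
      · rintro (⟨f, -, hf⟩ | ⟨-, h0⟩)
        · exact absurd ⟨f, hf⟩ hx
        · exact h0
  rw [key]
  apply MeasurableSet.union
  · apply measurableSet_hit hC hsec
    exact IsClosed.preimage hevalc isClosed_Iic
  · apply hD.compl.inter
    by_cases ha : (0:ℝ) ≤ a
    · have : {x : X | (0:ℝ) ≤ a} = Set.univ := by ext x; simpa using ha
      rw [this]; exact MeasurableSet.univ
    · have : {x : X | (0:ℝ) ≤ a} = ∅ := by ext x; simpa using ha
      rw [this]; exact MeasurableSet.empty

theorem exists_selector {C : Set (X × H)} (hC : MeasurableSet C)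
    (hsec : ∀ x, IsCompact {f : H | (x, f) ∈ C}) :
    ∃ s : X → H, Measurable s ∧ ∀ x, {f : H | (x, f) ∈ C}.Nonempty → (x, s x) ∈ C := by
  have hevalc : ∀ k : ℕ, Continuous (fun f : H => (f k : ℝ)) :=
    fun k => continuous_subtype_val.comp (continuous_apply k)
  set mv : ℕ → Set (X × H) → X → ℝ :=
    fun k D x => sInf ((fun f : H => (f k : ℝ)) '' {f : H | (x, f) ∈ D}) with hmv
  set CC : ℕ → Set (X × H) :=
    fun k => Nat.rec C (fun k D => D ∩ {p : X × H | (p.2 k : ℝ) = mv k D p.1}) k with hCC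
  have hCCsucc : ∀ k, CC (k + 1) = CC k ∩ {p : X × H | (p.2 k : ℝ) = mv k (CC k) p.1} :=
    fun k => rfl
  have hCC0 : CC 0 = C := rfl
  -- invariants
  have hind : ∀ k, MeasurableSet (CC k) ∧ (∀ x, IsCompact {f : H | (x, f) ∈ CC k}) ∧
      (∀ x, {f : H | (x, f) ∈ C}.Nonempty → {f : H | (x, f) ∈ CC k}.Nonempty) := by
    intro k
    induction k with
    | zero => exact ⟨hC, hsec, fun x h => h⟩
    | succ k ih =>
      obtain ⟨h1, h2, h3⟩ := ih
      have hmvm : Measurable (mv k (CC k)) := measurable_mval h1 h2 k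
      refine ⟨?_, ?_, ?_⟩
      · rw [hCCsucc k]
        apply h1.inter
        apply measurableSet_eq_fun
        · exact (measurable_subtype_coe.comp ((measurable_pi_apply k).comp measurable_snd))
        · exact hmvm.comp measurable_fst
      · intro x
        have : {f : H | (x, f) ∈ CC (k+1)} =
            {f : H | (x, f) ∈ CC k} ∩ {f : H | (f k : ℝ) = mv k (CC k) x} := by
          rw [hCCsucc k]; rfl
        rw [this]
        exact (h2 x).inter_right (isClosed_eq (hevalc k) continuous_const)
      · intro x hx
        obtain ⟨f0, hf0⟩ := h3 x hx
        have himc : IsCompact ((fun f : H => (f k : ℝ)) '' {f : H | (x, f) ∈ CC k}) :=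
          (h2 x).image (hevalc k)
        obtain ⟨f, hf, hfk⟩ := himc.sInf_mem (Set.Nonempty.image _ ⟨f0, hf0⟩)
        refine ⟨f, ?_⟩
        rw [hCCsucc k]
        exact ⟨hf, hfk⟩
  -- the selector
  set m : ℕ → X → ℝ := fun k => mv k (CC k) with hm
  have hmmeas : ∀ k, Measurable (m k) := fun k =>
    measurable_mval (hind k).1 (hind k).2.1 k
  set s : X → H := fun x k => ⟨max (-1) (min 1 (m k x)),
    ⟨le_max_left _ _, max_le (by norm_num) (min_le_left _ _)⟩⟩ with hs
  refine ⟨s, ?_, ?_⟩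
  · refine measurable_pi_lambda _ fun k => ?_
    apply Measurable.subtype_mk
    exact measurable_const.max (measurable_const.min (hmmeas k))
  · intro x hx
    have hnest : ∀ k, {f : H | (x, f) ∈ CC (k+1)} ⊆ {f : H | (x, f) ∈ CC k} := by
      intro k f hf
      rw [hCCsucc k] at hf
      exact hf.1
    have hnonempty : ∀ k, {f : H | (x, f) ∈ CC k}.Nonempty := fun k => (hind k).2.2 x hx
    have hcap : (⋂ k, {f : H | (x, f) ∈ CC k}).Nonempty := by
      apply IsCompact.nonempty_iInter_of_sequence_nonempty_isCompact_isClosed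
        _ hnest hnonempty ((hind 0).2.1 x)
      intro k
      exact ((hind k).2.1 x).isClosed
    obtain ⟨f, hf⟩ := hcap
    have hfk : ∀ k, (f k : ℝ) = m k x := by
      intro k
      have := Set.mem_iInter.1 hf (k+1)
      rw [Set.mem_setOf_eq, hCCsucc k] at this
      exact this.2
    have hsf : s x = f := by
      funext k
      apply Subtype.ext
      rw [hs]
      have h1 : m k x ≤ 1 := by rw [← hfk k]; exact (f k).2.2
      have h2 : (-1 : ℝ) ≤ m k x := by rw [← hfk k]; exact (f k).2.1
      simp only [min_eq_right h1, max_eq_right h2]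
      exact (hfk k).symm
    rw [hsf]
    have := Set.mem_iInter.1 hf 0
    exact this

end SelectorWork


namespace NormWork

open Set

theorem coord_le_two (f g : H) (n : ℕ) : |(f n : ℝ) - (g n : ℝ)| ≤ 2 := by
  have h1 := (f n).2.1; have h2 := (f n).2.2
  have h3 := (g n).2.1; have h4 := (g n).2.2
  rw [abs_sub_le_iff]
  constructor <;> linarith

theorem bdd (f g : H) : BddAbove (range fun n => |(f n : ℝ) - (g n : ℝ)|) :=
  ⟨2, by rintro v ⟨n, rfl⟩; exact coord_le_two f g n⟩

theorem coord_le_normDist (f g : H) (n : ℕ) : |(f n : ℝ) - (g n : ℝ)| ≤ normDist f g :=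
  le_ciSup (bdd f g) n

theorem normDist_le_iff {f g : H} {r : ℝ} (hr : 0 ≤ r) :
    normDist f g ≤ r ↔ ∀ n, |(f n : ℝ) - (g n : ℝ)| ≤ r := by
  constructor
  · intro h n
    exact le_trans (coord_le_normDist f g n) h
  · intro h
    exact ciSup_le h

theorem normDist_nonneg (f g : H) : 0 ≤ normDist f g :=
  le_trans (abs_nonneg _) (coord_le_normDist f g 0)

theorem normDist_symm (f g : H) : normDist f g = normDist g f := by
  unfold normDist
  congr 1
  funext n
  exact abs_sub_comm _ _

theorem normDist_triangle (f g h : H) : normDist f h ≤ normDist f g + normDist g h := by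
  apply ciSup_le
  intro n
  calc |(f n : ℝ) - (h n : ℝ)| ≤ |(f n : ℝ) - (g n : ℝ)| + |(g n : ℝ) - (h n : ℝ)| :=
        abs_sub_le _ _ _
    _ ≤ normDist f g + normDist g h :=
        add_le_add (coord_le_normDist f g n) (coord_le_normDist g h n)

theorem normDist_le_two (f g : H) : normDist f g ≤ 2 :=
  ciSup_le (coord_le_two f g)

theorem normDist_le_normDiam {S : Set H} {f g : H} (hf : f ∈ S) (hg : g ∈ S) :
    normDist f g ≤ normDiam S := by
  apply le_csSup
  · refine ⟨2, ?_⟩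
    rintro d ⟨f', -, g', -, rfl⟩
    exact normDist_le_two f' g'
  · exact ⟨f, hf, g, hg, rfl⟩

theorem normDiam_le {S : Set H} {r : ℝ} (hr : 0 ≤ r)
    (h : ∀ f ∈ S, ∀ g ∈ S, normDist f g ≤ r) : normDiam S ≤ r := by
  apply Real.sSup_le _ hr
  rintro d ⟨f, hf, g, hg, rfl⟩
  exact h f hf g hg

theorem normDiam_nonneg (S : Set H) : 0 ≤ normDiam S := by
  rcases eq_empty_or_nonempty S with h | ⟨f, hf⟩
  · unfold normDiam
    rw [h]
    simp [Real.sSup_empty]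
  · exact le_trans (normDist_nonneg f f) (normDist_le_normDiam hf hf)

theorem normDiam_mono {S T : Set H} (h : S ⊆ T) : normDiam S ≤ normDiam T := by
  apply Real.sSup_le _ (normDiam_nonneg T)
  rintro d ⟨f, hf, g, hg, rfl⟩
  exact normDist_le_normDiam (h hf) (h hg)

theorem isClosed_normDist_le (g : H) {r : ℝ} (hr : 0 ≤ r) :
    IsClosed {f : H | normDist f g ≤ r} := by
  have : {f : H | normDist f g ≤ r} = ⋂ n, {f : H | |(f n : ℝ) - (g n : ℝ)| ≤ r} := by
    ext f
    simp only [mem_setOf_eq, mem_iInter]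
    exact normDist_le_iff hr
  rw [this]
  refine isClosed_iInter fun n => ?_
  have hc : Continuous fun f : H => |(f n : ℝ) - (g n : ℝ)| := by
    apply Continuous.abs
    exact (continuous_subtype_val.comp (continuous_apply n)).sub continuous_const
  exact isClosed_le hc continuous_const

theorem normSeparable_subset {S T : Set H} (hS : NormSeparable S) (hT : T ⊆ S) :
    NormSeparable T := by
  obtain ⟨D, hDc, hDS, hdense⟩ := hS
  classical
  set R : H → ℕ → Set H := fun g k => {h : H | h ∈ T ∧ normDist g h < 1 / (k + 1)} with hR
  set pick : H → ℕ → Set H := fun g k => if hn : (R g k).Nonempty then {hn.some} else ∅ with hpick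
  refine ⟨⋃ g ∈ D, ⋃ k : ℕ, pick g k, ?_, ?_, ?_⟩
  · refine Countable.biUnion hDc fun g _ => countable_iUnion fun k => ?_
    simp only [hpick]
    by_cases hn : (R g k).Nonempty
    · rw [dif_pos hn]; exact countable_singleton _
    · rw [dif_neg hn]; exact countable_empty
  · rintro h hh
    simp only [mem_iUnion] at hh
    obtain ⟨g, -, k, hk⟩ := hh
    simp only [hpick] at hk
    by_cases hn : (R g k).Nonempty
    · rw [dif_pos hn] at hk
      rw [mem_singleton_iff] at hk
      subst hk
      exact hn.some_mem.1
    · rw [dif_neg hn] at hk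
      exact absurd hk (notMem_empty h)
  · intro f hf δ hδ
    obtain ⟨k, hk⟩ : ∃ k : ℕ, 1 / ((k : ℝ) + 1) < δ / 2 := exists_nat_one_div_lt (by linarith)
    obtain ⟨g, hg, hgf⟩ := hdense f (hT hf) (1 / ((k : ℝ) + 1)) (by positivity)
    have hRne : (R g k).Nonempty := ⟨f, hf, by rwa [normDist_symm]⟩
    refine ⟨hRne.some, ?_, ?_⟩
    · simp only [mem_iUnion]
      refine ⟨g, hg, k, ?_⟩
      simp only [hpick]
      rw [dif_pos hRne]
      exact mem_singleton _
    · have h1 := hRne.some_mem.2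
      calc normDist f hRne.some ≤ normDist f g + normDist g hRne.some := normDist_triangle _ _ _
        _ < 1 / ((k : ℝ) + 1) + 1 / ((k : ℝ) + 1) := add_lt_add hgf h1
        _ < δ / 2 + δ / 2 := add_lt_add hk hk
        _ = δ := by ring

/-- The Baire category lemma: a nonempty compact norm-separable set has a relatively open
piece of small norm diameter. -/
theorem exists_open_small_diam {K : Set H} (hK : IsCompact K) (hKne : K.Nonempty)
    (hsep : NormSeparable K) {ε : ℝ} (hε : 0 < ε) :
    ∃ U : Set H, IsOpen U ∧ (K ∩ U).Nonempty ∧ normDiam (K ∩ U) ≤ ε := by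
  obtain ⟨D, hDc, hDK, hdense⟩ := hsep
  have hDne : D.Nonempty := by
    obtain ⟨f, hf⟩ := hKne
    obtain ⟨g, hg, -⟩ := hdense f hf 1 one_pos
    exact ⟨g, hg⟩
  haveI : CompactSpace K := isCompact_iff_compactSpace.1 hK
  haveI : Nonempty K := hKne.to_subtype
  haveI : Countable D := hDc.to_subtype
  set cl : D → Set K := fun g => Subtype.val ⁻¹' {f : H | normDist f (g : H) ≤ ε / 2} with hcl
  have hclosed : ∀ g : D, IsClosed (cl g) :=
    fun g => (isClosed_normDist_le (g : H) (by linarith)).preimage continuous_subtype_val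
  have hcover : ⋃ g : D, cl g = univ := by
    rw [eq_univ_iff_forall]
    intro y
    obtain ⟨g, hg, hgy⟩ := hdense (y : H) y.2 (ε / 2) (by linarith)
    rw [mem_iUnion]
    refine ⟨⟨g, hg⟩, ?_⟩
    simp only [hcl, mem_preimage, mem_setOf_eq]
    exact le_of_lt hgy
  obtain ⟨g, hgint⟩ := nonempty_interior_of_iUnion_of_closed hclosed hcover
  obtain ⟨y₀, hy₀⟩ := hgint
  obtain ⟨U, hUopen, hUeq⟩ := isOpen_induced_iff.1 (isOpen_interior : IsOpen (interior (cl g)))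
  refine ⟨U, hUopen, ⟨y₀, y₀.2, ?_⟩, ?_⟩
  · have : y₀ ∈ Subtype.val ⁻¹' U := by rw [hUeq]; exact hy₀
    exact this
  · have hsub : K ∩ U ⊆ {f : H | normDist f (g : H) ≤ ε / 2} := by
      rintro z ⟨hzK, hzU⟩
      have : (⟨z, hzK⟩ : K) ∈ Subtype.val ⁻¹' U := hzU
      rw [hUeq] at this
      have h2 : (⟨z, hzK⟩ : K) ∈ cl g := interior_subset this
      simpa only [hcl, mem_preimage, mem_setOf_eq] using h2
    apply normDiam_le (le_of_lt hε)
    intro f hf f' hf'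
    calc normDist f f' ≤ normDist f (g : H) + normDist (g : H) f' := normDist_triangle _ _ _
      _ ≤ ε / 2 + ε / 2 := by
          refine add_le_add (hsub hf) ?_
          rw [normDist_symm]
          exact hsub hf'
      _ = ε := by ring

end NormWork

open NormWork SelectorWork


/-- **Lemma 6.** Let `Z` be standard Borel, `A ⊆ Z × H` Borel with nonempty compact norm
separable sections, `ε > 0`, and `Ã ⊆ A` Borel with compact (possibly empty) sections.
Then there is a sequence of Borel selectors `(f_n)` of `A` such that whenever `Ã_z ≠ ∅`,
the set `{f_n(z) : f_n(z) ∈ Ã_z \ 𝔻_ε(Ã_z)}` is nonempty and norm `ε`-dense in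
`Ã_z \ 𝔻_ε(Ã_z)`. -/
theorem exists_selectors_epsDense (Z : Type) [MeasurableSpace Z] [StandardBorelSpace Z]
    (A : Set (Z × H)) (hA : MeasurableSet A)
    (hne : ∀ z : Z, {f : H | (z, f) ∈ A}.Nonempty)
    (hcpt : ∀ z : Z, IsCompact {f : H | (z, f) ∈ A})
    (hsep : ∀ z : Z, NormSeparable {f : H | (z, f) ∈ A})
    (ε : ℝ) (hε : 0 < ε)
    (At : Set (Z × H)) (hAt : MeasurableSet At) (hsub : At ⊆ A)
    (hAtcpt : ∀ z : Z, IsCompact {f : H | (z, f) ∈ At}) :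
    ∃ f : ℕ → Z → H, (∀ n, Measurable (f n)) ∧
      (∀ n z, (z, f n z) ∈ A) ∧
      ∀ z : Z, {g : H | (z, g) ∈ At}.Nonempty →
        (∃ n, f n z ∈ {g : H | (z, g) ∈ At} \ Dstar ε {g : H | (z, g) ∈ At}) ∧
        ∀ g ∈ {g : H | (z, g) ∈ At} \ Dstar ε {g : H | (z, g) ∈ At},
          ∃ n, f n z ∈ {g : H | (z, g) ∈ At} \ Dstar ε {g : H | (z, g) ∈ At} ∧
            normDist (f n z) g ≤ ε := by
  classical
  -- a countable basis of H
  obtain ⟨V, hV⟩ : ∃ V : ℕ → Set H, insert ∅ (TopologicalSpace.countableBasis H) = range V :=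
    ((TopologicalSpace.countable_countableBasis H).insert ∅).exists_eq_range
      (insert_nonempty _ _)
  have hVopen : ∀ m, IsOpen (V m) := by
    intro m
    have : V m ∈ insert ∅ (TopologicalSpace.countableBasis H) := by
      rw [hV]; exact mem_range_self m
    rw [mem_insert_iff] at this
    rcases this with h | h
    · rw [h]; exact isOpen_empty
    · exact (TopologicalSpace.isBasis_countableBasis H).isOpen h
  have hVbasic : ∀ (g : H) (U : Set H), IsOpen U → g ∈ U → ∃ m, g ∈ V m ∧ V m ⊆ U := by
    intro g U hU hg
    obtain ⟨W, hWb, hgW, hWU⟩ :=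
      (TopologicalSpace.isBasis_countableBasis H).exists_subset_of_mem_open hg hU
    have : W ∈ range V := by rw [← hV]; exact mem_insert_of_mem _ hWb
    obtain ⟨m, rfl⟩ := this
    exact ⟨m, hgW, hWU⟩
  -- a compatible metric on H
  letI : MetricSpace H := TopologicalSpace.metrizableSpaceMetric H
  -- closed approximations of basis elements
  set F : ℕ → ℕ → Set H := fun m j => {f : H | ∀ g ∈ (V m)ᶜ, 1 / ((j : ℝ) + 1) ≤ dist f g}
    with hF
  have hFclosed : ∀ m j, IsClosed (F m j) := by
    intro m j
    have : F m j = ⋂ g ∈ (V m)ᶜ, {f : H | 1 / ((j : ℝ) + 1) ≤ dist f g} := by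
      ext f; simp [hF]
    rw [this]
    refine isClosed_biInter fun g _ => ?_
    exact isClosed_le continuous_const (continuous_id.dist continuous_const)
  have hFsubV : ∀ m j, F m j ⊆ V m := by
    intro m j f hf
    by_contra hc
    have h1 := hf f hc
    rw [dist_self] at h1
    have h2 : (0:ℝ) < 1 / ((j : ℝ) + 1) := by positivity
    linarith
  have hFcover : ∀ m (f : H), f ∈ V m → ∃ j, f ∈ F m j := by
    intro m f hf
    obtain ⟨r, hr, hball⟩ := Metric.isOpen_iff.1 (hVopen m) f hf
    obtain ⟨j, hj⟩ := exists_nat_one_div_lt hr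
    refine ⟨j, fun g hg => ?_⟩
    by_contra hlt
    push_neg at hlt
    apply hg
    apply hball
    rw [Metric.mem_ball, dist_comm]
    exact lt_trans hlt hj
  have hFmono : ∀ m {j j'}, j ≤ j' → F m j ⊆ F m j' := by
    intro m j j' hjj' f hf g hg
    refine le_trans ?_ (hf g hg)
    apply one_div_le_one_div_of_le
    · positivity
    · have : (j : ℝ) ≤ (j' : ℝ) := Nat.cast_le.2 hjj'
      linarith
  -- the diameter criterion
  have hdiam_iff : ∀ S : Set H, normDiam S ≤ ε ↔
      ∀ f ∈ S, ∀ g ∈ S, ∀ i : ℕ, |(f i : ℝ) - (g i : ℝ)| ≤ ε := by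
    intro S
    constructor
    · intro h f hf g hg i
      exact le_trans (coord_le_normDist f g i) (le_trans (normDist_le_normDiam hf hg) h)
    · intro h
      exact normDiam_le hε.le fun f hf g hg => ciSup_le fun i => h f hf g hg i
  -- the "small diameter" sets
  set G : ℕ → Set Z := fun m => {z | normDiam ({f : H | (z, f) ∈ At} ∩ V m) ≤ ε} with hG
  have hGmeas : ∀ m, MeasurableSet (G m) := by
    intro m
    set Q : ℕ → ℕ → ℕ → Set (Z × (H × H)) := fun j i r =>
      {p | (p.1, p.2.1) ∈ At ∧ (p.1, p.2.2) ∈ At ∧ p.2.1 ∈ F m j ∧ p.2.2 ∈ F m j ∧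
        ε + 1 / ((r : ℝ) + 1) ≤ |(p.2.1 i : ℝ) - (p.2.2 i : ℝ)|} with hQ
    have hQmeas : ∀ j i r, MeasurableSet (Q j i r) := by
      intro j i r
      have m1 : Measurable fun p : Z × (H × H) => (p.1, p.2.1) :=
        measurable_fst.prodMk (measurable_fst.comp measurable_snd)
      have m2 : Measurable fun p : Z × (H × H) => (p.1, p.2.2) :=
        measurable_fst.prodMk (measurable_snd.comp measurable_snd)
      have m3 : Measurable fun p : Z × (H × H) => p.2.1 := measurable_fst.comp measurable_snd
      have m4 : Measurable fun p : Z × (H × H) => p.2.2 := measurable_snd.comp measurable_snd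
      have m5 : Measurable fun p : Z × (H × H) => |(p.2.1 i : ℝ) - (p.2.2 i : ℝ)| := by
        apply Measurable.abs
        apply Measurable.sub
        · exact measurable_subtype_coe.comp ((measurable_pi_apply i).comp m3)
        · exact measurable_subtype_coe.comp ((measurable_pi_apply i).comp m4)
      refine ((m1 hAt).inter ((m2 hAt).inter ((m3 (hFclosed m j).measurableSet).inter
        ((m4 (hFclosed m j).measurableSet).inter
          (m5 (measurableSet_Ici (a := ε + 1 / ((r : ℝ) + 1)))))))).congr ?_
      ext p
      simp only [hQ, mem_inter_iff, mem_preimage, mem_setOf_eq, mem_Ici]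
      try tauto
    have hQsec : ∀ j i r (z : Z), IsCompact {w : H × H | (z, w) ∈ Q j i r} := by
      intro j i r z
      have heq : {w : H × H | (z, w) ∈ Q j i r} =
          (({f : H | (z, f) ∈ At} ∩ F m j) ×ˢ ({f : H | (z, f) ∈ At} ∩ F m j)) ∩
            {w : H × H | ε + 1 / ((r : ℝ) + 1) ≤ |(w.1 i : ℝ) - (w.2 i : ℝ)|} := by
        ext w
        simp only [hQ, mem_setOf_eq, mem_inter_iff, mem_prod]
        tauto
      rw [heq]
      apply IsCompact.inter_right
      · exact ((hAtcpt z).inter_right (hFclosed m j)).prod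
          ((hAtcpt z).inter_right (hFclosed m j))
      · apply isClosed_le continuous_const
        apply Continuous.abs
        apply Continuous.sub
        · exact continuous_subtype_val.comp ((continuous_apply i).comp continuous_fst)
        · exact continuous_subtype_val.comp ((continuous_apply i).comp continuous_snd)
    have hGeq : G m = (⋃ j, ⋃ i, ⋃ r, {z | ∃ w : H × H, (z, w) ∈ Q j i r})ᶜ := by
      ext z
      constructor
      · intro hd hc
        simp only [mem_iUnion, mem_setOf_eq] at hc
        obtain ⟨j, i, r, w, h1, h2, h3, h4, h5⟩ := hc
        have hb := (hdiam_iff _).1 hd w.1 ⟨h1, hFsubV m j h3⟩ w.2 ⟨h2, hFsubV m j h4⟩ i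
        have hp : (0:ℝ) < 1 / ((r : ℝ) + 1) := by positivity
        linarith
      · intro hz
        rw [mem_compl_iff] at hz
        show normDiam _ ≤ ε
        apply (hdiam_iff _).2
        rintro f ⟨hfT, hfV⟩ g ⟨hgT, hgV⟩ i
        by_contra hc
        push_neg at hc
        obtain ⟨r, hr⟩ := exists_nat_one_div_lt (show (0:ℝ) < |(f i : ℝ) - (g i : ℝ)| - ε by
          linarith)
        obtain ⟨jf, hjf⟩ := hFcover m f hfV
        obtain ⟨jg, hjg⟩ := hFcover m g hgV
        apply hz
        simp only [mem_iUnion, mem_setOf_eq]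
        exact ⟨max jf jg, i, r, (f, g), hfT, hgT, hFmono m (le_max_left _ _) hjf,
          hFmono m (le_max_right _ _) hjg, by linarith⟩
    rw [hGeq]
    refine (MeasurableSet.iUnion fun j => MeasurableSet.iUnion fun i =>
      MeasurableSet.iUnion fun r => ?_).compl
    exact measurableSet_proj (hQmeas j i r) (hQsec j i r)
  -- the nonemptiness sets
  set D' : ℕ → ℕ → Set Z := fun m j => {z | ∃ f ∈ F m j, (z, f) ∈ At} with hD'
  have hD'meas : ∀ m j, MeasurableSet (D' m j) :=
    fun m j => measurableSet_hit hAt hAtcpt (hFclosed m j)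
  -- the selectors
  obtain ⟨s0, hs0m, hs0⟩ := exists_selector hA hcpt
  have hsel : ∀ m j, ∃ s : Z → H, Measurable s ∧
      ∀ z, {f : H | (z, f) ∈ At ∩ {p : Z × H | p.2 ∈ F m j}}.Nonempty →
        (z, s z) ∈ At ∩ {p : Z × H | p.2 ∈ F m j} := by
    intro m j
    apply exists_selector
    · exact hAt.inter (measurable_snd (hFclosed m j).measurableSet)
    · intro z
      have heq : {f : H | (z, f) ∈ At ∩ {p : Z × H | p.2 ∈ F m j}} =
          {f : H | (z, f) ∈ At} ∩ F m j := rfl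
      rw [heq]
      exact (hAtcpt z).inter_right (hFclosed m j)
  choose sF hsFm hsF using hsel
  -- the sequence
  set fseq : ℕ → Z → H := fun n z =>
    if z ∈ D' (Nat.unpair n).1 (Nat.unpair n).2 ∩ G (Nat.unpair n).1 then
      sF (Nat.unpair n).1 (Nat.unpair n).2 z
    else s0 z with hfseq
  have hmemA : ∀ n z, (z, fseq n z) ∈ A := by
    intro n z
    rw [hfseq]
    dsimp only
    by_cases hz : z ∈ D' (Nat.unpair n).1 (Nat.unpair n).2 ∩ G (Nat.unpair n).1
    · rw [if_pos hz]
      obtain ⟨g, hgF, hgAt⟩ := hz.1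
      have := hsF (Nat.unpair n).1 (Nat.unpair n).2 z ⟨g, hgAt, hgF⟩
      exact hsub this.1
    · rw [if_neg hz]
      exact hs0 z (hne z)
  -- the key step
  have hkey : ∀ (z : Z) (g : H), (z, g) ∈ At →
      (∃ U : Set H, IsOpen U ∧ g ∈ U ∧ normDiam ({f : H | (z, f) ∈ At} ∩ U) ≤ ε) →
      ∃ n, fseq n z ∈ {f : H | (z, f) ∈ At} \ Dstar ε {f : H | (z, f) ∈ At} ∧
        normDist (fseq n z) g ≤ ε := by
    intro z g hgAt ⟨U, hUopen, hgU, hUdiam⟩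
    obtain ⟨m, hgV, hVU⟩ := hVbasic g U hUopen hgU
    have hzG : z ∈ G m := by
      rw [hG]
      exact le_trans (normDiam_mono (inter_subset_inter_right _ hVU)) hUdiam
    obtain ⟨j, hgF⟩ := hFcover m g hgV
    have hzD : z ∈ D' m j := ⟨g, hgF, hgAt⟩
    refine ⟨Nat.pair m j, ?_⟩
    have hfeq : fseq (Nat.pair m j) z = sF m j z := by
      rw [hfseq]
      dsimp only
      rw [Nat.unpair_pair]
      exact if_pos ⟨hzD, hzG⟩
    set h := sF m j z with hh
    have hhC := hsF m j z ⟨g, hgAt, hgF⟩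
    have hhAt : (z, h) ∈ At := hhC.1
    have hhF : h ∈ F m j := hhC.2
    have hhV : h ∈ V m := hFsubV m j hhF
    rw [hfeq]
    refine ⟨⟨hhAt, ?_⟩, ?_⟩
    · rintro ⟨-, hall⟩
      have := hall (V m) (hVopen m) hhV
      rw [hG] at hzG
      exact absurd hzG (not_le.2 this)
    · exact le_trans (normDist_le_normDiam (show h ∈ _ ∩ V m from ⟨hhAt, hhV⟩)
        (show g ∈ _ ∩ V m from ⟨hgAt, hgV⟩)) hzG
  refine ⟨fseq, ?_, hmemA, ?_⟩
  · intro n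
    rw [hfseq]
    exact Measurable.ite ((hD'meas _ _).inter (hGmeas _)) (hsFm _ _) hs0m
  · intro z hzT
    have hTsub : {f : H | (z, f) ∈ At} ⊆ {f : H | (z, f) ∈ A} := fun f hf => hsub hf
    constructor
    · obtain ⟨U, hUopen, ⟨g, hgT, hgU⟩, hUdiam⟩ :=
        exists_open_small_diam (hAtcpt z) hzT (normSeparable_subset (hsep z) hTsub) hε
      obtain ⟨n, hn, -⟩ := hkey z g hgT ⟨U, hUopen, hgU, hUdiam⟩
      exact ⟨n, hn⟩
    · rintro g ⟨hgT, hgD⟩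
      have : ∃ U : Set H, IsOpen U ∧ g ∈ U ∧
          ¬ ε < normDiam ({f : H | (z, f) ∈ At} ∩ U) := by
        by_contra hc
        push_neg at hc
        exact hgD ⟨hgT, fun U hU hgU => hc U hU hgU⟩
      obtain ⟨U, hUopen, hgU, hUd⟩ := this
      exact hkey z g hgT ⟨U, hUopen, hgU, not_lt.1 hUd⟩
end
end

section
/- Let K ⊆ H be a nonempty compact set that is norm separable, and let ε > 0. Then: (1) for every countable ordinal ξ, if 𝔻_ε^{(ξ)}(K) is nonempty then 𝔻_ε^{(ξ+1)}(K) is a proper subset of 𝔻_ε^{(ξ)}(K); and (2) there exists a countable ordinal ξ such that 𝔻_ε^{(ξ)}(K) = ∅. -/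
noncomputable section

/-- Transfinite iterates of a derivation on sets: `D^{(0)}(K) = K`,
`D^{(ξ+1)}(K) = D(D^{(ξ)}(K))`, and intersections at limit stages. -/
noncomputable def derivIter {α : Type*} (D : Set α → Set α) (K : Set α) (o : Ordinal) :
    Set α :=
  Ordinal.limitRecOn o K (fun _ ih => D ih) (fun o _ ih => ⋂ (ζ : Ordinal) (h : ζ < o), ih ζ h)

/-! ### auxiliary lemmas -/

lemma my_normDist_coord_le (f g : H) (n : ℕ) : |(f n : ℝ) - g n| ≤ 2 := by
  have h1 : |(f n : ℝ)| ≤ 1 := abs_le.2 ⟨(f n).2.1, (f n).2.2⟩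
  have h2 : |(g n : ℝ)| ≤ 1 := abs_le.2 ⟨(g n).2.1, (g n).2.2⟩
  calc |(f n : ℝ) - g n| ≤ |(f n : ℝ)| + |(g n : ℝ)| := abs_sub _ _
  _ ≤ 2 := by linarith

lemma my_bddAbove (f g : H) : BddAbove (Set.range fun n => |(f n : ℝ) - g n|) :=
  ⟨2, by rintro x ⟨n, rfl⟩; exact my_normDist_coord_le f g n⟩

lemma my_le_normDist (f g : H) (n : ℕ) : |(f n : ℝ) - g n| ≤ normDist f g :=
  le_ciSup (my_bddAbove f g) n

lemma my_normDist_le (f g : H) {r : ℝ} (hr : 0 ≤ r) (h : ∀ n, |(f n : ℝ) - g n| ≤ r) :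
    normDist f g ≤ r := Real.iSup_le h hr

lemma my_normDiam_le {S : Set H} {r : ℝ} (hr : 0 ≤ r)
    (h : ∀ f ∈ S, ∀ g ∈ S, normDist f g ≤ r) : normDiam S ≤ r := by
  refine Real.sSup_le ?_ hr
  rintro d ⟨f, hf, g, hg, rfl⟩
  exact h f hf g hg

/-- A subset of a norm separable set is norm separable. -/
lemma my_normSeparable_subset {S T : Set H} (hST : S ⊆ T) (hT : NormSeparable T) :
    NormSeparable S := by
  rcases S.eq_empty_or_nonempty with rfl | ⟨f₀, hf₀⟩
  · exact ⟨∅, Set.countable_empty, Set.empty_subset _, by simp⟩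
  obtain ⟨D, hDc, hDT, hDd⟩ := hT
  classical
  let c : H → ℕ → H := fun g n =>
    if h : ∃ f ∈ S, normDist f g < 1 / (n + 1 : ℝ) then h.choose else f₀
  refine ⟨(fun p : H × ℕ => c p.1 p.2) '' (D ×ˢ (Set.univ : Set ℕ)),
    (hDc.prod Set.countable_univ).image _, ?_, ?_⟩
  · rintro x ⟨⟨g, n⟩, _, rfl⟩
    simp only [c]
    split_ifs with h
    · exact h.choose_spec.1
    · exact hf₀
  · intro f hf δ hδ
    obtain ⟨n, hn⟩ := exists_nat_gt (2 / δ)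
    have hnpos : (0:ℝ) < 1 / (n + 1 : ℝ) := by positivity
    obtain ⟨g, hgD, hgd⟩ := hDd f (hST hf) (1 / (n + 1 : ℝ)) hnpos
    have hex : ∃ f' ∈ S, normDist f' g < 1 / (n + 1 : ℝ) := ⟨f, hf, hgd⟩
    refine ⟨c g n, ⟨⟨g, n⟩, ⟨hgD, trivial⟩, rfl⟩, ?_⟩
    have hc : c g n = hex.choose := by simp only [c, dif_pos hex]
    have h1 : normDist hex.choose g < 1 / (n + 1 : ℝ) := hex.choose_spec.2
    rw [hc]
    have hnn : (0:ℝ) ≤ normDist f g + normDist hex.choose g :=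
      add_nonneg (Real.iSup_nonneg fun n => abs_nonneg _) (Real.iSup_nonneg fun n => abs_nonneg _)
    have htri : normDist f hex.choose ≤ normDist f g + normDist hex.choose g := by
      refine my_normDist_le _ _ hnn fun m => ?_
      have := my_le_normDist f g m
      have h2 := my_le_normDist hex.choose g m
      have : |(f m : ℝ) - hex.choose m| ≤ |(f m : ℝ) - g m| + |(hex.choose m : ℝ) - g m| := by
        rw [abs_sub_comm ((hex.choose m : ℝ)) _]
        exact abs_sub_le _ _ _
      calc |(f m : ℝ) - hex.choose m|
          ≤ |(f m : ℝ) - g m| + |(hex.choose m : ℝ) - g m| := this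
        _ ≤ normDist f g + normDist hex.choose g :=
            add_le_add (my_le_normDist f g m) (my_le_normDist hex.choose g m)
    have h2 : 2 / δ < (n : ℝ) := hn
    have hδ2 : 2 / (n + 1 : ℝ) < δ := by
      rw [div_lt_iff₀ (by positivity)]
      rw [div_lt_iff₀ hδ] at h2
      nlinarith
    calc normDist f hex.choose ≤ normDist f g + normDist hex.choose g := htri
      _ < 1 / (n + 1 : ℝ) + 1 / (n + 1 : ℝ) := add_lt_add hgd h1
      _ = 2 / (n + 1 : ℝ) := by ring
      _ < δ := hδ2

/-- Key lemma (Baire category): a nonempty compact norm-separable set has a point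
with a neighbourhood of small norm diameter. -/
lemma my_key {S : Set H} (hne : S.Nonempty) (hcomp : IsCompact S) (hsep : NormSeparable S)
    {ε : ℝ} (hε : 0 < ε) :
    ∃ f ∈ S, ∃ U : Set H, IsOpen U ∧ f ∈ U ∧
      ∀ g ∈ S ∩ U, ∀ h ∈ S ∩ U, normDist g h ≤ 2 * ε / 3 := by
  obtain ⟨D, hDc, hDS, hDd⟩ := hsep
  haveI : CompactSpace S := isCompact_iff_compactSpace.mp hcomp
  haveI : Nonempty S := hne.to_subtype
  haveI := hDc.to_subtype
  set F : D → Set S := fun g =>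
    {x : S | ∀ n, |((x : H) n : ℝ) - ((g : H) n : ℝ)| ≤ ε / 3} with hF
  have hFclosed : ∀ g, IsClosed (F g) := by
    intro g
    have : F g = ⋂ n, (fun x : S => |((x : H) n : ℝ) - ((g : H) n : ℝ)|) ⁻¹' Set.Iic (ε / 3) := by
      ext x; simp [F, Set.mem_iInter]
    rw [this]
    refine isClosed_iInter fun n => IsClosed.preimage ?_ isClosed_Iic
    exact (((continuous_apply n).comp continuous_subtype_val).subtype_val.sub
      continuous_const).abs
  have hFcover : ⋃ g, F g = Set.univ := by
    ext x
    simp only [Set.mem_iUnion, Set.mem_univ, iff_true]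
    obtain ⟨g, hgD, hgd⟩ := hDd x x.2 (ε / 3) (by positivity)
    exact ⟨⟨g, hgD⟩, fun n => (my_le_normDist _ _ n).trans hgd.le⟩
  obtain ⟨g, x, hx⟩ := nonempty_interior_of_iUnion_of_closed hFclosed hFcover
  obtain ⟨t, hts, hto, hxt⟩ := mem_interior.mp hx
  obtain ⟨U, hUopen, hUt⟩ := isOpen_induced_iff.mp hto
  refine ⟨(x : H), x.2, U, hUopen, by rw [← hUt] at hxt; exact hxt, ?_⟩
  have hsub : ∀ h ∈ S ∩ U, ∀ n, |((h : H) n : ℝ) - ((g : H) n : ℝ)| ≤ ε / 3 := by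
    rintro h ⟨hhS, hhU⟩
    have : (⟨h, hhS⟩ : S) ∈ F g := hts (by rw [← hUt]; exact hhU)
    exact this
  intro a ha b hb
  refine my_normDist_le _ _ (by positivity) fun n => ?_
  have h1 := hsub a ha n
  have h2 := hsub b hb n
  calc |(a n : ℝ) - b n| ≤ |(a n : ℝ) - (g : H) n| + |(b n : ℝ) - (g : H) n| := by
        rw [abs_sub_comm ((b n : ℝ)) _]; exact abs_sub_le _ _ _
    _ ≤ ε / 3 + ε / 3 := add_le_add h1 h2
    _ = 2 * ε / 3 := by ring

/-! ### derivIter basics -/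

lemma my_derivIter_zero {α : Type*} (D : Set α → Set α) (K : Set α) :
    derivIter D K 0 = K := Ordinal.limitRecOn_zero _ _ _

lemma my_derivIter_succ {α : Type*} (D : Set α → Set α) (K : Set α) (o : Ordinal) :
    derivIter D K (o + 1) = D (derivIter D K o) := by
  rw [derivIter, Ordinal.add_one_eq_succ, Ordinal.limitRecOn_succ]
  rfl

lemma my_derivIter_limit {α : Type*} (D : Set α → Set α) (K : Set α) {o : Ordinal}
    (ho : Order.IsSuccLimit o) : derivIter D K o = ⋂ (ζ : Ordinal) (_ : ζ < o), derivIter D K ζ := by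
  rw [derivIter, Ordinal.limitRecOn_limit _ _ _ _ ho]
  rfl

lemma my_derivIter_anti {α : Type*} {D : Set α → Set α} (hD : ∀ S, D S ⊆ S) (K : Set α) :
    ∀ ξ ζ : Ordinal, ζ ≤ ξ → derivIter D K ξ ⊆ derivIter D K ζ := by
  intro ξ
  induction ξ using Ordinal.limitRecOn with
  | zero =>
    intro ζ hζ
    rw [nonpos_iff_eq_zero.mp hζ]
  | add_one o ih =>
    intro ζ hζ
    rcases eq_or_lt_of_le hζ with rfl | hlt
    · rfl
    · have hζo : ζ ≤ o := by
        rwa [Ordinal.add_one_eq_succ, Order.lt_succ_iff] at hlt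
      calc derivIter D K (o + 1) = D (derivIter D K o) := my_derivIter_succ D K o
        _ ⊆ derivIter D K o := hD _
        _ ⊆ derivIter D K ζ := ih ζ hζo
  | limit o ho ih =>
    intro ζ hζ
    rcases eq_or_lt_of_le hζ with rfl | hlt
    · rfl
    · rw [my_derivIter_limit D K ho]
      exact fun x hx => Set.mem_iInter₂.mp hx ζ hlt

lemma my_Dstar_subset (ε : ℝ) (S : Set H) : Dstar ε S ⊆ S := fun _ hf => hf.1

lemma my_Dstar_isClosed (ε : ℝ) {S : Set H} (hS : IsClosed S) : IsClosed (Dstar ε S) := by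
  have heq : Dstar ε S = S \ ⋃₀ {U : Set H | IsOpen U ∧ normDiam (S ∩ U) ≤ ε} := by
    ext f
    simp only [Dstar, Set.mem_setOf_eq, Set.mem_diff, Set.mem_sUnion, not_exists]
    constructor
    · rintro ⟨hfS, h⟩
      exact ⟨hfS, fun U hU => absurd (h U hU.1.1 hU.2) (not_lt.mpr hU.1.2)⟩
    · rintro ⟨hfS, h⟩
      refine ⟨hfS, fun U hUo hfU => ?_⟩
      by_contra hle
      exact h U ⟨⟨hUo, not_lt.mp hle⟩, hfU⟩
  rw [heq]
  exact hS.sdiff (isOpen_sUnion fun U hU => hU.1)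

lemma my_derivIter_isClosed (ε : ℝ) {K : Set H} (hK : IsClosed K) (ξ : Ordinal) :
    IsClosed (derivIter (Dstar ε) K ξ) := by
  induction ξ using Ordinal.limitRecOn with
  | zero => rwa [my_derivIter_zero]
  | add_one o ih =>
    rw [my_derivIter_succ]
    exact my_Dstar_isClosed ε ih
  | limit o ho ih =>
    rw [my_derivIter_limit _ _ ho]
    exact isClosed_iInter fun ζ => isClosed_iInter fun hζ => ih ζ hζ

lemma my_derivIter_subset (ε : ℝ) (K : Set H) (ξ : Ordinal) :
    derivIter (Dstar ε) K ξ ⊆ K := by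
  have := my_derivIter_anti (my_Dstar_subset ε) K ξ 0 (zero_le (a := ξ))
  rwa [my_derivIter_zero] at this

/-- For nonempty compact norm separable S, the derived set omits a point of S. -/
lemma my_Dstar_proper {S : Set H} (hne : S.Nonempty) (hcomp : IsCompact S)
    (hsep : NormSeparable S) {ε : ℝ} (hε : 0 < ε) : Dstar ε S ⊂ S := by
  obtain ⟨f, hfS, U, hUo, hfU, hbd⟩ := my_key hne hcomp hsep hε
  refine (Set.ssubset_iff_of_subset (my_Dstar_subset ε S)).mpr ⟨f, hfS, fun hf => ?_⟩
  have h1 : ε < normDiam (S ∩ U) := hf.2 U hUo hfU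
  have h2 : normDiam (S ∩ U) ≤ 2 * ε / 3 := my_normDiam_le (by positivity) hbd
  linarith

/-! ### main theorem -/

/-- For `K ⊆ H` nonempty compact and norm separable and `ε > 0`: (1) as long as the iterated
derivative `𝔻_ε^{(ξ)}(K)` is nonempty, the next iterate is a proper subset; (2) some countable
iterate is empty. -/
theorem derivIter_strictly_decreasing_and_vanishes (K : Set H) (hK : K.Nonempty)
    (hc : IsCompact K) (hsep : NormSeparable K) (ε : ℝ) (hε : 0 < ε) :
    (∀ ξ : Ordinal, ξ.card ≤ Cardinal.aleph0 →
      (derivIter (Dstar ε) K ξ).Nonempty →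
        derivIter (Dstar ε) K (ξ + 1) ⊂ derivIter (Dstar ε) K ξ) ∧
    (∃ ξ : Ordinal, ξ.card ≤ Cardinal.aleph0 ∧ derivIter (Dstar ε) K ξ = ∅) := by
  have hKclosed : IsClosed K := hc.isClosed
  constructor
  · intro ξ _ hne
    rw [my_derivIter_succ]
    exact my_Dstar_proper hne
      (hc.of_isClosed_subset (my_derivIter_isClosed ε hKclosed ξ) (my_derivIter_subset ε K ξ))
      (my_normSeparable_subset (my_derivIter_subset ε K ξ) hsep) hε
  · by_contra hcon
    push_neg at hcon
    have hnon : ∀ ξ : Ordinal, ξ < (Cardinal.aleph 1).ord → (derivIter (Dstar ε) K ξ).Nonempty := by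
      intro ξ hξ
      refine hcon ξ ?_
      rwa [Cardinal.lt_ord, ← Cardinal.succ_aleph0, Order.lt_succ_iff] at hξ
    obtain ⟨B, hBc, -, hBbasis⟩ := TopologicalSpace.exists_countable_basis H
    have hchoice : ∀ ξ : Ordinal, ξ < (Cardinal.aleph 1).ord → ∃ b ∈ B,
        (derivIter (Dstar ε) K ξ ∩ b).Nonempty ∧
        ∀ g ∈ derivIter (Dstar ε) K ξ ∩ b, ∀ h ∈ derivIter (Dstar ε) K ξ ∩ b,
          normDist g h ≤ 2 * ε / 3 := by
      intro ξ hξ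
      obtain ⟨f, hfS, U, hUo, hfU, hbd⟩ := my_key (hnon ξ hξ)
        (hc.of_isClosed_subset (my_derivIter_isClosed ε hKclosed ξ) (my_derivIter_subset ε K ξ))
        (my_normSeparable_subset (my_derivIter_subset ε K ξ) hsep) hε
      obtain ⟨b, hbB, hfb, hbU⟩ := hBbasis.exists_subset_of_mem_open hfU hUo
      exact ⟨b, hbB, ⟨f, hfS, hfb⟩, fun g hg h hh =>
        hbd g ⟨hg.1, hbU hg.2⟩ h ⟨hh.1, hbU hh.2⟩⟩
    choose b hbB hbne hbd using hchoice
    haveI : Countable B := hBc.to_subtype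
    have key : ∀ ζ ξ : Set.Iio ((Cardinal.aleph 1).ord),
        (ζ : Ordinal) < (ξ : Ordinal) → b ζ.1 ζ.2 ≠ b ξ.1 ξ.2 := by
      intro ζ ξ hlt heq
      obtain ⟨f, hfd, hfb⟩ := hbne ξ.1 ξ.2
      have hsucc : (ζ : Ordinal) + 1 ≤ (ξ : Ordinal) := by
        rwa [Ordinal.add_one_eq_succ, Order.succ_le_iff]
      have hmem : f ∈ derivIter (Dstar ε) K ((ζ : Ordinal) + 1) :=
        my_derivIter_anti (my_Dstar_subset ε) K _ _ hsucc hfd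
      rw [my_derivIter_succ] at hmem
      have h1 : ε < normDiam (derivIter (Dstar ε) K ζ ∩ b ξ.1 ξ.2) :=
        hmem.2 (b ξ.1 ξ.2) (hBbasis.isOpen (hbB ξ.1 ξ.2)) hfb
      have h2 : normDiam (derivIter (Dstar ε) K ζ ∩ b ζ.1 ζ.2) ≤ 2 * ε / 3 :=
        my_normDiam_le (by positivity) (hbd ζ.1 ζ.2)
      rw [heq] at h2
      linarith
    have hinj : Function.Injective
        (fun ξ : Set.Iio ((Cardinal.aleph 1).ord) => (⟨b ξ.1 ξ.2, hbB ξ.1 ξ.2⟩ : B)) := by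
      intro ζ ξ h
      simp only [Subtype.mk.injEq] at h
      rcases lt_trichotomy (ζ : Ordinal) (ξ : Ordinal) with hlt | heq | hgt
      · exact absurd h (key ζ ξ hlt)
      · exact Subtype.ext heq
      · exact absurd h.symm (key ξ ζ hgt)
    haveI : Countable (Set.Iio ((Cardinal.aleph 1).ord : Ordinal)) :=
      Function.Injective.countable hinj
    have h1 : Cardinal.mk (Set.Iio ((Cardinal.aleph 1).ord : Ordinal)) ≤ Cardinal.aleph0 :=
      Cardinal.mk_le_aleph0
    rw [Ordinal.mk_Iio_ordinal, Cardinal.card_ord, Cardinal.lift_le_aleph0] at h1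
    exact absurd h1 (not_le.mpr Cardinal.aleph0_lt_aleph_one)
end
end

section
/- Let Z be a standard Borel space, let A ⊆ Z × H be a Borel set such that for every z ∈ Z the section A_z is nonempty, compact, and norm separable, and let ε > 0. Define sets A^ξ ⊆ Z × H for countable ordinals ξ by transfinite recursion: A^0 = A; A^{ξ+1} = { (z,f) : f ∈ 𝔻_ε((A^ξ)_z) }; and A^λ = ⋂_{ζ<λ} A^ζ for limit λ. Then: (1) for every countable ordinal ξ, the set A^ξ is a Borel subset of A and for every z ∈ Z the section (A^ξ)_z is compact, with (A^ξ)_z = 𝔻_ε^{(ξ)}(A_z); and (2) for every (z,f) ∈ A there exists a unique countable ordinal ξ such that (z,f) ∈ A^ξ \ A^{ξ+1}, equivalently f ∈ (A^ξ)_z \ 𝔻_ε((A^ξ)_z). -/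
noncomputable section

/-- The transfinite sequence of sets `A^ξ ⊆ Z × H`: `A^0 = A`,
`A^{ξ+1} = {(z,f) : f ∈ 𝔻_ε((A^ξ)_z)}`, and intersections at limit stages. -/
noncomputable def Aseq {Z : Type} (A : Set (Z × H)) (ε : ℝ) (ξ : Ordinal) : Set (Z × H) :=
  Ordinal.limitRecOn ξ A
    (fun _ ih => {p : Z × H | p.2 ∈ Dstar ε {f : H | (p.1, f) ∈ ih}})
    (fun o _ ih => ⋂ (ζ : Ordinal) (h : ζ < o), ih ζ h)

namespace SzlenkProof
open Set MeasureTheory TopologicalSpace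

/-! ### basic facts about `normDist` and `normDiam` -/

lemma abs_coe_le_one (x : Set.Icc (-1:ℝ) 1) : |(x:ℝ)| ≤ 1 :=
  abs_le.2 ⟨x.2.1, x.2.2⟩

lemma normDist_bdd (f g : H) : BddAbove (range fun n => |(f n : ℝ) - (g n : ℝ)|) := by
  refine ⟨2, ?_⟩
  rintro x ⟨n, rfl⟩
  calc |(f n : ℝ) - g n| ≤ |(f n : ℝ)| + |(g n : ℝ)| := abs_sub _ _
    _ ≤ 1 + 1 := add_le_add (abs_coe_le_one _) (abs_coe_le_one _)
    _ = 2 := by norm_num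

lemma abs_sub_le_normDist (f g : H) (n : ℕ) : |(f n : ℝ) - g n| ≤ normDist f g :=
  le_ciSup (normDist_bdd f g) n

lemma normDist_nonneg (f g : H) : 0 ≤ normDist f g :=
  le_trans (abs_nonneg _) (abs_sub_le_normDist f g 0)

lemma normDist_le_two (f g : H) : normDist f g ≤ 2 := by
  refine ciSup_le fun n => ?_
  calc |(f n : ℝ) - g n| ≤ |(f n : ℝ)| + |(g n : ℝ)| := abs_sub _ _
    _ ≤ 1 + 1 := add_le_add (abs_coe_le_one _) (abs_coe_le_one _)
    _ = 2 := by norm_num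

lemma normDist_le_iff {f g : H} {c : ℝ} :
    normDist f g ≤ c ↔ ∀ n, |(f n : ℝ) - g n| ≤ c :=
  ciSup_le_iff (normDist_bdd f g)

lemma lt_normDist_iff {f g : H} {c : ℝ} :
    c < normDist f g ↔ ∃ n, c < |(f n : ℝ) - g n| :=
  lt_ciSup_iff (normDist_bdd f g)

lemma normDist_comm (f g : H) : normDist f g = normDist g f := by
  unfold normDist
  congr 1; funext n; exact abs_sub_comm _ _

lemma normDist_triangle (f d g : H) : normDist f g ≤ normDist f d + normDist d g := by
  refine ciSup_le fun n => ?_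
  calc |(f n : ℝ) - g n| ≤ |(f n : ℝ) - d n| + |(d n : ℝ) - g n| := abs_sub_le _ _ _
    _ ≤ normDist f d + normDist d g :=
      add_le_add (abs_sub_le_normDist f d n) (abs_sub_le_normDist d g n)

lemma normDiam_le {S : Set H} {c : ℝ} (hc : 0 ≤ c)
    (h : ∀ f ∈ S, ∀ g ∈ S, normDist f g ≤ c) : normDiam S ≤ c := by
  refine Real.sSup_le ?_ hc
  rintro x ⟨f, hf, g, hg, rfl⟩
  exact h f hf g hg

lemma normDist_le_normDiam {S : Set H} {f g : H} (hf : f ∈ S) (hg : g ∈ S) :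
    normDist f g ≤ normDiam S := by
  refine le_csSup ⟨2, ?_⟩ ⟨f, hf, g, hg, rfl⟩
  rintro x ⟨f', _, g', _, rfl⟩
  exact normDist_le_two f' g'

lemma normDiam_nonneg (S : Set H) : 0 ≤ normDiam S := by
  rcases eq_empty_or_nonempty S with rfl | ⟨f, hf⟩
  · have : {d : ℝ | ∃ f ∈ (∅ : Set H), ∃ g ∈ (∅ : Set H), d = normDist f g} = ∅ := by
      ext x; simp
    simp [normDiam, this, Real.sSup_empty]
  · exact le_trans (normDist_nonneg f f) (normDist_le_normDiam hf hf)

lemma normDiam_mono {S T : Set H} (h : S ⊆ T) : normDiam S ≤ normDiam T := by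
  refine Real.sSup_le ?_ (normDiam_nonneg T)
  rintro x ⟨f, hf, g, hg, rfl⟩
  exact normDist_le_normDiam (h hf) (h hg)

lemma lt_normDiam_iff {S : Set H} {ε : ℝ} (hε : 0 ≤ ε) :
    ε < normDiam S ↔ ∃ f ∈ S, ∃ g ∈ S, ε < normDist f g := by
  constructor
  · intro h
    by_contra hc
    push_neg at hc
    exact absurd (normDiam_le hε fun f hf g hg => hc f hf g hg) (not_le.2 h)
  · rintro ⟨f, hf, g, hg, h⟩
    exact lt_of_lt_of_le h (normDist_le_normDiam hf hg)

/-! ### `Dstar` and the countable basis -/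

lemma isClosed_normDist_le (d : H) (c : ℝ) : IsClosed {g : H | normDist g d ≤ c} := by
  have : {g : H | normDist g d ≤ c} = ⋂ n, {g : H | |(g n : ℝ) - d n| ≤ c} := by
    ext g; simp [normDist_le_iff]
  rw [this]
  refine isClosed_iInter fun n => ?_
  have hcont : Continuous fun g : H => |(g n : ℝ) - d n| :=
    (continuous_subtype_val.comp (continuous_apply n)).sub continuous_const |>.abs
  exact isClosed_le hcont continuous_const

/-- the countable basis of `H`, as a type -/
abbrev Bas : Type := ↥(countableBasis H)

instance : Countable Bas := (countable_countableBasis H).to_subtype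

lemma Bas_isOpen (V : Bas) : IsOpen (V : Set H) := isOpen_of_mem_countableBasis V.2

lemma exists_basis_mem_subset {U : Set H} (hU : IsOpen U) {f : H} (hf : f ∈ U) :
    ∃ V : Bas, f ∈ (V : Set H) ∧ (V : Set H) ⊆ U := by
  obtain ⟨V, hV, hfV, hVU⟩ :=
    (isBasis_countableBasis H).exists_subset_of_mem_open hf hU
  exact ⟨⟨V, hV⟩, hfV, hVU⟩

lemma exists_basis_closure_subset {U : Set H} (hU : IsOpen U) {f : H} (hf : f ∈ U) :
    ∃ V : Bas, f ∈ (V : Set H) ∧ closure (V : Set H) ⊆ U := by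
  obtain ⟨C, ⟨hCnhds, hCcl⟩, hCU⟩ := ((closed_nhds_basis f).mem_iff).1 (hU.mem_nhds hf)
  obtain ⟨V, hfV, hVC⟩ := exists_basis_mem_subset isOpen_interior
    (mem_interior_iff_mem_nhds.2 hCnhds)
  refine ⟨V, hfV, ?_⟩
  refine subset_trans ?_ hCU
  calc closure (V : Set H) ⊆ closure (interior C) := closure_mono hVC
    _ ⊆ C := hCcl.closure_subset_iff.mpr interior_subset
  
lemma mem_Dstar_iff_basis {ε : ℝ} {K : Set H} {f : H} :
    f ∈ Dstar ε K ↔ f ∈ K ∧ ∀ V : Bas, f ∈ (V : Set H) → ε < normDiam (K ∩ V) := by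
  constructor
  · rintro ⟨hfK, h⟩
    exact ⟨hfK, fun V hfV => h V (Bas_isOpen V) hfV⟩
  · rintro ⟨hfK, h⟩
    refine ⟨hfK, fun U hU hfU => ?_⟩
    obtain ⟨V, hfV, hVU⟩ := exists_basis_mem_subset hU hfU
    exact lt_of_lt_of_le (h V hfV) (normDiam_mono (inter_subset_inter_right _ hVU))

lemma Dstar_subset (ε : ℝ) (K : Set H) : Dstar ε K ⊆ K := fun _ h => h.1

lemma Dstar_eq_diff (ε : ℝ) (K : Set H) :
    Dstar ε K = K \ ⋃ (V : Bas) (_ : ¬ ε < normDiam (K ∩ V)), (V : Set H) := by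
  ext f
  rw [mem_Dstar_iff_basis]
  simp only [mem_diff, mem_iUnion]
  constructor
  · rintro ⟨hfK, h⟩
    refine ⟨hfK, ?_⟩
    rintro ⟨V, hV, hfV⟩
    exact hV (h V hfV)
  · rintro ⟨hfK, h⟩
    refine ⟨hfK, fun V hfV => ?_⟩
    by_contra hc
    exact h ⟨V, hc, hfV⟩

lemma isClosed_Dstar {ε : ℝ} {K : Set H} (hK : IsClosed K) : IsClosed (Dstar ε K) := by
  rw [Dstar_eq_diff]
  exact hK.sdiff (isOpen_iUnion fun V => isOpen_iUnion fun _ => Bas_isOpen V)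

/-! ### hereditary norm separability and emptiness of `Dstar`-fixed points -/

instance : Nonempty H := ⟨fun _ => ⟨0, by norm_num⟩⟩

lemma normSeparable_mono {S T : Set H} (hT : NormSeparable T) (hST : S ⊆ T) :
    NormSeparable S := by
  obtain ⟨D, hDc, hDT, hdense⟩ := hT
  classical
  let P : H × ℕ → Prop := fun dk => ∃ s ∈ S, normDist dk.1 s < 1 / (dk.2 + 1)
  let pick : H × ℕ → H := fun dk => if h : P dk then h.choose else Classical.arbitrary H
  refine ⟨pick '' {dk ∈ D ×ˢ (univ : Set ℕ) | P dk},
    ((hDc.prod countable_univ).mono (sep_subset _ _)).image _, ?_, ?_⟩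
  · rintro x ⟨⟨d, k⟩, ⟨_, hdk⟩, rfl⟩
    simp only [pick, dif_pos hdk]
    exact hdk.choose_spec.1
  · intro f hf δ hδ
    obtain ⟨k, hk⟩ := exists_nat_one_div_lt (show (0:ℝ) < δ / 2 by linarith)
    obtain ⟨d, hd, hfd⟩ := hdense f (hST hf) (1/(k+1)) (by positivity)
    have hP : P (d, k) := ⟨f, hf, by rwa [normDist_comm] at hfd⟩
    refine ⟨pick (d, k), mem_image_of_mem _ ⟨by simp [hd], hP⟩, ?_⟩
    have hds : normDist d (pick (d,k)) < 1/(k+1) := by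
      simp only [pick, dif_pos hP]
      exact hP.choose_spec.2
    calc normDist f (pick (d,k)) ≤ normDist f d + normDist d (pick (d,k)) :=
        normDist_triangle _ _ _
      _ < 1/(k+1) + 1/(k+1) := add_lt_add hfd hds
      _ < δ/2 + δ/2 := by push_cast; push_cast at hk; linarith
      _ = δ := by ring

end SzlenkProof
namespace SzlenkProof
open Set MeasureTheory TopologicalSpace

/-! ### `derivIter` recursion lemmas -/

lemma derivIter_zero {α : Type*} (D : Set α → Set α) (K : Set α) :
    derivIter D K 0 = K := Ordinal.limitRecOn_zero ..

lemma derivIter_succ {α : Type*} (D : Set α → Set α) (K : Set α) (o : Ordinal) :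
    derivIter D K (Order.succ o) = D (derivIter D K o) := Ordinal.limitRecOn_succ ..

lemma derivIter_limit {α : Type*} (D : Set α → Set α) (K : Set α) {o : Ordinal}
    (ho : Order.IsSuccLimit o) :
    derivIter D K o = ⋂ (ζ : Ordinal) (_ : ζ < o), derivIter D K ζ :=
  Ordinal.limitRecOn_limit _ _ _ _ ho

lemma derivIter_antitone {α : Type*} {D : Set α → Set α} (hD : ∀ S, D S ⊆ S) (K : Set α)
    {ζ ξ : Ordinal} (h : ζ ≤ ξ) : derivIter D K ξ ⊆ derivIter D K ζ := by
  induction ξ using Ordinal.induction with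
  | h ξ IH =>
    rcases eq_or_lt_of_le h with rfl | hlt
    · exact subset_rfl
    rcases Ordinal.zero_or_succ_or_isSuccLimit ξ with rfl | ⟨η, rfl⟩ | hl
    · exact absurd hlt not_lt_zero
    · rw [← Ordinal.add_one_eq_succ] at *
      rw [Ordinal.add_one_eq_succ, derivIter_succ]
      refine subset_trans (hD _) ?_
      exact IH η (by rw [Ordinal.add_one_eq_succ]; exact Order.lt_succ η)
        (by rw [Ordinal.add_one_eq_succ] at hlt; exact Order.lt_succ_iff.1 hlt)
    · rw [derivIter_limit _ _ hl]
      intro x hx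
      exact (mem_iInter₂.1 hx) ζ hlt

lemma isClosed_derivIter {ε : ℝ} {K : Set H} (hK : IsClosed K) (ξ : Ordinal) :
    IsClosed (derivIter (Dstar ε) K ξ) := by
  induction ξ using Ordinal.induction with
  | h ξ IH =>
    rcases Ordinal.zero_or_succ_or_isSuccLimit ξ with rfl | ⟨η, rfl⟩ | hl
    · rwa [derivIter_zero]
    · rw [derivIter_succ]
      exact isClosed_Dstar (IH η (Order.lt_succ η))
    · rw [derivIter_limit _ _ hl]
      exact isClosed_iInter fun ζ => isClosed_iInter fun hζ => IH ζ hζ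

/-! ### the Baire category argument: a `Dstar`-fixed point is empty -/

lemma Dstar_fixed_eq_empty {ε : ℝ} (hε : 0 < ε) {K : Set H} (hKc : IsCompact K)
    (hKs : NormSeparable K) (hfix : Dstar ε K = K) : K = ∅ := by
  by_contra hne
  rw [← Ne, ← nonempty_iff_ne_empty] at hne
  obtain ⟨f0, hf0⟩ := hne
  obtain ⟨D, hDc, hDK, hdense⟩ := hKs
  have hDne : D.Nonempty := by
    obtain ⟨g, hg, -⟩ := hdense f0 hf0 1 one_pos
    exact ⟨g, hg⟩
  haveI : CompactSpace ↥K := isCompact_iff_compactSpace.1 hKc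
  haveI : Countable ↥D := hDc.to_subtype
  haveI : Nonempty ↥D := hDne.to_subtype
  set F : ↥D → Set ↥K := fun d => Subtype.val ⁻¹' {g : H | normDist g ↑d ≤ ε/3} with hF
  have hFcl : ∀ d, IsClosed (F d) :=
    fun d => (isClosed_normDist_le _ _).preimage continuous_subtype_val
  have hFcov : ⋃ d, F d = univ := by
    ext g
    simp only [mem_iUnion, mem_univ, iff_true]
    obtain ⟨d, hd, hlt⟩ := hdense ↑g g.2 (ε/3) (by linarith)
    exact ⟨⟨d, hd⟩, le_of_lt hlt⟩
  haveI : Nonempty ↥K := ⟨⟨f0, hf0⟩⟩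
  obtain ⟨d, hint⟩ := nonempty_interior_of_iUnion_of_closed hFcl hFcov
  obtain ⟨g₀, hg₀⟩ := hint
  obtain ⟨U, hUopen, hUeq⟩ := isOpen_induced_iff.1 (isOpen_interior (s := F d))
  have hg₀U : (g₀ : H) ∈ U := by
    have : g₀ ∈ Subtype.val ⁻¹' U := by rw [hUeq]; exact hg₀
    exact this
  have hsmall : ∀ g ∈ K ∩ U, normDist g ↑d ≤ ε/3 := by
    rintro g ⟨hgK, hgU⟩
    have : (⟨g, hgK⟩ : ↥K) ∈ Subtype.val ⁻¹' U := hgU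
    rw [hUeq] at this
    have h2 : (⟨g, hgK⟩ : ↥K) ∈ F d := interior_subset this
    exact h2
  have hdiam : normDiam (K ∩ U) ≤ ε/3 + ε/3 := by
    refine normDiam_le (by linarith) ?_
    intro g hg g' hg'
    calc normDist g g' ≤ normDist g ↑d + normDist ↑d g' := normDist_triangle _ _ _
      _ ≤ ε/3 + ε/3 := by
          refine add_le_add (hsmall g hg) ?_
          rw [normDist_comm]
          exact hsmall g' hg'
  have hmem : (g₀ : H) ∈ Dstar ε K := by rw [hfix]; exact g₀.2
  have := hmem.2 U hUopen hg₀U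
  linarith

/-! ### stabilization of the derivative sequence at a countable stage -/

universe u

lemma exists_countable_derivIter_empty {ε : ℝ} (hε : 0 < ε) {K : Set H}
    (hKc : IsCompact K) (hKs : NormSeparable K) :
    ∃ ξ : Ordinal.{u}, ξ.card ≤ Cardinal.aleph0 ∧ derivIter (Dstar ε) K ξ = ∅ := by
  have key : ∃ ξ : Ordinal, ξ.card ≤ Cardinal.aleph0 ∧
      derivIter (Dstar ε) K (Order.succ ξ) = derivIter (Dstar ε) K ξ := by
    by_contra hcon
    push_neg at hcon
    set o₁ := (Cardinal.aleph (1 : Ordinal.{u})).ord with ho₁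
    have haleph1 : Cardinal.aleph 1 = Order.succ (Cardinal.aleph 0) := by
      have : (1 : Ordinal) = Order.succ 0 := (Ordinal.succ_zero).symm
      rw [this, Cardinal.aleph_succ]
    have hcount : ∀ κ : ↥(Iio o₁), (κ : Ordinal).card ≤ Cardinal.aleph0 := by
      intro κ
      have h2 := Cardinal.lt_ord.1 κ.2
      rw [haleph1, Order.lt_succ_iff, Cardinal.aleph_zero] at h2
      exact h2
    have hstrict : ∀ κ : ↥(Iio o₁), ∃ f : H,
        f ∈ derivIter (Dstar ε) K (κ : Ordinal) ∧
        f ∉ derivIter (Dstar ε) K (Order.succ (κ : Ordinal)) := by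
      intro κ
      have hne : ¬ derivIter (Dstar ε) K (κ : Ordinal) ⊆
          derivIter (Dstar ε) K (Order.succ (κ : Ordinal)) := by
        intro hsub
        refine hcon κ (hcount κ) (subset_antisymm ?_ hsub)
        exact derivIter_antitone (fun S => Dstar_subset ε S) K (Order.le_succ _)
      obtain ⟨f, hf, hfn⟩ := not_subset.1 hne
      exact ⟨f, hf, hfn⟩
    choose f hf1 hf2 using hstrict
    have hVex : ∀ κ : ↥(Iio o₁), ∃ V : Bas, f κ ∈ (V : Set H) ∧
        ∀ g ∈ (V : Set H), g ∉ derivIter (Dstar ε) K (Order.succ (κ : Ordinal)) := by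
      intro κ
      have hcl : IsClosed (derivIter (Dstar ε) K (Order.succ (κ : Ordinal))) :=
        isClosed_derivIter hKc.isClosed _
      obtain ⟨V, hfV, hVsub⟩ := exists_basis_mem_subset hcl.isOpen_compl (hf2 κ)
      exact ⟨V, hfV, fun g hg => hVsub hg⟩
    choose ν hν1 hν2 using hVex
    have hinj : Function.Injective ν := by
      intro κ κ' heq
      by_contra hne
      have hne' : (κ : Ordinal) ≠ (κ' : Ordinal) := fun h => hne (Subtype.coe_injective h)
      rcases hne'.lt_or_gt with hlt | hlt
      · have hsub : derivIter (Dstar ε) K (κ' : Ordinal) ⊆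
            derivIter (Dstar ε) K (Order.succ (κ : Ordinal)) :=
          derivIter_antitone (fun S => Dstar_subset ε S) K (Order.succ_le_of_lt hlt)
        have : f κ' ∈ (ν κ : Set H) := by rw [heq]; exact hν1 κ'
        exact hν2 κ (f κ') this (hsub (hf1 κ'))
      · have hsub : derivIter (Dstar ε) K (κ : Ordinal) ⊆
            derivIter (Dstar ε) K (Order.succ (κ' : Ordinal)) :=
          derivIter_antitone (fun S => Dstar_subset ε S) K (Order.succ_le_of_lt hlt)
        have : f κ ∈ (ν κ' : Set H) := by rw [← heq]; exact hν1 κ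
        exact hν2 κ' (f κ) this (hsub (hf1 κ))
    haveI hcnt : Countable ↥(Iio o₁) := Function.Injective.countable hinj
    have hmk : Cardinal.mk ↥(Iio o₁) ≤ Cardinal.aleph0 := Cardinal.mk_le_aleph0_iff.2 hcnt
    rw [Cardinal.mk_Iio_ordinal, Cardinal.card_ord, ← Cardinal.lift_aleph0.{u+1, u}] at hmk
    have h1 : Cardinal.aleph 1 ≤ Cardinal.aleph0 := Cardinal.lift_le.1 hmk
    exact absurd h1 (not_le.2 Cardinal.aleph0_lt_aleph_one)
  obtain ⟨ξ, hξc, hξfix⟩ := key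
  refine ⟨ξ, hξc, ?_⟩
  have hfix : Dstar ε (derivIter (Dstar ε) K ξ) = derivIter (Dstar ε) K ξ := by
    rw [← derivIter_succ (Dstar ε) K ξ, hξfix]
  refine Dstar_fixed_eq_empty hε ?_ ?_ hfix
  · exact (isClosed_derivIter hKc.isClosed ξ).isCompact
  · refine normSeparable_mono hKs ?_
    have := derivIter_antitone (fun S => Dstar_subset ε S) K (zero_le : (0:Ordinal) ≤ ξ)
    rwa [derivIter_zero] at this

end SzlenkProof
namespace SzlenkProof
open Set MeasureTheory TopologicalSpace

/-! ### Novikov's multiple separation theorem -/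

def cylN (l : List ℕ) : Set (ℕ → ℕ) := {σ | ∀ i, i < l.length → σ i = l.getD i 0}

lemma cylN_nil : cylN ([] : List ℕ) = univ := by
  ext σ; simp [cylN]

lemma mem_cylN_concat {l : List ℕ} {i : ℕ} {σ : ℕ → ℕ} :
    σ ∈ cylN (l ++ [i]) ↔ σ ∈ cylN l ∧ σ l.length = i := by
  constructor
  · intro h
    refine ⟨fun j hj => ?_, ?_⟩
    · have := h j (by simp; omega)
      rwa [List.getD_append _ _ _ _ hj] at this
    · have := h l.length (by simp)
      rwa [List.getD_append_right _ _ _ _ (le_refl _), Nat.sub_self] at this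
  · rintro ⟨h1, h2⟩ j hj
    simp only [List.length_append, List.length_cons, List.length_nil] at hj
    rcases lt_or_ge j l.length with hlt | hge
    · rw [List.getD_append _ _ _ _ hlt]
      exact h1 j hlt
    · have hj' : j = l.length := by omega
      subst hj'
      rw [List.getD_append_right _ _ _ _ (le_refl _), Nat.sub_self]
      exact h2

lemma cylN_decomp (l : List ℕ) : cylN l = ⋃ i : ℕ, cylN (l ++ [i]) := by
  ext σ
  simp only [mem_iUnion, mem_cylN_concat]
  constructor
  · intro h; exact ⟨σ l.length, h, rfl⟩
  · rintro ⟨i, h, -⟩; exact h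

section Novikov

variable {α : Type*} [TopologicalSpace α] [T2Space α] [MeasurableSpace α]
  [OpensMeasurableSpace α]

/-- A family of constraints is *good* if the constrained pieces of the `f n` admit
measurable envelopes with empty intersection. -/
def NGood (f : ℕ → (ℕ → ℕ) → α) (u : ℕ → List ℕ) : Prop :=
  ∃ B : ℕ → Set α, (∀ n, MeasurableSet (B n)) ∧ (∀ n, f n '' cylN (u n) ⊆ B n) ∧
    (⋂ n, B n) = ∅

lemma ngood_of_opens {f : ℕ → (ℕ → ℕ) → α} {u : ℕ → List ℕ} {n m : ℕ} (hnm : n ≠ m)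
    {U V : Set α} (hU : IsOpen U) (hV : IsOpen V) (hUV : U ∩ V = ∅)
    (hfU : f n '' cylN (u n) ⊆ U) (hfV : f m '' cylN (u m) ⊆ V) : NGood f u := by
  classical
  refine ⟨fun r => if r = n then U else if r = m then V else univ, fun r => ?_, fun r => ?_, ?_⟩
  · dsimp only
    split
    · exact hU.measurableSet
    split
    · exact hV.measurableSet
    · exact MeasurableSet.univ
  · dsimp only
    split
    · rename_i h; subst h; exact hfU
    split
    · rename_i h _; rename_i h2; subst h2; exact hfV
    · exact subset_univ _
  · ext x
    simp only [mem_iInter, mem_empty_iff_false, iff_false, not_forall]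
    by_contra hx
    push_neg at hx
    have h1 := hx n
    have h2 := hx m
    rw [if_pos rfl] at h1
    rw [if_neg hnm.symm, if_pos rfl] at h2
    have : x ∈ U ∩ V := ⟨h1, h2⟩
    rw [hUV] at this
    exact this

lemma ngood_ext {f : ℕ → (ℕ → ℕ) → α} {u : ℕ → List ℕ} (h : ¬ NGood f u) (n : ℕ) :
    ∃ i : ℕ, ¬ NGood f (Function.update u n (u n ++ [i])) := by
  classical
  by_contra hcon
  push_neg at hcon
  apply h
  choose B hBm hBc hBe using hcon
  refine ⟨fun m => if m = n then ⋃ i, B i n else ⋂ i, B i m, fun m => ?_, fun m => ?_, ?_⟩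
  · dsimp only
    split
    · exact MeasurableSet.iUnion fun i => hBm i n
    · exact MeasurableSet.iInter fun i => hBm i m
  · dsimp only
    split
    · rename_i hm; subst hm
      rw [cylN_decomp (u m), image_iUnion]
      refine iUnion_subset fun i => ?_
      refine subset_trans ?_ (subset_iUnion _ i)
      have := hBc i m
      rwa [Function.update_self] at this
    · rename_i hm
      refine subset_iInter fun i => ?_
      have := hBc i m
      rwa [Function.update_of_ne hm] at this
  · ext x
    simp only [mem_iInter, mem_empty_iff_false, iff_false, not_forall]
    by_contra hx
    push_neg at hx
    have h1 := hx n
    rw [if_pos rfl, mem_iUnion] at h1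
    obtain ⟨i₀, hi₀⟩ := h1
    have : x ∈ ⋂ m, B i₀ m := by
      refine mem_iInter.2 fun m => ?_
      by_cases hm : m = n
      · subst hm; exact hi₀
      · have := hx m
        rw [if_neg hm, mem_iInter] at this
        exact this i₀
    rw [hBe i₀] at this
    exact this

variable (f : ℕ → (ℕ → ℕ) → α)

/-- The recursively constructed sequence of bad constraint systems. -/
noncomputable def nseq (h0 : ¬ NGood f (fun _ => [])) :
    ℕ → {u : ℕ → List ℕ // ¬ NGood f u} := fun k =>
  Nat.rec (⟨fun _ => [], h0⟩ : {u : ℕ → List ℕ // ¬ NGood f u})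
    (fun k p =>
      ⟨Function.update p.1 (Nat.unpair k).1
          (p.1 (Nat.unpair k).1 ++ [Classical.choose (ngood_ext p.2 (Nat.unpair k).1)]),
        Classical.choose_spec (ngood_ext p.2 (Nat.unpair k).1)⟩) k

variable (h0 : ¬ NGood f (fun _ => []))

lemma nseq_succ_spec (k : ℕ) : ∃ i, (nseq f h0 (k+1)).1 =
    Function.update (nseq f h0 k).1 (Nat.unpair k).1
      ((nseq f h0 k).1 (Nat.unpair k).1 ++ [i]) := ⟨_, rfl⟩

lemma nseq_prefix_step (k n : ℕ) : (nseq f h0 k).1 n <+: (nseq f h0 (k+1)).1 n := by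
  obtain ⟨i, hi⟩ := nseq_succ_spec f h0 k
  rw [hi]
  by_cases hn : n = (Nat.unpair k).1
  · subst hn
    rw [Function.update_self]
    exact List.prefix_append _ _
  · rw [Function.update_of_ne hn]

lemma nseq_prefix_mono {k k' : ℕ} (h : k ≤ k') (n : ℕ) :
    (nseq f h0 k).1 n <+: (nseq f h0 k').1 n := by
  induction k', h using Nat.le_induction with
  | base => exact List.prefix_refl _
  | succ k' hk IH => exact IH.trans (nseq_prefix_step f h0 k' n)

lemma nseq_len_succ (k : ℕ) :
    ((nseq f h0 (k+1)).1 (Nat.unpair k).1).length =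
      ((nseq f h0 k).1 (Nat.unpair k).1).length + 1 := by
  obtain ⟨i, hi⟩ := nseq_succ_spec f h0 k
  rw [hi, Function.update_self, List.length_append, List.length_cons, List.length_nil]

lemma nseq_len_ge (n m : ℕ) : m + 1 ≤ ((nseq f h0 (Nat.pair n m + 1)).1 n).length := by
  induction m with
  | zero =>
    have := nseq_len_succ f h0 (Nat.pair n 0)
    rw [Nat.unpair_pair] at this
    simp only [this]
    omega
  | succ m IH =>
    have hlt : Nat.pair n m + 1 ≤ Nat.pair n (m+1) := Nat.pair_lt_pair_right n (by omega)
    have hmono := (nseq_prefix_mono f h0 hlt n).length_le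
    have := nseq_len_succ f h0 (Nat.pair n (m+1))
    rw [Nat.unpair_pair] at this
    simp only [this]
    omega

/-- the limit branches -/
noncomputable def limitσ (n j : ℕ) : ℕ := ((nseq f h0 (Nat.pair n j + 1)).1 n).getD j 0

lemma nseq_agree (k n j : ℕ) (hj : j < ((nseq f h0 k).1 n).length) :
    ((nseq f h0 k).1 n).getD j 0 = limitσ f h0 n j := by
  have hj' : j < ((nseq f h0 (Nat.pair n j + 1)).1 n).length := nseq_len_ge f h0 n j
  unfold limitσ
  rcases le_total k (Nat.pair n j + 1) with hle | hle
  · have hpre := nseq_prefix_mono f h0 hle n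
    rw [List.getD_eq_getElem _ _ hj, List.getD_eq_getElem _ _ hj']
    exact List.IsPrefix.getElem hpre hj
  · have hpre := nseq_prefix_mono f h0 hle n
    rw [List.getD_eq_getElem _ _ hj, List.getD_eq_getElem _ _ hj']
    exact (List.IsPrefix.getElem hpre hj').symm

lemma limitσ_mem_cyl (k n : ℕ) : limitσ f h0 n ∈ cylN ((nseq f h0 k).1 n) := by
  intro j hj
  exact (nseq_agree f h0 k n j hj).symm

lemma cyl_continuity {g : (ℕ → ℕ) → α} (hg : Continuous g) (σ : ℕ → ℕ) {W : Set α}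
    (hW : IsOpen W) (hmem : g σ ∈ W) :
    ∃ ℓ, ∀ τ : ℕ → ℕ, (∀ i, i < ℓ → τ i = σ i) → g τ ∈ W := by
  have hop : IsOpen (g ⁻¹' W) := hW.preimage hg
  rw [isOpen_pi_iff] at hop
  obtain ⟨I, u, hu, hsub⟩ := hop σ hmem
  refine ⟨(I.sup id) + 1, fun τ hτ => ?_⟩
  apply hsub
  intro i hi
  rw [hτ i (lt_of_le_of_lt (Finset.le_sup (f := id) hi) (Nat.lt_succ_self _))]
  exact (hu i hi).2

theorem novikov (hf : ∀ n, Continuous (f n)) (hmpty : (⋂ n, range (f n)) = ∅) :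
    ∃ B : ℕ → Set α, (∀ n, MeasurableSet (B n)) ∧ (∀ n, range (f n) ⊆ B n) ∧
      (⋂ n, B n) = ∅ := by
  by_contra h0'
  have h0 : ¬ NGood f (fun _ => []) := by
    intro ⟨B, h1, h2, h3⟩
    exact h0' ⟨B, h1, fun n => by
      have := h2 n; rwa [cylN_nil, image_univ] at this, h3⟩
  have hy : ∀ n m, f n (limitσ f h0 n) = f m (limitσ f h0 m) := by
    intro n m
    by_contra hne
    have hnm : n ≠ m := by rintro rfl; exact hne rfl
    obtain ⟨U, V, hU, hV, hyU, hyV, hUV⟩ := t2_separation hne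
    obtain ⟨ℓn, hℓn⟩ := cyl_continuity (hf n) (limitσ f h0 n) hU hyU
    obtain ⟨ℓm, hℓm⟩ := cyl_continuity (hf m) (limitσ f h0 m) hV hyV
    set K := max (Nat.pair n ℓn + 1) (Nat.pair m ℓm + 1) with hK
    have hlenn : ℓn ≤ ((nseq f h0 K).1 n).length := by
      have h1 := nseq_len_ge f h0 n ℓn
      have h2 := (nseq_prefix_mono f h0
        (le_max_left (Nat.pair n ℓn + 1) (Nat.pair m ℓm + 1)) n).length_le
      rw [← hK] at h2
      omega
    have hlenm : ℓm ≤ ((nseq f h0 K).1 m).length := by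
      have h1 := nseq_len_ge f h0 m ℓm
      have h2 := (nseq_prefix_mono f h0
        (le_max_right (Nat.pair n ℓn + 1) (Nat.pair m ℓm + 1)) m).length_le
      rw [← hK] at h2
      omega
    apply (nseq f h0 K).2
    refine ngood_of_opens hnm hU hV hUV.inter_eq ?_ ?_
    · rintro x ⟨τ, hτ, rfl⟩
      apply hℓn
      intro i hi
      rw [hτ i (lt_of_lt_of_le hi hlenn)]
      exact nseq_agree f h0 K n i (lt_of_lt_of_le hi hlenn)
    · rintro x ⟨τ, hτ, rfl⟩
      apply hℓm
      intro i hi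
      rw [hτ i (lt_of_lt_of_le hi hlenm)]
      exact nseq_agree f h0 K m i (lt_of_lt_of_le hi hlenm)
  have hmem : f 0 (limitσ f h0 0) ∈ ⋂ n, range (f n) := by
    refine mem_iInter.2 fun n => ⟨limitσ f h0 n, hy n 0⟩
  rw [hmpty] at hmem
  exact hmem

end Novikov
end SzlenkProof
namespace SzlenkProof
open Set MeasureTheory TopologicalSpace

section NovikovSets

variable {α : Type*} [TopologicalSpace α] [T2Space α] [MeasurableSpace α]
  [OpensMeasurableSpace α]

lemma analyticSet_inter {s t : Set α} (hs : AnalyticSet s) (ht : AnalyticSet t) :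
    AnalyticSet (s ∩ t) := by
  classical
  have : s ∩ t = ⋂ b : Bool, (Bool.rec t s b : Set α) := by
    ext x
    simp only [mem_inter_iff, mem_iInter]
    constructor
    · rintro ⟨h1, h2⟩ b; cases b
      · exact h2
      · exact h1
    · intro h; exact ⟨h true, h false⟩
  rw [this]
  exact AnalyticSet.iInter fun b => by cases b <;> assumption

theorem novikov_analytic (A : ℕ → Set α) (hA : ∀ n, AnalyticSet (A n))
    (he : (⋂ n, A n) = ∅) :
    ∃ B : ℕ → Set α, (∀ n, MeasurableSet (B n)) ∧ (∀ n, A n ⊆ B n) ∧ (⋂ n, B n) = ∅ := by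
  classical
  by_cases hem : ∃ n, A n = ∅
  · obtain ⟨n, hn⟩ := hem
    refine ⟨fun m => if m = n then ∅ else univ, fun m => ?_, fun m => ?_, ?_⟩
    · dsimp only; split <;> simp
    · dsimp only; split
      · rename_i h; subst h; rw [hn]
      · exact subset_univ _
    · refine eq_empty_iff_forall_notMem.2 fun x hx => ?_
      have := mem_iInter.1 hx n
      simpa using this
  · push_neg at hem
    have hex : ∀ n, ∃ g : (ℕ → ℕ) → α, Continuous g ∧ range g = A n := by
      intro n
      have h := hA n
      rw [AnalyticSet] at h
      rcases h with h | h
      · exact absurd h (nonempty_iff_ne_empty.1 (hem n))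
      · exact h
    choose g hgc hgr using hex
    obtain ⟨B, h1, h2, h3⟩ := novikov g hgc (by simp_rw [hgr]; exact he)
    exact ⟨B, h1, fun n => (hgr n) ▸ h2 n, h3⟩

end NovikovSets

/-! ### the projection theorem for Borel sets with compact sections -/

abbrev CS : Type := ℕ → Bool

instance : IsCompletelyMetrizableSpace CS :=
  IsCompletelyMetrizableSpace_of_isCompletelyPseudoMetrizableSpace

def cylB (l : List Bool) : Set CS := {c | ∀ i, i < l.length → c i = l.getD i true}

lemma isClosed_cylB (l : List Bool) : IsClosed (cylB l) := by
  have : cylB l = ⋂ (i : ℕ) (_ : i < l.length), (fun c : CS => c i) ⁻¹' {l.getD i true} := by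
    ext c; simp [cylB]
  rw [this]
  exact isClosed_iInter fun i => isClosed_iInter fun _ =>
    (isClosed_singleton).preimage (continuous_apply i)

lemma measurableSet_cylB (l : List Bool) : MeasurableSet (cylB l) :=
  (isClosed_cylB l).measurableSet

def listOf (c : CS) (n : ℕ) : List Bool := List.ofFn (fun i : Fin n => c i)

@[simp] lemma length_listOf (c : CS) (n : ℕ) : (listOf c n).length = n :=
  List.length_ofFn

lemma getD_listOf {c : CS} {n i : ℕ} (h : i < n) : (listOf c n).getD i true = c i := by
  rw [List.getD_eq_getElem _ _ (by simpa using h)]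
  simp [listOf]

lemma mem_cylB_listOf (c : CS) (n : ℕ) : c ∈ cylB (listOf c n) := by
  intro i hi
  rw [length_listOf] at hi
  rw [getD_listOf hi]

lemma eq_listOf_of_mem {c : CS} {l : List Bool} (h : c ∈ cylB l) : l = listOf c l.length := by
  refine List.ext_getElem (by simp) fun i h1 h2 => ?_
  have := h i h1
  rw [List.getD_eq_getElem _ _ h1] at this
  rw [← this]
  simp [listOf]

lemma listOf_take (c : CS) {k n : ℕ} (h : k ≤ n) : (listOf c n).take k = listOf c k := by
  refine List.ext_getElem (by simp [h]) fun i h1 h2 => ?_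
  rw [List.getElem_take]
  simp [listOf]

lemma cylB_subset_take (l : List Bool) (k : ℕ) (hk : k ≤ l.length) :
    cylB l ⊆ cylB (l.take k) := by
  intro c hc i hi
  rw [List.length_take] at hi
  have hik : i < k := lt_of_lt_of_le hi (min_le_left _ _)
  have := hc i (lt_of_lt_of_le hik hk)
  rwa [List.getD_eq_getElem _ _ (by rw [List.length_take]; exact hi),
    List.getElem_take, ← List.getD_eq_getElem _ _ (lt_of_lt_of_le hik hk)]

lemma finite_length_eq (n : ℕ) : {l : List Bool | l.length = n}.Finite := by
  refine (finite_univ.image (fun v : Fin n → Bool => List.ofFn v)).subset ?_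
  intro l hl
  subst hl
  exact ⟨fun i => l[i], mem_univ _, List.ofFn_getElem (xs := l)⟩

lemma countable_length_eq (n : ℕ) : {l : List Bool | l.length = n}.Countable :=
  (finite_length_eq n).countable

lemma nonempty_cylB (l : List Bool) : (cylB l).Nonempty := by
  refine ⟨fun i => l.getD i true, fun i _ => rfl⟩

section Proj

variable {X : Type*} [TopologicalSpace X] [PolishSpace X] [MeasurableSpace X] [BorelSpace X]
variable {Y : Type*} [TopologicalSpace Y] [PolishSpace Y] [MeasurableSpace Y] [BorelSpace Y]
  [CompactSpace Y]

theorem proj_measurable (q : CS → Y) (hqc : Continuous q) (hqs : Function.Surjective q)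
    {B : Set (X × Y)} (hB : MeasurableSet B) (hsec : ∀ x, IsClosed {y | (x, y) ∈ B}) :
    MeasurableSet {x | ∃ y, (x, y) ∈ B} := by
  classical
  set Bt : Set (X × CS) := (fun p : X × CS => (p.1, q p.2)) ⁻¹' B with hBt
  have hBtm : MeasurableSet Bt :=
    (measurable_fst.prodMk (hqc.measurable.comp measurable_snd)) hB
  have hBtsec : ∀ x, IsClosed {c : CS | (x, c) ∈ Bt} := fun x => (hsec x).preimage hqc
  have hproj : {x | ∃ y, (x, y) ∈ B} = {x | ∃ c, (x, c) ∈ Bt} := by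
    ext x
    constructor
    · rintro ⟨y, hy⟩
      obtain ⟨c, rfl⟩ := hqs y
      exact ⟨c, hy⟩
    · rintro ⟨c, hc⟩
      exact ⟨q c, hc⟩
  rw [hproj]
  -- the analytic projections
  set As : List Bool → Set X := fun s => Prod.fst '' (Bt ∩ (univ ×ˢ cylB s)) with hAs
  have hAs_an : ∀ s, AnalyticSet (As s) := fun s =>
    (hBtm.inter (MeasurableSet.univ.prod (measurableSet_cylB s))).analyticSet_image
      measurable_fst
  -- the analytic approximations Cn
  set Cn : ℕ → Set (X × CS) := fun n =>
    {p : X × CS | ∃ c', (p.1, c') ∈ Bt ∧ ∀ i, i < n → c' i = p.2 i} with hCn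
  have hCn_an : ∀ n, AnalyticSet (Cn n) := by
    intro n
    have heq : Cn n = (fun t : (X × CS) × CS => (t.1.1, t.2)) ''
        {t : (X × CS) × CS | t.1 ∈ Bt ∧ ∀ i, i < n → t.1.2 i = t.2 i} := by
      ext ⟨x, c⟩
      constructor
      · rintro ⟨c', h1, h2⟩
        exact ⟨((x, c'), c), ⟨h1, h2⟩, rfl⟩
      · rintro ⟨⟨⟨x', c'⟩, c''⟩, ⟨h1, h2⟩, heq⟩
        obtain ⟨rfl, rfl⟩ := Prod.ext_iff.1 heq
        exact ⟨c', h1, h2⟩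
    rw [heq]
    refine MeasurableSet.analyticSet_image ?_
      ((measurable_fst.comp measurable_fst).prodMk measurable_snd)
    have heq2 : {t : (X × CS) × CS | t.1 ∈ Bt ∧ ∀ i, i < n → t.1.2 i = t.2 i} =
        (Prod.fst ⁻¹' Bt) ∩ ⋂ i ∈ Finset.range n, {t : (X × CS) × CS | t.1.2 i = t.2 i} := by
      ext t
      simp only [mem_inter_iff, mem_preimage, mem_setOf_eq, mem_iInter, Finset.mem_range]
      try tauto
    rw [heq2]
    refine (hBtm.preimage measurable_fst).inter ?_
    refine MeasurableSet.biInter (to_countable _) fun i _ => ?_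
    exact (isClosed_eq ((continuous_apply i).comp (continuous_snd.comp continuous_fst))
      ((continuous_apply i).comp continuous_snd)).measurableSet
  -- the bad sets and Novikov envelopes
  set En : ℕ → Set (X × CS) := fun n => Cn n ∩ Btᶜ with hEn
  have hEn_an : ∀ n, AnalyticSet (En n) :=
    fun n => analyticSet_inter (hCn_an n) hBtm.compl.analyticSet
  have hEn_empty : (⋂ n, En n) = ∅ := by
    refine eq_empty_iff_forall_notMem.2 ?_
    rintro ⟨x, c⟩ hp
    have hBtc : (x, c) ∉ Bt := (mem_iInter.1 hp 0).2
    set T : ℕ → Set CS := fun n => {c' | (x, c') ∈ Bt ∧ ∀ i, i < n → c' i = c i} with hT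
    have hTne : ∀ n, (T n).Nonempty := by
      intro n
      obtain ⟨c', h1, h2⟩ := (mem_iInter.1 hp n).1
      exact ⟨c', h1, h2⟩
    have hTcl : ∀ n, IsClosed (T n) := by
      intro n
      have heqT : T n = {c' : CS | (x, c') ∈ Bt} ∩ cylB (listOf c n) := by
        ext c'
        simp only [hT, mem_setOf_eq, mem_inter_iff]
        constructor
        · rintro ⟨h1, h⟩
          refine ⟨h1, fun i hi => ?_⟩
          rw [length_listOf] at hi
          rw [getD_listOf hi]
          exact h i hi
        · rintro ⟨h1, h⟩
          refine ⟨h1, fun i hi => ?_⟩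
          have := h i (by rwa [length_listOf])
          rwa [getD_listOf hi] at this
      rw [heqT]
      exact (hBtsec x).inter (isClosed_cylB _)
    have hTmono : ∀ n, T (n+1) ⊆ T n := by
      rintro n c' ⟨h1, h2⟩
      exact ⟨h1, fun i hi => h2 i (by omega)⟩
    obtain ⟨c', hc'⟩ := IsCompact.nonempty_iInter_of_sequence_nonempty_isCompact_isClosed
      T hTmono hTne ((hTcl 0).isCompact) hTcl
    have hcc : c' = c := funext fun i => (mem_iInter.1 hc' (i+1)).2 i (by omega)
    exact hBtc (hcc ▸ (mem_iInter.1 hc' 0).1)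
  obtain ⟨G, hGm, hGsub, hGe⟩ := novikov_analytic En hEn_an hEn_empty
  set D : ℕ → Set (X × CS) := fun n => G n ∪ Bt with hD
  have hDm : ∀ n, MeasurableSet (D n) := fun n => (hGm n).union hBtm
  have hCnD : ∀ n, Cn n ⊆ D n := by
    intro n p hpC
    by_cases hpB : p ∈ Bt
    · exact Or.inr hpB
    · exact Or.inl (hGsub n ⟨hpC, hpB⟩)
  have hDBt : (⋂ n, D n) ⊆ Bt := by
    intro p hp
    by_contra hpB
    have h2 : p ∈ ⋂ n, G n :=
      mem_iInter.2 fun n => (mem_iInter.1 hp n).resolve_right hpB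
    rw [hGe] at h2
    exact h2
  have hAsCn : ∀ s : List Bool, ∀ x' ∈ As s, ∀ c' ∈ cylB s, (x', c') ∈ Cn s.length := by
    rintro s x' ⟨⟨x'', c''⟩, ⟨hBt'', ⟨-, hcyl''⟩⟩, rfl⟩ c' hc'
    exact ⟨c'', hBt'', fun i hi => (hcyl'' i hi).trans (hc' i hi).symm⟩
  -- interpolation via the Lusin separation theorem
  have hMex : ∀ s : List Bool, ∃ Ms : Set X, MeasurableSet Ms ∧ As s ⊆ Ms ∧
      ∀ x' ∈ Ms, ∀ c' ∈ cylB s, (x', c') ∈ D s.length := by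
    intro s
    set E : Set X := Prod.fst '' ((D s.length)ᶜ ∩ (univ ×ˢ cylB s)) with hEdef
    have hEan : AnalyticSet E :=
      ((hDm s.length).compl.inter
        (MeasurableSet.univ.prod (measurableSet_cylB s))).analyticSet_image measurable_fst
    have hdisj : Disjoint (As s) E := by
      rw [Set.disjoint_left]
      rintro x' hx' ⟨⟨x'', c''⟩, ⟨hDc, ⟨-, hcyl⟩⟩, rfl⟩
      exact hDc (hCnD _ (hAsCn s _ hx' c'' hcyl))
    obtain ⟨Ms, hMsub, hMdisj, hMm⟩ := (hAs_an s).measurablySeparable hEan hdisj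
    refine ⟨Ms, hMm, hMsub, ?_⟩
    intro x' hx' c' hc'
    by_contra hno
    have hxE : x' ∈ E := ⟨(x', c'), ⟨hno, ⟨mem_univ _, hc'⟩⟩, rfl⟩
    exact Set.disjoint_left.1 hMdisj hxE hx'
  choose M hMm hMsub hMin using hMex
  have hfinal : {x : X | ∃ c, (x, c) ∈ Bt} =
      ⋂ n, ⋃ s ∈ {l : List Bool | l.length = n},
        ⋂ k ∈ Finset.range (n+1), M (s.take k) := by
    ext x'
    constructor
    · rintro ⟨c, hc⟩
      refine mem_iInter.2 fun n => ?_
      refine mem_iUnion₂.2 ⟨listOf c n, length_listOf c n, ?_⟩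
      refine mem_iInter₂.2 fun k hk => ?_
      rw [Finset.mem_range, Nat.lt_succ_iff] at hk
      rw [listOf_take c hk]
      exact hMsub _ ⟨(x', c), ⟨hc, ⟨mem_univ _, mem_cylB_listOf c k⟩⟩, rfl⟩
    · intro hx'
      set W : ℕ → Set CS := fun n =>
        ⋃ s ∈ {l : List Bool | l.length = n ∧ ∀ k, k ≤ n → x' ∈ M (l.take k)},
          cylB s with hW
      have hWcl : ∀ n, IsClosed (W n) := by
        intro n
        refine Set.Finite.isClosed_biUnion ?_ fun s _ => isClosed_cylB s
        exact (finite_length_eq n).subset fun l hl => hl.1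
      have hWne : ∀ n, (W n).Nonempty := by
        intro n
        obtain ⟨s, hs, hins⟩ := mem_iUnion₂.1 (mem_iInter.1 hx' n)
        refine ⟨fun i => s.getD i true, ?_⟩
        refine mem_biUnion ⟨hs, fun k hk => ?_⟩ (fun i _ => rfl)
        exact mem_iInter₂.1 hins k (Finset.mem_range.2 (Nat.lt_succ_of_le hk))
      have hWmono : ∀ n, W (n+1) ⊆ W n := by
        intro n c hc
        obtain ⟨s, ⟨hlen, hprop⟩, hcyl⟩ := mem_iUnion₂.1 hc
        refine mem_iUnion₂.2 ⟨s.take n, ⟨?_, ?_⟩, ?_⟩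
        · rw [List.length_take]; omega
        · intro k hk
          rw [List.take_take]
          have hmin : min k n = k := by omega
          rw [hmin]
          exact hprop k (by omega)
        · exact cylB_subset_take s n (by omega) hcyl
      obtain ⟨c, hcmem⟩ := IsCompact.nonempty_iInter_of_sequence_nonempty_isCompact_isClosed
        W hWmono hWne ((hWcl 0).isCompact) hWcl
      refine ⟨c, ?_⟩
      refine hDBt (mem_iInter.2 fun n => ?_)
      obtain ⟨s, ⟨hlen, hprop⟩, hcyl⟩ := mem_iUnion₂.1 (mem_iInter.1 hcmem n)
      have hxM : x' ∈ M s := by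
        have h5 := hprop n le_rfl
        rw [← hlen] at h5
        rwa [List.take_length] at h5
      have h6 := hMin s x' hxM c hcyl
      rwa [hlen] at h6
  rw [hfinal]
  refine MeasurableSet.iInter fun n => ?_
  refine MeasurableSet.biUnion (countable_length_eq n) fun s _ => ?_
  exact MeasurableSet.biInter (to_countable _) fun k _ => hMm _


end Proj
end SzlenkProof
namespace SzlenkProof
open Set Filter

/-! ### continuous surjections from Cantor space onto `H` and `H × H` -/

noncomputable def cantor01 (b : CS) : ℝ := ∑' i, if b i then ((1:ℝ)/2)^(i+1) else 0

lemma summable_half : Summable (fun i : ℕ => ((1:ℝ)/2)^(i+1)) := by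
  have h : (fun i : ℕ => ((1:ℝ)/2)^(i+1)) = fun i : ℕ => (1/2) * ((1:ℝ)/2)^i := by
    funext i
    rw [pow_succ, mul_comm]
  rw [h]
  exact (summable_geometric_of_lt_one (by norm_num) (by norm_num)).mul_left _

lemma cantor01_term_nonneg (b : CS) (i : ℕ) :
    0 ≤ (if b i then ((1:ℝ)/2)^(i+1) else 0) := by
  split
  · positivity
  · exact le_rfl

lemma cantor01_term_le (b : CS) (i : ℕ) :
    (if b i then ((1:ℝ)/2)^(i+1) else 0) ≤ ((1:ℝ)/2)^(i+1) := by
  split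
  · exact le_rfl
  · positivity

lemma summable_cantor01 (b : CS) : Summable (fun i => if b i then ((1:ℝ)/2)^(i+1) else 0) :=
  Summable.of_nonneg_of_le (cantor01_term_nonneg b) (cantor01_term_le b) summable_half

lemma tsum_half : ∑' i : ℕ, ((1:ℝ)/2)^(i+1) = 1 := by
  have h : (fun i : ℕ => ((1:ℝ)/2)^(i+1)) = fun i : ℕ => (1:ℝ) / 2 / 2^i := by
    funext i
    rw [pow_succ, div_pow, one_pow]
    ring
  rw [h, tsum_geometric_two' 1]

lemma continuous_cantor01 : Continuous cantor01 := by
  refine continuous_tsum (u := fun i => ((1:ℝ)/2)^(i+1)) (fun i => ?_) summable_half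
    (fun i b => ?_)
  · exact Continuous.comp (continuous_of_discreteTopology
      (f := fun v : Bool => if v then ((1:ℝ)/2)^(i+1) else 0)) (continuous_apply i)
  · rw [Real.norm_eq_abs, abs_of_nonneg (cantor01_term_nonneg b i)]
    exact cantor01_term_le b i

lemma cantor01_nonneg (b : CS) : 0 ≤ cantor01 b :=
  tsum_nonneg (cantor01_term_nonneg b)

lemma cantor01_le_one (b : CS) : cantor01 b ≤ 1 := by
  have := (summable_cantor01 b).tsum_le_tsum (cantor01_term_le b) summable_half
  rwa [tsum_half] at this

lemma cantor01_surj {x : ℝ} (hx : x ∈ Icc (0:ℝ) 1) : ∃ b : CS, cantor01 b = x := by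
  classical
  set r : ℕ → ℝ := fun i => Nat.rec x
    (fun i ri => ri - (if ((1:ℝ)/2)^(i+1) ≤ ri then ((1:ℝ)/2)^(i+1) else 0)) i with hr
  set b : CS := fun i => decide (((1:ℝ)/2)^(i+1) ≤ r i) with hb
  have hr0 : r 0 = x := rfl
  have hrs : ∀ i, r (i+1) = r i - (if ((1:ℝ)/2)^(i+1) ≤ r i then ((1:ℝ)/2)^(i+1) else 0) :=
    fun i => rfl
  have hinv : ∀ i, 0 ≤ r i ∧ r i ≤ ((1:ℝ)/2)^i := by
    intro i
    induction i with
    | zero =>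
      rw [hr0, pow_zero]
      exact ⟨hx.1, hx.2⟩
    | succ i IH =>
      rw [hrs i]
      have hps : ((1:ℝ)/2)^(i+1) = ((1:ℝ)/2)^i * (1/2) := pow_succ _ _
      by_cases hble : ((1:ℝ)/2)^(i+1) ≤ r i
      · rw [if_pos hble]
        constructor
        · linarith
        · have := IH.2
          rw [hps] at hble ⊢
          linarith
      · rw [if_neg hble]
        push_neg at hble
        rw [sub_zero]
        exact ⟨IH.1, by linarith⟩
  have hterm : ∀ i, (if b i then ((1:ℝ)/2)^(i+1) else 0) = r i - r (i+1) := by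
    intro i
    rw [hrs i]
    by_cases hble : ((1:ℝ)/2)^(i+1) ≤ r i
    · have hbi : b i = true := by rw [hb]; exact decide_eq_true hble
      rw [hbi, if_pos rfl, if_pos hble]
      ring
    · have hbi : b i = false := by rw [hb]; exact decide_eq_false hble
      rw [hbi, if_neg hble]
      simp
  have hsum : ∀ n, ∑ i ∈ Finset.range n, (if b i then ((1:ℝ)/2)^(i+1) else 0) = x - r n := by
    intro n
    rw [Finset.sum_congr rfl (fun i _ => hterm i), Finset.sum_range_sub' r, hr0]
  have hrlim : Tendsto r atTop (nhds 0) := by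
    refine squeeze_zero (fun n => (hinv n).1) (fun n => (hinv n).2) ?_
    exact tendsto_pow_atTop_nhds_zero_of_lt_one (by norm_num) (by norm_num)
  have hhs : HasSum (fun i => if b i then ((1:ℝ)/2)^(i+1) else 0) x := by
    rw [hasSum_iff_tendsto_nat_of_nonneg (cantor01_term_nonneg b)]
    simp_rw [hsum]
    have h9 : Tendsto (fun n => x - r n) atTop (nhds (x - 0)) :=
      tendsto_const_nhds.sub hrlim
    simpa using h9
  exact ⟨b, hhs.tsum_eq⟩

noncomputable def cantorIcc (b : CS) : Set.Icc (-1:ℝ) 1 :=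
  ⟨2 * cantor01 b - 1, by
    constructor
    · have := cantor01_nonneg b; linarith
    · have := cantor01_le_one b; linarith⟩

lemma continuous_cantorIcc : Continuous cantorIcc :=
  Continuous.subtype_mk ((continuous_const.mul continuous_cantor01).sub continuous_const) _

lemma surjective_cantorIcc : Function.Surjective cantorIcc := by
  rintro ⟨y, hy1, hy2⟩
  obtain ⟨b, hbeq⟩ := cantor01_surj (x := (y+1)/2) ⟨by linarith, by linarith⟩
  refine ⟨b, Subtype.ext ?_⟩
  show 2 * cantor01 b - 1 = y
  rw [hbeq]
  ring

noncomputable def qH (b : CS) : H := fun n => cantorIcc (fun i => b (Nat.pair n i))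

lemma continuous_qH : Continuous qH :=
  continuous_pi fun _ => continuous_cantorIcc.comp (continuous_pi fun _ => continuous_apply _)

lemma surjective_qH : Function.Surjective qH := by
  intro f
  have hex : ∀ n, ∃ bn : CS, cantorIcc bn = f n := fun n => surjective_cantorIcc (f n)
  choose bn hbn using hex
  refine ⟨fun m => bn (Nat.unpair m).1 (Nat.unpair m).2, ?_⟩
  funext n
  show cantorIcc (fun i => bn (Nat.unpair (Nat.pair n i)).1 (Nat.unpair (Nat.pair n i)).2) = f n
  have heq : (fun i => bn (Nat.unpair (Nat.pair n i)).1 (Nat.unpair (Nat.pair n i)).2) = bn n := by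
    funext i
    rw [Nat.unpair_pair]
  rw [heq, hbn]

noncomputable def qHH (b : CS) : H × H := (qH (fun i => b (2*i)), qH (fun i => b (2*i+1)))

lemma continuous_qHH : Continuous qHH :=
  (continuous_qH.comp (continuous_pi fun i => continuous_apply _)).prodMk
    (continuous_qH.comp (continuous_pi fun i => continuous_apply _))

lemma surjective_qHH : Function.Surjective qHH := by
  classical
  rintro ⟨f, g⟩
  obtain ⟨bf, hbf⟩ := surjective_qH f
  obtain ⟨bg, hbg⟩ := surjective_qH g
  refine ⟨fun m => if m % 2 = 0 then bf (m / 2) else bg (m / 2), ?_⟩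
  unfold qHH
  have h1 : (fun i => if (2*i) % 2 = 0 then bf ((2*i) / 2) else bg ((2*i) / 2)) = bf := by
    funext i
    have e1 : (2*i) % 2 = 0 := by omega
    have e2 : (2*i) / 2 = i := by omega
    rw [if_pos e1, e2]
  have h2 : (fun i => if (2*i+1) % 2 = 0 then bf ((2*i+1) / 2) else bg ((2*i+1) / 2)) = bg := by
    funext i
    have e1 : ¬ ((2*i+1) % 2 = 0) := by omega
    have e2 : (2*i+1) / 2 = i := by omega
    rw [if_neg e1, e2]
  rw [Prod.ext_iff]
  exact ⟨by dsimp only; rw [h1, hbf], by dsimp only; rw [h2, hbg]⟩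

end SzlenkProof
namespace SzlenkProof
open Set MeasureTheory TopologicalSpace

section Step

variable {Z : Type*} [TopologicalSpace Z] [PolishSpace Z] [MeasurableSpace Z] [BorelSpace Z]

lemma measurable_diamGT {ε : ℝ} (hε : 0 < ε) {B : Set (Z × H)} (hB : MeasurableSet B)
    (hsec : ∀ z, IsCompact {f : H | (z, f) ∈ B}) (V : Set H) (hV : IsOpen V) :
    MeasurableSet {z : Z | ε < normDiam ({f : H | (z, f) ∈ B} ∩ V)} := by
  classical
  set BB : Bas → Bas → ℕ → ℕ → Set (Z × (H × H)) := fun W W' m k =>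
    {p : Z × (H × H) | (p.1, p.2.1) ∈ B ∧ (p.1, p.2.2) ∈ B ∧
      p.2.1 ∈ closure (W : Set H) ∧ p.2.2 ∈ closure (W' : Set H) ∧
      ε + 1/((k:ℝ)+1) ≤ |(p.2.1 m : ℝ) - p.2.2 m|} with hBB
  have hBBm : ∀ W W' m k, MeasurableSet (BB W W' m k) := by
    intro W W' m k
    have heq : BB W W' m k =
        ((fun p : Z × (H × H) => (p.1, p.2.1)) ⁻¹' B) ∩
        (((fun p : Z × (H × H) => (p.1, p.2.2)) ⁻¹' B) ∩
        (((fun p : Z × (H × H) => p.2.1) ⁻¹' closure (W : Set H)) ∩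
        (((fun p : Z × (H × H) => p.2.2) ⁻¹' closure (W' : Set H)) ∩
        {p : Z × (H × H) | ε + 1/((k:ℝ)+1) ≤ |(p.2.1 m : ℝ) - p.2.2 m|}))) := by
      ext p
      simp only [hBB, mem_setOf_eq, mem_inter_iff, mem_preimage]
    rw [heq]
    refine (hB.preimage (measurable_fst.prodMk (measurable_fst.comp measurable_snd))).inter
      ((hB.preimage (measurable_fst.prodMk (measurable_snd.comp measurable_snd))).inter
      ((isClosed_closure.measurableSet.preimage (measurable_fst.comp measurable_snd)).inter
      ((isClosed_closure.measurableSet.preimage (measurable_snd.comp measurable_snd)).inter ?_)))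
    refine IsClosed.measurableSet ?_
    refine isClosed_le continuous_const (Continuous.abs ?_)
    exact (continuous_subtype_val.comp
        ((continuous_apply m).comp (continuous_fst.comp continuous_snd))).sub
      (continuous_subtype_val.comp
        ((continuous_apply m).comp (continuous_snd.comp continuous_snd)))
  have hBBsec : ∀ W W' m k (z : Z), IsClosed {y : H × H | (z, y) ∈ BB W W' m k} := by
    intro W W' m k z
    have heq : {y : H × H | (z, y) ∈ BB W W' m k} =
        (Prod.fst ⁻¹' {f : H | (z, f) ∈ B}) ∩
        ((Prod.snd ⁻¹' {f : H | (z, f) ∈ B}) ∩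
        ((Prod.fst ⁻¹' closure (W : Set H)) ∩
        ((Prod.snd ⁻¹' closure (W' : Set H)) ∩
        {y : H × H | ε + 1/((k:ℝ)+1) ≤ |(y.1 m : ℝ) - y.2 m|}))) := by
      ext y
      simp only [hBB, mem_setOf_eq, mem_inter_iff, mem_preimage]
    rw [heq]
    refine ((hsec z).isClosed.preimage continuous_fst).inter
      (((hsec z).isClosed.preimage continuous_snd).inter
      ((isClosed_closure.preimage continuous_fst).inter
      ((isClosed_closure.preimage continuous_snd).inter ?_)))
    refine isClosed_le continuous_const (Continuous.abs ?_)
    exact (continuous_subtype_val.comp ((continuous_apply m).comp continuous_fst)).sub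
      (continuous_subtype_val.comp ((continuous_apply m).comp continuous_snd))
  have hpiece : ∀ (W W' : Bas) (m k : ℕ),
      MeasurableSet {z : Z | ∃ y : H × H, (z, y) ∈ BB W W' m k} := fun W W' m k =>
    proj_measurable qHH continuous_qHH surjective_qHH (hBBm W W' m k) (hBBsec W W' m k)
  have hmain : {z : Z | ε < normDiam ({f : H | (z, f) ∈ B} ∩ V)} =
      ⋃ (W : Bas) (W' : Bas) (m : ℕ) (k : ℕ),
        if closure (W : Set H) ⊆ V ∧ closure (W' : Set H) ⊆ V
        then {z : Z | ∃ y : H × H, (z, y) ∈ BB W W' m k} else ∅ := by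
    ext z
    simp only [mem_iUnion, mem_setOf_eq]
    constructor
    · intro hlt
      obtain ⟨f, ⟨hfB, hfV⟩, g, ⟨hgB, hgV⟩, hfg⟩ := (lt_normDiam_iff (le_of_lt hε)).1 hlt
      obtain ⟨k, hk⟩ := exists_nat_one_div_lt (show 0 < (normDist f g - ε)/2 by linarith)
      have hlt2 : ε + 1/((k:ℝ)+1) < normDist f g := by linarith
      obtain ⟨m, hm⟩ := lt_normDist_iff.1 hlt2
      obtain ⟨W, hfW, hWV⟩ := exists_basis_closure_subset hV hfV
      obtain ⟨W', hgW', hW'V⟩ := exists_basis_closure_subset hV hgV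
      refine ⟨W, W', m, k, ?_⟩
      rw [if_pos ⟨hWV, hW'V⟩]
      exact ⟨(f, g), hfB, hgB, subset_closure hfW, subset_closure hgW', le_of_lt hm⟩
    · rintro ⟨W, W', m, k, hz⟩
      by_cases hcond : closure (W : Set H) ⊆ V ∧ closure (W' : Set H) ⊆ V
      · rw [if_pos hcond] at hz
        obtain ⟨⟨f, g⟩, hfB, hgB, hfW, hgW', hm⟩ := hz
        refine (lt_normDiam_iff (le_of_lt hε)).2
          ⟨f, ⟨hfB, hcond.1 hfW⟩, g, ⟨hgB, hcond.2 hgW'⟩, ?_⟩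
        have h1 : |(f m : ℝ) - g m| ≤ normDist f g := abs_sub_le_normDist f g m
        have h2 : (0:ℝ) < 1/((k:ℝ)+1) := by positivity
        linarith
      · rw [if_neg hcond] at hz
        exact absurd hz (notMem_empty z)
  rw [hmain]
  refine MeasurableSet.iUnion fun W => MeasurableSet.iUnion fun W' =>
    MeasurableSet.iUnion fun m => MeasurableSet.iUnion fun k => ?_
  split
  · exact hpiece W W' m k
  · exact MeasurableSet.empty

lemma measurable_Dstep {ε : ℝ} (hε : 0 < ε) {B : Set (Z × H)} (hB : MeasurableSet B)
    (hsec : ∀ z, IsCompact {f : H | (z, f) ∈ B}) :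
    MeasurableSet {p : Z × H | p.2 ∈ Dstar ε {f : H | (p.1, f) ∈ B}} := by
  have heq : {p : Z × H | p.2 ∈ Dstar ε {f : H | (p.1, f) ∈ B}} =
      B ∩ ⋂ V : Bas, (({z : Z | ε < normDiam ({f : H | (z, f) ∈ B} ∩ V)} ×ˢ univ) ∪
        (univ ×ˢ ((V : Set H)ᶜ))) := by
    ext ⟨z, f⟩
    rw [mem_setOf_eq, mem_Dstar_iff_basis]
    simp only [mem_inter_iff, mem_iInter, mem_union, mem_prod, mem_univ, and_true, true_and,
      mem_compl_iff, mem_setOf_eq]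
    constructor
    · rintro ⟨h1, h2⟩
      refine ⟨h1, fun V => ?_⟩
      by_cases hfV : f ∈ (V : Set H)
      · exact Or.inl (h2 V hfV)
      · exact Or.inr hfV
    · rintro ⟨h1, h2⟩
      refine ⟨h1, fun V hfV => ?_⟩
      rcases h2 V with h | h
      · exact h
      · exact absurd hfV h
  rw [heq]
  refine hB.inter (MeasurableSet.iInter fun V => MeasurableSet.union ?_ ?_)
  · exact (measurable_diamGT hε hB hsec V (Bas_isOpen V)).prod MeasurableSet.univ
  · exact MeasurableSet.univ.prod (Bas_isOpen V).measurableSet.compl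

end Step
end SzlenkProof
namespace SzlenkProof
open Set MeasureTheory TopologicalSpace

section AseqLemmas

variable {Z : Type} (A : Set (Z × H)) (ε : ℝ)

lemma Aseq_zero : Aseq A ε 0 = A := Ordinal.limitRecOn_zero ..

lemma Aseq_succ (o : Ordinal) :
    Aseq A ε (Order.succ o) = {p : Z × H | p.2 ∈ Dstar ε {f : H | (p.1, f) ∈ Aseq A ε o}} :=
  Ordinal.limitRecOn_succ ..

lemma Aseq_limit {o : Ordinal} (ho : Order.IsSuccLimit o) :
    Aseq A ε o = ⋂ (ζ : Ordinal) (_ : ζ < o), Aseq A ε ζ :=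
  Ordinal.limitRecOn_limit _ _ _ _ ho

lemma sect_Aseq (z : Z) (ξ : Ordinal) :
    {f : H | (z, f) ∈ Aseq A ε ξ} = derivIter (Dstar ε) {f : H | (z, f) ∈ A} ξ := by
  induction ξ using Ordinal.induction with
  | h ξ IH =>
    rcases Ordinal.zero_or_succ_or_isSuccLimit ξ with rfl | ⟨η, rfl⟩ | hl
    · rw [Aseq_zero, derivIter_zero]
    · rw [Aseq_succ, derivIter_succ, ← IH η (Order.lt_succ η)]
      rfl
    · rw [Aseq_limit A ε hl, derivIter_limit _ _ hl]
      ext f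
      simp only [mem_setOf_eq, mem_iInter]
      constructor
      · intro h ζ hζ
        rw [← IH ζ hζ]
        exact h ζ hζ
      · intro h ζ hζ
        have := h ζ hζ
        rwa [← IH ζ hζ] at this
  
lemma mem_Aseq_iff (z : Z) (f : H) (ξ : Ordinal) :
    (z, f) ∈ Aseq A ε ξ ↔ f ∈ derivIter (Dstar ε) {g : H | (z, g) ∈ A} ξ := by
  constructor
  · intro h
    have h2 : f ∈ {g : H | (z, g) ∈ Aseq A ε ξ} := h
    rwa [sect_Aseq] at h2
  · intro h
    rw [← sect_Aseq A ε z ξ] at h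
    exact h

lemma Aseq_antitone {ζ ξ : Ordinal} (h : ζ ≤ ξ) : Aseq A ε ξ ⊆ Aseq A ε ζ := by
  rintro ⟨z, f⟩ hp
  rw [mem_Aseq_iff] at hp ⊢
  exact derivIter_antitone (fun S => Dstar_subset ε S) _ h hp

end AseqLemmas

end SzlenkProof

open SzlenkProof Set MeasureTheory TopologicalSpace in
/-- **Claim in the proof of Proposition 2.** For `Z` standard Borel and `A ⊆ Z × H` Borel
with nonempty compact norm separable sections and `ε > 0`: (1) each `A^ξ` (for countable `ξ`)
is a Borel subset of `A` whose sections are compact and equal to `𝔻_ε^{(ξ)}(A_z)`; and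
(2) every `(z,f) ∈ A` lies in `A^ξ \ A^{ξ+1}` for a unique countable ordinal `ξ`. -/
theorem Aseq_borel_sections_and_unique_rank (Z : Type) [MeasurableSpace Z]
    [StandardBorelSpace Z]
    (A : Set (Z × H)) (hA : MeasurableSet A)
    (hne : ∀ z : Z, {f : H | (z, f) ∈ A}.Nonempty)
    (hcpt : ∀ z : Z, IsCompact {f : H | (z, f) ∈ A})
    (hsep : ∀ z : Z, NormSeparable {f : H | (z, f) ∈ A})
    (ε : ℝ) (hε : 0 < ε) :
    (∀ ξ : Ordinal, ξ.card ≤ Cardinal.aleph0 →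
      MeasurableSet (Aseq A ε ξ) ∧ Aseq A ε ξ ⊆ A ∧
        ∀ z : Z, IsCompact {f : H | (z, f) ∈ Aseq A ε ξ} ∧
          {f : H | (z, f) ∈ Aseq A ε ξ} = derivIter (Dstar ε) {f : H | (z, f) ∈ A} ξ) ∧
    (∀ p ∈ A, ∃! ξ : Ordinal, ξ.card ≤ Cardinal.aleph0 ∧
      p ∈ Aseq A ε ξ \ Aseq A ε (ξ + 1)) := by
  letI := upgradeStandardBorel Z
  have hsectcpt : ∀ (ξ : Ordinal) (z : Z), IsCompact {f : H | (z, f) ∈ Aseq A ε ξ} := by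
    intro ξ z
    rw [sect_Aseq]
    exact (isClosed_derivIter (hcpt z).isClosed ξ).isCompact
  have hmeas : ∀ ξ : Ordinal, ξ.card ≤ Cardinal.aleph0 → MeasurableSet (Aseq A ε ξ) := by
    intro ξ
    induction ξ using Ordinal.induction with
    | h ξ IH =>
      intro hcard
      rcases Ordinal.zero_or_succ_or_isSuccLimit ξ with rfl | ⟨η, rfl⟩ | hl
      · rwa [Aseq_zero]
      · rw [Aseq_succ]
        have hηcard : η.card ≤ Cardinal.aleph0 :=
          le_trans (Ordinal.card_le_card (le_of_lt (Order.lt_succ η))) hcard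
        exact measurable_Dstep hε (IH η (Order.lt_succ η) hηcard) (hsectcpt η)
      · rw [Aseq_limit A ε hl]
        have hmk : Cardinal.mk ↥(Iio ξ) ≤ Cardinal.aleph0 := by
          rw [Cardinal.mk_Iio_ordinal]
          calc Cardinal.lift _ ≤ Cardinal.lift Cardinal.aleph0 := Cardinal.lift_le.2 hcard
            _ = Cardinal.aleph0 := Cardinal.lift_aleph0
        have hcnt : (Iio ξ).Countable :=
          countable_coe_iff.1 (Cardinal.mk_le_aleph0_iff.1 hmk)
        have := MeasurableSet.biInter hcnt
          (fun ζ (hζ : ζ ∈ Iio ξ) => IH ζ hζ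
            (le_trans (Ordinal.card_le_card (le_of_lt hζ)) hcard))
        exact this
  refine ⟨fun ξ hξ => ⟨hmeas ξ hξ, ?_, fun z => ⟨hsectcpt ξ z, sect_Aseq A ε z ξ⟩⟩, ?_⟩
  · have h1 := Aseq_antitone A ε (zero_le : (0:Ordinal) ≤ ξ)
    rwa [Aseq_zero] at h1
  · rintro ⟨z, f⟩ hp
    obtain ⟨ξ₀, hξ₀c, hξ₀e⟩ :=
      exists_countable_derivIter_empty (ε := ε) hε (hcpt z) (hsep z)
    set K := {g : H | (z, g) ∈ A} with hK
    set S : Set Ordinal := {ξ | f ∉ derivIter (Dstar ε) K ξ} with hS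
    have hSne : S.Nonempty := ⟨ξ₀, by rw [mem_setOf_eq, hξ₀e]; exact notMem_empty f⟩
    have hmem : sInf S ∈ S := csInf_mem hSne
    have hbelow : ∀ ζ, ζ < sInf S → f ∈ derivIter (Dstar ε) K ζ := by
      intro ζ hζ
      by_contra hc
      exact notMem_of_lt_csInf' hζ hc
    have hξ₀S : ξ₀ ∈ S := by rw [hS, mem_setOf_eq, hξ₀e]; exact notMem_empty f
    have hle : sInf S ≤ ξ₀ := csInf_le' hξ₀S
    rcases Ordinal.zero_or_succ_or_isSuccLimit (sInf S) with h0 | ⟨η, hη⟩ | hlim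
    · exfalso
      rw [hS, mem_setOf_eq, h0, derivIter_zero] at hmem
      exact hmem hp
    · have hηlt : η < sInf S := by rw [← hη]; exact Order.lt_succ η
      have hηcard : η.card ≤ Cardinal.aleph0 :=
        le_trans (Ordinal.card_le_card (le_trans (le_of_lt hηlt) hle)) hξ₀c
      have hfη : f ∈ derivIter (Dstar ε) K η := hbelow η hηlt
      have hfη1 : f ∉ derivIter (Dstar ε) K (Order.succ η) := by rw [hη]; exact hmem
      refine ⟨η, ⟨hηcard, (mem_Aseq_iff A ε z f η).2 hfη, ?_⟩, ?_⟩
      · intro hcon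
        rw [Ordinal.add_one_eq_succ] at hcon
        exact hfη1 ((mem_Aseq_iff A ε z f _).1 hcon)
      · rintro ξ' ⟨hξ'c, hξ'mem, hξ'not⟩
        by_contra hne
        rcases Ne.lt_or_gt hne with hlt | hlt
        · have hsub := Aseq_antitone A ε
            (show ξ' + 1 ≤ η by rw [Ordinal.add_one_eq_succ]; exact Order.succ_le_of_lt hlt)
          exact hξ'not (hsub ((mem_Aseq_iff A ε z f η).2 hfη))
        · have hsub := Aseq_antitone A ε
            (show η + 1 ≤ ξ' by rw [Ordinal.add_one_eq_succ]; exact Order.succ_le_of_lt hlt)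
          have h7 := hsub hξ'mem
          rw [Ordinal.add_one_eq_succ] at h7
          exact hfη1 ((mem_Aseq_iff A ε z f _).1 h7)
    · exfalso
      rw [hS, mem_setOf_eq, derivIter_limit _ _ hlim] at hmem
      exact hmem (mem_iInter₂.2 fun ζ hζ => hbelow ζ hζ)
end
end
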